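/- arXiv:0806.1348 — 6 statements merged into one kernel-verified Lean document; each statement's English description precedes it below -/
import Mathlib

section
/- For every positive integer $m$, every even cycle $C_{2n}$ is $(2m,m)$-edge-choosable: for any assignment of lists of size $2m$ to the edges of $C_{2n}$, one can choose $m$ colors for each edge from its list so that incident edges receive disjoint sets of colors. -/
/-- Two edges are incident if they share a vertex. -/
def EdgeIncident {V : Type*} (e f : Sym2 V) : Prop := ∃ v, v ∈ e ∧ v ∈ f

/-- `G` is `(r,s)`-edge-choosable: from any assignment of `r`-element lists to the edges one can
select `s` colors per edge from its list so that incident edges receive disjoint sets. -/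
def EdgeChoosable {V : Type*} (G : SimpleGraph V) (r s : ℕ) : Prop :=
  ∀ L : Sym2 V → Finset ℕ, (∀ e ∈ G.edgeSet, (L e).card = r) →
    ∃ C : Sym2 V → Finset ℕ,
      (∀ e ∈ G.edgeSet, C e ⊆ L e ∧ (C e).card = s) ∧
      ∀ e ∈ G.edgeSet, ∀ f ∈ G.edgeSet, e ≠ f → EdgeIncident e f → Disjoint (C e) (C f)

/-- Degree of a vertex, measured as the number of its neighbors. -/
noncomputable def edeg {V : Type*} (H : SimpleGraph V) (v : V) : ℕ := (H.neighborSet v).ncard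

open Fin.CommRing

section Core
variable {N : ℕ} [NeZero N]

/-- Kernel lemma for the directed even cycle on `Fin N`: for any set `A` of indices there is a
subset `K ⊆ A` containing no two cyclically consecutive indices, such that every element of `A`
not in `K` has its successor in `K`. -/
lemma fin_kernel (hN : Even N) (A : Set (Fin N)) :
    ∃ K : Set (Fin N), K ⊆ A ∧ (∀ i, i ∈ K → i + 1 ∉ K) ∧ (∀ i ∈ A, i ∉ K → i + 1 ∈ K) := by
  classical
  have hpos : 0 < N := Nat.pos_of_ne_zero (NeZero.ne N)
  have hN2 : 2 ≤ N := by rcases hN with ⟨k, hk⟩; omega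
  have h1v : (1 : Fin N).val = 1 := by rw [Fin.val_one']; exact Nat.mod_eq_of_lt (by omega)
  have hval : ∀ i : Fin N, (i + 1).val = (i.val + 1) % N := by
    intro i; rw [Fin.val_add, h1v]
  by_cases hA : ∀ i, i ∈ A
  · -- `A` is everything: take the even positions (here `N` even is essential).
    refine ⟨{i | i.val % 2 = 0}, fun i _ => hA i, ?_, ?_⟩
    · intro i hi hi1
      simp only [Set.mem_setOf_eq] at hi hi1
      rw [hval i] at hi1
      have hiN : i.val < N := i.isLt
      obtain ⟨k, hk⟩ := hN
      rcases Nat.lt_or_ge (i.val + 1) N with h | h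
      · rw [Nat.mod_eq_of_lt h] at hi1; omega
      · omega
    · intro i _ hi
      simp only [Set.mem_setOf_eq] at hi ⊢
      rw [hval i]
      have hiN : i.val < N := i.isLt
      obtain ⟨k, hk⟩ := hN
      rcases Nat.lt_or_ge (i.val + 1) N with h | h
      · rw [Nat.mod_eq_of_lt h]; omega
      · have h' : i.val + 1 = N := by omega
        rw [h', Nat.mod_self]
  · -- otherwise: measure the distance to the next gap and take those at even distance.
    push_neg at hA
    obtain ⟨i₀, hi₀⟩ := hA
    have hex : ∀ i : Fin N, ∃ t : ℕ, i + (t : Fin N) + 1 ∉ A := by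
      intro i
      refine ⟨(i₀ - i - 1).val, ?_⟩
      rw [Fin.cast_val_eq_self]
      have h : i + (i₀ - i - 1) + 1 = i₀ := by ring
      rw [h]; exact hi₀
    set D : Fin N → ℕ := fun i => Nat.find (hex i) with hD
    have hDspec : ∀ i, i + (D i : Fin N) + 1 ∉ A := fun i => Nat.find_spec (hex i)
    have hDmin : ∀ i t, t < D i → i + (t : Fin N) + 1 ∈ A := by
      intro i t ht
      by_contra h
      have hle : D i ≤ t := Nat.find_le h
      omega
    have hD0 : ∀ i, i + 1 ∉ A → D i = 0 := by
      intro i h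
      have : D i ≤ 0 := Nat.find_le (by simpa using h)
      omega
    have hstep : ∀ i, i + 1 ∈ A → D i = D (i + 1) + 1 := by
      intro i h
      have key : ∀ t : ℕ, (i + 1) + (t : Fin N) + 1 = i + ((t + 1 : ℕ) : Fin N) + 1 := by
        intro t; push_cast; ring
      have hle : D i ≤ D (i + 1) + 1 := by
        apply Nat.find_le
        rw [show ((D (i+1) + 1 : ℕ) : Fin N) = ((D (i+1) : ℕ) : Fin N) + 1 by push_cast; ring,
          show i + ((D (i+1) : Fin N) + 1) + 1 = (i + 1) + (D (i+1) : Fin N) + 1 by ring]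
        exact hDspec (i + 1)
      have hge : D (i + 1) + 1 ≤ D i := by
        by_contra hlt
        push_neg at hlt
        have hspec := hDspec i
        rcases Nat.eq_zero_or_pos (D i) with h0 | h0
        · rw [h0] at hspec
          simp only [Nat.cast_zero, add_zero] at hspec
          exact hspec h
        · obtain ⟨s, hs⟩ : ∃ s, D i = s + 1 := ⟨D i - 1, by omega⟩
          have hsA : (i + 1) + (s : Fin N) + 1 ∈ A := hDmin (i + 1) s (by omega)
          rw [key s, ← hs] at hsA
          exact hspec hsA
      omega
    refine ⟨{i | i ∈ A ∧ Even (D i)}, fun i hi => hi.1, ?_, ?_⟩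
    · rintro i ⟨hiA, hie⟩ ⟨hi1A, hi1e⟩
      have hst := hstep i hi1A
      rw [Nat.even_iff] at hie hi1e
      omega
    · intro i hiA hiK
      have hio : ¬ Even (D i) := fun h => hiK ⟨hiA, h⟩
      have h1A : i + 1 ∈ A := by
        by_contra h
        exact hio (hD0 i h ▸ Even.zero)
      have hst := hstep i h1A
      refine ⟨h1A, ?_⟩
      rw [Nat.even_iff] at hio ⊢
      omega

/-- Core combinatorial fact: given lists of size `2m` indexed cyclically by `Fin N` with `N`
even, one can choose `m` colors from each list so that cyclically consecutive choices are
disjoint.  Proved by processing colors one at a time, each time assigning the color to a kernel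
of the set of still-unsaturated indices whose list contains the color. -/
lemma core_choice (hN : Even N) {m : ℕ}
    (L : Fin N → Finset ℕ) (hL : ∀ i, (L i).card = 2 * m) :
    ∃ c : Fin N → Finset ℕ, (∀ i, c i ⊆ L i) ∧ (∀ i, (c i).card = m) ∧
      ∀ i, Disjoint (c i) (c (i + 1)) := by
  classical
  have main : ∀ S : Finset ℕ, ∃ c : Fin N → Finset ℕ,
      (∀ i, c i ⊆ L i ∩ S) ∧ (∀ i, (c i).card ≤ m) ∧
      (∀ i, Disjoint (c i) (c (i + 1))) ∧
      (∀ i, (c i).card < m → (L i ∩ S) \ c i ⊆ c (i + 1)) := by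
    intro S
    induction S using Finset.induction_on with
    | empty =>
        exact ⟨fun _ => ∅, by simp, by simp, by simp, by simp⟩
    | @insert a S ha ih =>
        obtain ⟨c, hc1, hc2, hc3, hc4⟩ := ih
        obtain ⟨K, hKA, hKind, hKabs⟩ :=
          fin_kernel hN {i : Fin N | a ∈ L i ∧ (c i).card < m}
        set c' : Fin N → Finset ℕ := fun i => if i ∈ K then insert a (c i) else c i with hc'
        have hanot : ∀ i, a ∉ c i := by
          intro i hai
          exact ha (Finset.mem_of_mem_inter_right (hc1 i hai))
        have hsub : ∀ i, c i ⊆ c' i := by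
          intro i
          simp only [hc']
          split
          · exact Finset.subset_insert _ _
          · exact Finset.Subset.refl _
        refine ⟨c', ?_, ?_, ?_, ?_⟩
        · intro i
          by_cases hiK : i ∈ K
          · simp only [hc', if_pos hiK]
            intro x hx
            rcases Finset.mem_insert.mp hx with rfl | hx
            · exact Finset.mem_inter.mpr ⟨(hKA hiK).1, Finset.mem_insert_self _ _⟩
            · have h' := hc1 i hx
              rw [Finset.mem_inter] at h' ⊢
              exact ⟨h'.1, Finset.mem_insert_of_mem h'.2⟩
          · simp only [hc', if_neg hiK]
            intro x hx
            have h' := hc1 i hx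
            rw [Finset.mem_inter] at h' ⊢
            exact ⟨h'.1, Finset.mem_insert_of_mem h'.2⟩
        · intro i
          by_cases hiK : i ∈ K
          · simp only [hc', if_pos hiK]
            rw [Finset.card_insert_of_notMem (hanot i)]
            exact (hKA hiK).2
          · simp only [hc', if_neg hiK]
            exact hc2 i
        · intro i
          by_cases hiK : i ∈ K
          · have h2 : i + 1 ∉ K := hKind i hiK
            simp only [hc', if_pos hiK, if_neg h2]
            rw [Finset.disjoint_insert_left]
            exact ⟨hanot (i + 1), hc3 i⟩
          · by_cases h2 : i + 1 ∈ K
            · simp only [hc', if_neg hiK, if_pos h2]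
              rw [Finset.disjoint_insert_right]
              exact ⟨hanot i, hc3 i⟩
            · simp only [hc', if_neg hiK, if_neg h2]
              exact hc3 i
        · intro i hlt x hx
          rw [Finset.mem_sdiff, Finset.mem_inter] at hx
          obtain ⟨⟨hxL, hxS⟩, hxc⟩ := hx
          have hciltm : (c i).card < m :=
            lt_of_le_of_lt (Finset.card_le_card (hsub i)) hlt
          rcases Finset.mem_insert.mp hxS with rfl | hxS
          · have hiK : i ∉ K := by
              intro hiK
              exact hxc (by simp only [hc', if_pos hiK]; exact Finset.mem_insert_self _ _)
            have hi1K : i + 1 ∈ K := hKabs i ⟨hxL, hciltm⟩ hiK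
            simp only [hc', if_pos hi1K]
            exact Finset.mem_insert_self _ _
          · have hxci : x ∉ c i := fun h => hxc (hsub i h)
            exact hsub (i + 1)
              (hc4 i hciltm (Finset.mem_sdiff.mpr ⟨Finset.mem_inter.mpr ⟨hxL, hxS⟩, hxci⟩))
  obtain ⟨c, h1, h2, h3, h4⟩ := main ((Finset.univ : Finset (Fin N)).biUnion L)
  have hLU : ∀ i, L i ∩ (Finset.univ : Finset (Fin N)).biUnion L = L i := by
    intro i
    exact Finset.inter_eq_left.mpr (Finset.subset_biUnion_of_mem L (Finset.mem_univ i))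
  have hsubL : ∀ i, c i ⊆ L i := by
    intro i
    exact (h1 i).trans (by rw [hLU i])
  refine ⟨c, hsubL, ?_, h3⟩
  intro i
  by_contra hne
  have hlt : (c i).card < m := lt_of_le_of_ne (h2 i) hne
  have hss := h4 i hlt
  rw [hLU i] at hss
  have hcard : (L i \ c i).card ≤ (c (i + 1)).card := Finset.card_le_card hss
  rw [Finset.card_sdiff_of_subset (hsubL i), hL i] at hcard
  have := h2 (i + 1)
  omega

end Core

/-- Any even cycle of length at least 4 is `(2m, m)`-edge-choosable. -/
lemma cycle_edge_choosable {N : ℕ} [NeZero N] (m : ℕ) (hNeven : Even N) (hN4 : 4 ≤ N) :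
    EdgeChoosable (SimpleGraph.cycleGraph N) (2 * m) m := by
  classical
  intro L hL
  set G := SimpleGraph.cycleGraph N with hG
  set E : Fin N → Sym2 (Fin N) := fun i => s(i, i + 1) with hE
  have h1val : (1 : Fin N).val = 1 := by
    rw [Fin.val_one']; exact Nat.mod_eq_of_lt (by omega)
  have hadj : ∀ i : Fin N, G.Adj i (i + 1) := by
    intro i
    rw [hG, SimpleGraph.cycleGraph_adj']
    right
    rw [add_sub_cancel_left, h1val]
  have hmemE : ∀ i, E i ∈ G.edgeSet := by
    intro i
    simp only [hE]
    exact G.mem_edgeSet.mpr (hadj i)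
  have hsurj : ∀ e ∈ G.edgeSet, ∃ i, E i = e := by
    intro e
    induction e using Sym2.ind with
    | _ u v =>
      intro he
      rw [SimpleGraph.mem_edgeSet, hG, SimpleGraph.cycleGraph_adj'] at he
      rcases he with h | h
      · have huv : u = v + 1 := by
          have h' : u - v = 1 := Fin.ext (by rw [h1val]; exact h)
          rwa [sub_eq_iff_eq_add'] at h'
        refine ⟨v, ?_⟩
        rw [huv]
        simp only [hE]
        exact Sym2.eq_swap
      · have huv : v = u + 1 := by
          have h' : v - u = 1 := Fin.ext (by rw [h1val]; exact h)
          rwa [sub_eq_iff_eq_add'] at h'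
        exact ⟨u, by rw [huv]⟩
  have hEinj : Function.Injective E := by
    intro i j hij
    simp only [hE, Sym2.eq_iff] at hij
    rcases hij with ⟨h, _⟩ | ⟨h1, h2⟩
    · exact h
    · exfalso
      have hj : j + (2 : Fin N) = j := by
        calc j + 2 = j + 1 + 1 := by ring
        _ = i + 1 := by rw [h1]
        _ = j := h2
      have h20 : ((2 : ℕ) : Fin N) = 0 := by
        have := add_eq_left.mp hj
        exact_mod_cast this
      rw [Fin.natCast_eq_zero] at h20
      have := Nat.le_of_dvd (by norm_num) h20
      omega
  obtain ⟨c, hcsub, hccard, hcdisj⟩ :=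
    core_choice hNeven (fun i => L (E i)) (fun i => hL (E i) (hmemE i))
  set CC : Sym2 (Fin N) → Finset ℕ :=
    fun e => if h : ∃ i, E i = e then c h.choose else ∅ with hCCdef
  have hCC : ∀ i, CC (E i) = c i := by
    intro i
    have hex : ∃ j, E j = E i := ⟨i, rfl⟩
    simp only [hCCdef]
    rw [dif_pos hex]
    congr 1
    exact hEinj hex.choose_spec
  refine ⟨CC, ?_, ?_⟩
  · intro e he
    obtain ⟨i, rfl⟩ := hsurj e he
    rw [hCC]
    exact ⟨hcsub i, hccard i⟩
  · intro e he f hf hef hinc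
    obtain ⟨i, rfl⟩ := hsurj e he
    obtain ⟨j, rfl⟩ := hsurj f hf
    rw [hCC, hCC]
    have hij : i ≠ j := fun h => hef (by rw [h])
    obtain ⟨v, hvi, hvj⟩ := hinc
    simp only [hE, Sym2.mem_iff] at hvi hvj
    rcases hvi with rfl | rfl
    · rcases hvj with h | h
      · exact absurd h hij
      · rw [h]
        exact (hcdisj j).symm
    · rcases hvj with h | h
      · rw [← h]
        exact hcdisj i
      · exact absurd (add_right_cancel h) hij

/-- Every even cycle `C_{2n}` is `(2m, m)`-edge-choosable. -/
theorem stmt1 (n m : ℕ) (hn : 2 ≤ n) (hm : 0 < m) :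
    EdgeChoosable (SimpleGraph.cycleGraph (2 * n)) (2 * m) m := by
  haveI : NeZero (2 * n) := ⟨by omega⟩
  exact cycle_edge_choosable m ⟨n, by omega⟩ (by omega)
end

section
/- Every graph with maximum degree at most 3 that admits a proper 3-edge-coloring is a subgraph of some 3-regular graph admitting a proper 3-edge-coloring. -/
def stepG {V : Type} (G : SimpleGraph V) : SimpleGraph (V × Bool) where
  Adj x y := (x.2 = y.2 ∧ G.Adj x.1 y.1) ∨ (x.1 = y.1 ∧ x.2 ≠ y.2 ∧ edeg G x.1 < 3)
  symm := by
    constructor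
    rintro x y (⟨h1, h2⟩ | ⟨h1, h2, h3⟩)
    · exact Or.inl ⟨h1.symm, h2.symm⟩
    · exact Or.inr ⟨h1.symm, Ne.symm h2, h1 ▸ h3⟩
  loopless := by
    constructor
    rintro x (⟨_, h⟩ | ⟨_, h, _⟩)
    · exact G.loopless.irrefl _ h
    · exact h rfl

lemma missing {V : Type} [Fintype V] (G : SimpleGraph V) (c : Sym2 V → Fin 3)
    (v : V) (h : edeg G v < 3) :
    ∃ i : Fin 3, ∀ w, G.Adj v w → c s(v, w) ≠ i := by
  have hne : ((fun w => c s(v, w)) '' G.neighborSet v) ≠ Set.univ := by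
    intro hEq
    have h1 : ((fun w => c s(v, w)) '' G.neighborSet v).ncard ≤ edeg G v :=
      Set.ncard_image_le (Set.toFinite _)
    rw [hEq] at h1
    have h2 : (Set.univ : Set (Fin 3)).ncard = 3 := by
      simp [Set.ncard_univ]
    omega
  obtain ⟨i, hi⟩ := Set.ne_univ_iff_exists_notMem _ |>.mp hne
  exact ⟨i, fun w hw hc => hi ⟨w, hw, hc⟩⟩

lemma step_color {V : Type} [Fintype V] (G : SimpleGraph V)
    (h3 : ∃ c : Sym2 V → Fin 3,
      ∀ e ∈ G.edgeSet, ∀ f ∈ G.edgeSet, e ≠ f → EdgeIncident e f → c e ≠ c f) :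
    ∃ c : Sym2 (V × Bool) → Fin 3,
      ∀ e ∈ (stepG G).edgeSet, ∀ f ∈ (stepG G).edgeSet, e ≠ f → EdgeIncident e f → c e ≠ c f := by
  classical
  obtain ⟨c, hc⟩ := h3
  have key : ∀ v, ∃ i : Fin 3, edeg G v < 3 → ∀ w, G.Adj v w → c s(v, w) ≠ i := by
    intro v
    by_cases h : edeg G v < 3
    · obtain ⟨i, hi⟩ := missing G c v h
      exact ⟨i, fun _ => hi⟩
    · exact ⟨0, fun h' => absurd h' h⟩
  choose m hm using key
  set f' : V × Bool → V × Bool → Fin 3 :=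
    fun x y => if x.2 = y.2 then c s(x.1, y.1) else if x.1 = y.1 then m x.1 else 0 with hf'
  have hsym : ∀ x y, f' x y = f' y x := by
    intro x y
    by_cases h : x.2 = y.2
    · simp only [hf', if_pos h, if_pos h.symm, Sym2.eq_swap]
    · by_cases h2 : x.1 = y.1
      · simp only [hf', if_neg h, if_neg (Ne.symm h), if_pos h2, if_pos h2.symm, h2]
      · simp only [hf', if_neg h, if_neg (Ne.symm h), if_neg h2, if_neg (Ne.symm h2)]
  refine ⟨Sym2.lift ⟨f', hsym⟩, ?_⟩
  intro e he f hf hef hinc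
  induction e using Sym2.ind with | _ x y => ?_
  induction f using Sym2.ind with | _ z w => ?_
  rw [SimpleGraph.mem_edgeSet] at he hf
  obtain ⟨v, hv1, hv2⟩ := hinc
  rw [Sym2.mem_iff] at hv1 hv2
  obtain ⟨x1, x2⟩ := x
  obtain ⟨y1, y2⟩ := y
  obtain ⟨z1, z2⟩ := z
  obtain ⟨w1, w2⟩ := w
  simp only [Sym2.lift_mk]
  rcases he with ⟨ha, hGxy⟩ | ⟨hp, hab, hdp⟩ <;>
    rcases hf with ⟨hb, hGzw⟩ | ⟨hq, hcd, hdq⟩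
  -- case WW
  · dsimp only at ha hb hGxy hGzw
    subst ha; subst hb
    simp only [hf', if_pos rfl]
    apply hc s(x1, y1) hGxy s(z1, w1) hGzw
    · -- the two G-edges are distinct
      intro hEq
      have hx2z2 : x2 = z2 := by
        rcases hv1 with rfl | rfl <;> rcases hv2 with h | h <;>
          exact (congrArg Prod.snd h)
      subst hx2z2
      apply hef
      rw [Sym2.eq_iff] at hEq
      rcases hEq with ⟨rfl, rfl⟩ | ⟨rfl, rfl⟩
      · rfl
      · exact Sym2.eq_swap
    · refine ⟨v.1, ?_, ?_⟩ <;> rw [Sym2.mem_iff]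
      · rcases hv1 with rfl | rfl
        · exact Or.inl rfl
        · exact Or.inr rfl
      · rcases hv2 with rfl | rfl
        · exact Or.inl rfl
        · exact Or.inr rfl
  -- case WC
  · dsimp only at ha hq hcd hdq hGxy
    subst ha; subst hq
    simp only [hf', if_pos rfl, if_neg hcd, if_pos rfl]
    -- v.1 = z1 and v.1 = x1 or y1
    have hvz : v.1 = z1 := by rcases hv2 with rfl | rfl <;> rfl
    rcases hv1 with rfl | rfl
    · dsimp only at hvz; subst hvz
      exact hm _ hdq y1 hGxy
    · dsimp only at hvz; subst hvz
      have := hm _ hdq x1 hGxy.symm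
      rwa [Sym2.eq_swap] at this
  -- case CW
  · dsimp only at hb hp hab hdp hGzw
    subst hb; subst hp
    simp only [hf', if_neg hab, if_pos rfl]
    have hvx : v.1 = x1 := by rcases hv1 with rfl | rfl <;> rfl
    rcases hv2 with rfl | rfl
    · dsimp only at hvx; subst hvx
      exact (hm _ hdp w1 hGzw).symm
    · dsimp only at hvx; subst hvx
      have := hm _ hdp z1 hGzw.symm
      rw [Sym2.eq_swap] at this
      exact this.symm
  -- case CC
  · dsimp only at hp hq hab hcd
    subst hp; subst hq
    have hvx : v.1 = x1 := by rcases hv1 with rfl | rfl <;> rfl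
    have hvz : v.1 = z1 := by rcases hv2 with rfl | rfl <;> rfl
    have hxz : x1 = z1 := hvx ▸ hvz
    subst hxz
    exact absurd (by cases x2 <;> cases y2 <;> cases z2 <;> cases w2 <;>
      first
        | exact absurd rfl hab
        | exact absurd rfl hcd
        | rfl
        | exact Sym2.eq_swap) hef

lemma stepG_edeg {V : Type} [Fintype V] (G : SimpleGraph V) (hdeg : ∀ v, edeg G v ≤ 3)
    (w : V × Bool) :
    edeg (stepG G) w = if edeg G w.1 < 3 then edeg G w.1 + 1 else 3 := by
  obtain ⟨v, a⟩ := w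
  have himg : ((fun u => (u, a)) '' G.neighborSet v).ncard = edeg G v :=
    Set.ncard_image_of_injective _ (fun u u' h => (Prod.mk.injEq _ _ _ _).mp h |>.1)
  by_cases h : edeg G v < 3
  · have hset : (stepG G).neighborSet (v, a) =
        (fun u => (u, a)) '' G.neighborSet v ∪ {(v, !a)} := by
      ext ⟨u, b⟩
      simp only [SimpleGraph.mem_neighborSet, stepG, Set.mem_union, Set.mem_image,
        Set.mem_singleton_iff, Prod.mk.injEq]
      constructor
      · rintro (⟨h1, h2⟩ | ⟨h1, h2, h3⟩)
        · exact Or.inl ⟨u, h2, rfl, h1⟩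
        · refine Or.inr ⟨h1.symm, ?_⟩
          cases a <;> cases b <;> simp_all
      · rintro (⟨u', hu', rfl, rfl⟩ | ⟨rfl, rfl⟩)
        · exact Or.inl ⟨rfl, hu'⟩
        · refine Or.inr ⟨rfl, ?_, h⟩
          cases a <;> simp
    have hdisj : Disjoint ((fun u => (u, a)) '' G.neighborSet v) ({(v, !a)} : Set (V × Bool)) := by
      rw [Set.disjoint_singleton_right]
      rintro ⟨u', _, h'⟩
      have := congrArg Prod.snd h'
      simp at this
    rw [edeg, hset, Set.ncard_union_eq hdisj (Set.toFinite _) (Set.toFinite _), himg,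
      Set.ncard_singleton, if_pos h]
  · have h3 : edeg G v = 3 := le_antisymm (hdeg v) (by omega)
    have hset : (stepG G).neighborSet (v, a) = (fun u => (u, a)) '' G.neighborSet v := by
      ext ⟨u, b⟩
      simp only [SimpleGraph.mem_neighborSet, stepG, Set.mem_image, Prod.mk.injEq]
      constructor
      · rintro (⟨h1, h2⟩ | ⟨h1, h2, h3'⟩)
        · exact ⟨u, h2, rfl, h1⟩
        · omega
      · rintro ⟨u', hu', rfl, rfl⟩
        exact Or.inl ⟨rfl, hu'⟩
    rw [edeg, hset, himg, if_neg h, h3]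

/-- Every graph with maximum degree at most 3 admitting a proper 3-edge-coloring embeds as a
subgraph of some 3-regular graph admitting a proper 3-edge-coloring. -/
theorem stmt3 {V : Type} [Fintype V] (G : SimpleGraph V)
    (hdeg : ∀ v, edeg G v ≤ 3)
    (h3 : ∃ c : Sym2 V → Fin 3,
      ∀ e ∈ G.edgeSet, ∀ f ∈ G.edgeSet, e ≠ f → EdgeIncident e f → c e ≠ c f) :
    ∃ (W : Type) (_ : Fintype W) (H : SimpleGraph W) (φ : V ↪ W),
      (∀ u v, G.Adj u v → H.Adj (φ u) (φ v)) ∧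
      (∀ w, edeg H w = 3) ∧
      (∃ c : Sym2 W → Fin 3,
        ∀ e ∈ H.edgeSet, ∀ f ∈ H.edgeSet, e ≠ f → EdgeIncident e f → c e ≠ c f) := by
  have hdeg1 : ∀ w, edeg (stepG G) w ≤ 3 := by
    intro w; rw [stepG_edeg G hdeg]; split <;> omega
  have hdeg2 : ∀ w, edeg (stepG (stepG G)) w ≤ 3 := by
    intro w; rw [stepG_edeg _ hdeg1]; split <;> omega
  refine ⟨((V × Bool) × Bool) × Bool, inferInstance, stepG (stepG (stepG G)),
    ⟨fun v => (((v, false), false), false), fun a b h => by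
      simpa using congrArg (fun p => p.1.1.1) h⟩, ?_, ?_, ?_⟩
  · intro u v h
    exact Or.inl ⟨rfl, Or.inl ⟨rfl, Or.inl ⟨rfl, h⟩⟩⟩
  · intro w
    have e3 := stepG_edeg _ hdeg2 w
    have e2 := stepG_edeg _ hdeg1 w.1
    have e1 := stepG_edeg _ hdeg w.1.1
    have h0 := hdeg w.1.1.1
    rw [e3]
    rw [e2] at *
    rw [e1] at *
    split_ifs at * <;> omega
  · exact step_color _ (step_color _ (step_color _ h3))
end

section
/- Let $G$ be the 3-regular graph formed from two disjoint copies of $K_4$ by subdividing one edge in each copy and joining the two subdivision vertices by an edge. Then $G$ is not $(6,2)$-edge-colorable: there is no choice of 2 colors from a fixed palette of 6 colors for each edge such that incident edges receive disjoint color sets. -/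
/-- The 3-regular graph formed from two disjoint copies of `K₄` by subdividing one edge in
each copy and joining the two subdivision vertices. -/
def twoK4 : SimpleGraph (Fin 10) := SimpleGraph.fromEdgeSet
  {s(0, 2), s(0, 3), s(1, 2), s(1, 3), s(2, 3), s(0, 4), s(1, 4),
   s(5, 7), s(5, 8), s(6, 7), s(6, 8), s(7, 8), s(5, 9), s(6, 9), s(4, 9)}

lemma tri {A B D : Finset (Fin 6)} (hA : A.card = 2) (hB : B.card = 2) (hD : D.card = 2)
    (hAB : Disjoint A B) (hAD : Disjoint A D) (hBD : Disjoint B D) (c : Fin 6) :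
    c ∈ A ∨ c ∈ B ∨ c ∈ D := by
  have hu : A ∪ B ∪ D = Finset.univ := by
    apply Finset.eq_univ_of_card
    rw [Finset.card_union_of_disjoint (Finset.disjoint_union_left.mpr ⟨hAD, hBD⟩),
      Finset.card_union_of_disjoint hAB, hA, hB, hD]
    rfl
  have : c ∈ A ∪ B ∪ D := hu ▸ Finset.mem_univ c
  simpa [Finset.mem_union, or_assoc] using this


/-- `twoK4` is not `(6,2)`-edge-colorable. -/
theorem stmt8 :
    ¬ ∃ C : Sym2 (Fin 10) → Finset (Fin 6),
      (∀ e ∈ twoK4.edgeSet, (C e).card = 2) ∧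
      (∀ e ∈ twoK4.edgeSet, ∀ f ∈ twoK4.edgeSet, e ≠ f → EdgeIncident e f →
        Disjoint (C e) (C f)) := by
  rintro ⟨C, hcard, hdisj⟩
  have m02 : s((0:Fin 10),2) ∈ twoK4.edgeSet := by simp [twoK4]
  have m03 : s((0:Fin 10),3) ∈ twoK4.edgeSet := by simp [twoK4]
  have m12 : s((1:Fin 10),2) ∈ twoK4.edgeSet := by simp [twoK4]
  have m13 : s((1:Fin 10),3) ∈ twoK4.edgeSet := by simp [twoK4]
  have m23 : s((2:Fin 10),3) ∈ twoK4.edgeSet := by simp [twoK4]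
  have m04 : s((0:Fin 10),4) ∈ twoK4.edgeSet := by simp [twoK4]
  have m14 : s((1:Fin 10),4) ∈ twoK4.edgeSet := by simp [twoK4]
  have m49 : s((4:Fin 10),9) ∈ twoK4.edgeSet := by simp [twoK4]
  -- a color not on the central edge
  obtain ⟨c, hc⟩ : ∃ c : Fin 6, c ∉ C s(4,9) := by
    by_contra h
    push_neg at h
    have : (Finset.univ : Finset (Fin 6)).card ≤ (C s(4,9)).card :=
      Finset.card_le_card fun x _ => h x
    rw [hcard _ m49] at this
    simp [Finset.card_univ] at this
  have D : ∀ a ∈ twoK4.edgeSet, ∀ b ∈ twoK4.edgeSet, a ≠ b → (v : Fin 10) → v ∈ a → v ∈ b →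
      Disjoint (C a) (C b) := fun a ha b hb hne v hva hvb => hdisj a ha b hb hne ⟨v, hva, hvb⟩
  -- disjointness at each vertex
  have d0a := D _ m02 _ m03 (by decide) 0 (by decide) (by decide)
  have d0b := D _ m02 _ m04 (by decide) 0 (by decide) (by decide)
  have d0c := D _ m03 _ m04 (by decide) 0 (by decide) (by decide)
  have d1a := D _ m12 _ m13 (by decide) 1 (by decide) (by decide)
  have d1b := D _ m12 _ m14 (by decide) 1 (by decide) (by decide)
  have d1c := D _ m13 _ m14 (by decide) 1 (by decide) (by decide)
  have d2a := D _ m02 _ m12 (by decide) 2 (by decide) (by decide)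
  have d2b := D _ m02 _ m23 (by decide) 2 (by decide) (by decide)
  have d2c := D _ m12 _ m23 (by decide) 2 (by decide) (by decide)
  have d3a := D _ m03 _ m13 (by decide) 3 (by decide) (by decide)
  have d3b := D _ m03 _ m23 (by decide) 3 (by decide) (by decide)
  have d3c := D _ m13 _ m23 (by decide) 3 (by decide) (by decide)
  have d4a := D _ m04 _ m14 (by decide) 4 (by decide) (by decide)
  have d4b := D _ m04 _ m49 (by decide) 4 (by decide) (by decide)
  have d4c := D _ m14 _ m49 (by decide) 4 (by decide) (by decide)
  -- color-class coverage at each vertex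
  have t0 := tri (hcard _ m02) (hcard _ m03) (hcard _ m04) d0a d0b d0c c
  have t1 := tri (hcard _ m12) (hcard _ m13) (hcard _ m14) d1a d1b d1c c
  have t2 := tri (hcard _ m02) (hcard _ m12) (hcard _ m23) d2a d2b d2c c
  have t3 := tri (hcard _ m03) (hcard _ m13) (hcard _ m23) d3a d3b d3c c
  have t4 := tri (hcard _ m04) (hcard _ m14) (hcard _ m49) d4a d4b d4c c
  -- chase the color c through vertices 0..4
  have dj : ∀ {A B : Finset (Fin 6)}, Disjoint A B → c ∈ A → c ∈ B → False :=
    fun h ha hb => Finset.disjoint_left.mp h ha hb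
  rcases t4 with h04 | h14 | h49
  · -- c on s(0,4)
    have h02 : c ∉ C s(0,2) := fun h => dj d0b h h04
    have h03 : c ∉ C s(0,3) := fun h => dj d0c h h04
    have h14 : c ∉ C s(1,4) := fun h => dj d4a h04 h
    rcases t1 with h12 | h13 | h
    · rcases t3 with h | h13 | h23
      · exact h03 h
      · exact dj d1a h12 h13
      · exact dj d2c h12 h23
    · rcases t2 with h | h12 | h23
      · exact h02 h
      · exact dj d1a h12 h13
      · exact dj d3c h13 h23
    · exact h14 h
  · -- c on s(1,4), symmetric
    have h12 : c ∉ C s(1,2) := fun h => dj d1b h h14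
    have h13 : c ∉ C s(1,3) := fun h => dj d1c h h14
    have h04 : c ∉ C s(0,4) := fun h => dj d4a h h14
    rcases t0 with h02 | h03 | h
    · rcases t3 with h03 | h | h23
      · exact dj d0a h02 h03
      · exact h13 h
      · exact dj d2b h02 h23
    · rcases t2 with h02 | h | h23
      · exact dj d0a h02 h03
      · exact h12 h
      · exact dj d3b h03 h23
    · exact h04 h
  · exact hc h49
end

section
/- For each odd integer $k \ge 5$, the flower snark $F_k$ contains a cycle of length $4k-2$ that omits exactly two vertices, and these two omitted vertices are adjacent. -/
/-- The flower snark `F_k` on vertices `(0,i) = wᵢ`, `(1,i) = xᵢ`, `(2,i) = yᵢ`, `(3,i) = zᵢ`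
(indices in `ZMod k`, with `i = 0` playing the role of index `k`): the cycle `z₁ ⋯ z_k`,
the cycle `x₁ ⋯ x_k y₁ ⋯ y_k`, and the stars `wᵢ` adjacent to `xᵢ, yᵢ, zᵢ`. -/
def flowerSnark (k : ℕ) : SimpleGraph (Fin 4 × ZMod k) := SimpleGraph.fromRel (fun u v =>
  (u.1 = 0 ∧ v.1 ≠ 0 ∧ u.2 = v.2) ∨
  (u.1 = 3 ∧ v.1 = 3 ∧ v.2 = u.2 + 1) ∨
  (u.1 = 1 ∧ v.1 = 1 ∧ v.2 = u.2 + 1 ∧ u.2 ≠ 0) ∨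
  (u.1 = 2 ∧ v.1 = 2 ∧ v.2 = u.2 + 1 ∧ u.2 ≠ 0) ∨
  (u.1 = 1 ∧ v.1 = 2 ∧ u.2 = 0 ∧ v.2 = 1) ∨
  (u.1 = 2 ∧ v.1 = 1 ∧ u.2 = 0 ∧ v.2 = 1))

open SimpleGraph List

def mkW {V : Type*} (G : SimpleGraph V) : (l : List V) → (a b : V) →
    List.Chain G.Adj a (l ++ [b]) → G.Walk a b
  | [], a, b, h => SimpleGraph.Walk.cons (List.isChain_pair.1 h) SimpleGraph.Walk.nil
  | c :: l, a, b, h =>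
    SimpleGraph.Walk.cons (List.chain_cons.mp h).1 (mkW G l c b (List.chain_cons.mp h).2)

@[simp] theorem mkW_support {V : Type*} (G : SimpleGraph V) (l : List V) (a b : V)
    (h : List.Chain G.Adj a (l ++ [b])) : (mkW G l a b h).support = a :: (l ++ [b]) := by
  induction l generalizing a with
  | nil => simp [mkW]
  | cons c l ih => simp [mkW]; exact ih _ _

@[simp] theorem mkW_length {V : Type*} (G : SimpleGraph V) (l : List V) (a b : V)
    (h : List.Chain G.Adj a (l ++ [b])) : (mkW G l a b h).length = l.length + 1 := by
  induction l generalizing a with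
  | nil => simp [mkW]
  | cons c l ih => simp [mkW]; exact ih _ _

def vv (k : ℕ) (t : Fin 4) (i : ℕ) : Fin 4 × ZMod k := (t, (i : ZMod k))

theorem vv_inj {k : ℕ} [NeZero k] {t s : Fin 4} {i j : ℕ} (hi : i < k) (hj : j < k) :
    vv k t i = vv k s j ↔ t = s ∧ i = j := by
  constructor
  · intro h
    rw [vv, vv, Prod.ext_iff] at h
    simp only at h
    refine ⟨h.1, ?_⟩
    have := congrArg ZMod.val h.2
    rwa [ZMod.val_natCast_of_lt hi, ZMod.val_natCast_of_lt hj] at this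
  · rintro ⟨rfl, rfl⟩; rfl

section
variable {k : ℕ} (hk : 5 ≤ k)

theorem natCast_ne {i j : ℕ} (hi : i < k) (hj : j < k) (hij : i ≠ j) :
    (i : ZMod k) ≠ (j : ZMod k) := by
  intro h
  have := congrArg ZMod.val h
  rw [ZMod.val_natCast_of_lt hi, ZMod.val_natCast_of_lt hj] at this
  exact hij this

theorem natCast_ne_zero {i : ℕ} (h1 : 1 ≤ i) (hi : i < k) : (i : ZMod k) ≠ 0 := by
  intro h
  have := congrArg ZMod.val h
  rw [ZMod.val_natCast_of_lt hi, ZMod.val_zero] at this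
  omega

include hk

theorem adj_wt (t : Fin 4) (ht : t ≠ 0) (i : ℕ) :
    (flowerSnark k).Adj (vv k 0 i) (vv k t i) := by
  rw [flowerSnark, SimpleGraph.fromRel_adj]
  exact ⟨by simp [vv, Prod.ext_iff, Ne.symm ht], Or.inl (Or.inl ⟨rfl, ht, rfl⟩)⟩

theorem adj_zz {i : ℕ} (hi : i + 1 < k) :
    (flowerSnark k).Adj (vv k 3 i) (vv k 3 (i + 1)) := by
  rw [flowerSnark, SimpleGraph.fromRel_adj]
  haveI : NeZero k := ⟨by omega⟩
  refine ⟨by simp [vv_inj (by omega : i < k) hi], Or.inl (Or.inr (Or.inl ⟨rfl, rfl, by simp only [vv]; push_cast; ring⟩))⟩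

theorem adj_xx {i : ℕ} (h1 : 1 ≤ i) (hi : i + 1 < k) :
    (flowerSnark k).Adj (vv k 1 i) (vv k 1 (i + 1)) := by
  rw [flowerSnark, SimpleGraph.fromRel_adj]
  haveI : NeZero k := ⟨by omega⟩
  refine ⟨by simp [vv_inj (by omega : i < k) hi], Or.inl ?_⟩
  refine Or.inr (Or.inr (Or.inl ⟨rfl, rfl, by simp only [vv]; push_cast; ring, ?_⟩))
  simp only [vv]
  exact natCast_ne_zero h1 (by omega)

theorem adj_yy {i : ℕ} (h1 : 1 ≤ i) (hi : i + 1 < k) :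
    (flowerSnark k).Adj (vv k 2 i) (vv k 2 (i + 1)) := by
  rw [flowerSnark, SimpleGraph.fromRel_adj]
  haveI : NeZero k := ⟨by omega⟩
  refine ⟨by simp [vv_inj (by omega : i < k) hi], Or.inl ?_⟩
  refine Or.inr (Or.inr (Or.inr (Or.inl ⟨rfl, rfl, by simp only [vv]; push_cast; ring, ?_⟩)))
  simp only [vv]
  exact natCast_ne_zero h1 (by omega)

theorem adj_y_wrap :
    (flowerSnark k).Adj (vv k 2 (k - 1)) (vv k 2 0) := by
  rw [flowerSnark, SimpleGraph.fromRel_adj]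
  haveI : NeZero k := ⟨by omega⟩
  refine ⟨by simp [vv_inj (by omega : k - 1 < k) (by omega : 0 < k)]; omega, Or.inl ?_⟩
  refine Or.inr (Or.inr (Or.inr (Or.inl ⟨rfl, rfl, ?_, ?_⟩)))
  · show ((0 : ℕ) : ZMod k) = ((k - 1 : ℕ) : ZMod k) + 1
    have h1 : (((k - 1) + 1 : ℕ) : ZMod k) = ((k - 1 : ℕ) : ZMod k) + 1 := by push_cast; ring
    rw [← h1]
    have h2 : k - 1 + 1 = k := by omega
    rw [h2, ZMod.natCast_self, Nat.cast_zero]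
  · simp only [vv]
    exact natCast_ne_zero (by omega) (by omega)

theorem adj_x_wrap :
    (flowerSnark k).Adj (vv k 1 (k - 1)) (vv k 1 0) := by
  rw [flowerSnark, SimpleGraph.fromRel_adj]
  haveI : NeZero k := ⟨by omega⟩
  refine ⟨by simp [vv_inj (by omega : k - 1 < k) (by omega : 0 < k)]; omega, Or.inl ?_⟩
  refine Or.inr (Or.inr (Or.inl ⟨rfl, rfl, ?_, ?_⟩))
  · show ((0 : ℕ) : ZMod k) = ((k - 1 : ℕ) : ZMod k) + 1
    have h1 : (((k - 1) + 1 : ℕ) : ZMod k) = ((k - 1 : ℕ) : ZMod k) + 1 := by push_cast; ring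
    rw [← h1]
    have h2 : k - 1 + 1 = k := by omega
    rw [h2, ZMod.natCast_self, Nat.cast_zero]
  · simp only [vv]
    exact natCast_ne_zero (by omega) (by omega)

omit hk in
theorem adj_x0y1 :
    (flowerSnark k).Adj (vv k 1 0) (vv k 2 1) := by
  rw [flowerSnark, SimpleGraph.fromRel_adj]
  exact ⟨by simp [vv, Prod.ext_iff], Or.inl (Or.inr (Or.inr (Or.inr (Or.inr (Or.inl ⟨rfl, rfl, by simp [vv], by simp [vv]⟩)))))⟩

omit hk in
theorem adj_y0x1 :
    (flowerSnark k).Adj (vv k 2 0) (vv k 1 1) := by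
  rw [flowerSnark, SimpleGraph.fromRel_adj]
  exact ⟨by simp [vv, Prod.ext_iff], Or.inl (Or.inr (Or.inr (Or.inr (Or.inr (Or.inr ⟨rfl, rfl, by simp [vv], by simp [vv]⟩)))))⟩

end


section lists
variable {k : ℕ}

theorem vv_ne {k : ℕ} [NeZero k] {t s : Fin 4} {i j : ℕ} (hi : i < k) (hj : j < k)
    (h : ¬(t = s ∧ i = j)) : vv k t i ≠ vv k s j := fun e => h ((vv_inj hi hj).1 e)

/-- z-segment: `[z 1, ..., z (k-1)]`. -/
def zsL (k : ℕ) : List (Fin 4 × ZMod k) := (List.range (k - 1)).map (fun i => vv k 3 (i + 1))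

def blockL (k j : ℕ) : List (Fin 4 × ZMod k) :=
  [vv k 1 (2*j+2), vv k 0 (2*j+2), vv k 2 (2*j+2), vv k 2 (2*j+3), vv k 0 (2*j+3), vv k 1 (2*j+3)]

def zigL (k : ℕ) : ℕ → List (Fin 4 × ZMod k)
  | 0 => []
  | m + 1 => zigL k m ++ blockL k m

@[simp] theorem zigL_length (m : ℕ) : (zigL k m).length = 6 * m := by
  induction m with
  | zero => rfl
  | succ m ih => simp [zigL, blockL, ih]; omega

theorem mem_zigL {a : Fin 4 × ZMod k} {m : ℕ} (ha : a ∈ zigL k m) :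
    ∃ t i, (t = 0 ∨ t = 1 ∨ t = 2) ∧ 2 ≤ i ∧ i ≤ 2*m+1 ∧ a = vv k t i := by
  induction m with
  | zero => simp [zigL] at ha
  | succ m ih =>
    rw [zigL, List.mem_append] at ha
    rcases ha with ha | ha
    · obtain ⟨t, i, h1, h2, h3, h4⟩ := ih ha
      exact ⟨t, i, h1, h2, by omega, h4⟩
    · simp only [blockL, List.mem_cons, List.not_mem_nil, or_false] at ha
      rcases ha with rfl | rfl | rfl | rfl | rfl | rfl
      · exact ⟨1, 2*m+2, by simp, by omega, by omega, rfl⟩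
      · exact ⟨0, 2*m+2, by simp, by omega, by omega, rfl⟩
      · exact ⟨2, 2*m+2, by simp, by omega, by omega, rfl⟩
      · exact ⟨2, 2*m+3, by simp, by omega, by omega, rfl⟩
      · exact ⟨0, 2*m+3, by simp, by omega, by omega, rfl⟩
      · exact ⟨1, 2*m+3, by simp, by omega, by omega, rfl⟩

theorem mem_zsL {a : Fin 4 × ZMod k} (ha : a ∈ zsL k) :
    ∃ i, 1 ≤ i ∧ i ≤ k - 1 ∧ a = vv k 3 i := by
  simp only [zsL, List.mem_map, List.mem_range] at ha
  obtain ⟨i, hi, rfl⟩ := ha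
  exact ⟨i + 1, by omega, by omega, rfl⟩

variable (hk : 5 ≤ k)
include hk

theorem nodup_zsL : (zsL k).Nodup := by
  haveI : NeZero k := ⟨by omega⟩
  refine List.Nodup.map_on ?_ List.nodup_range
  intro i hi j hj h
  rw [List.mem_range] at hi hj
  have := (vv_inj (by omega) (by omega)).1 h
  omega

omit hk in
theorem nodup_map_vv {k : ℕ} [NeZero k] (l : List (Fin 4 × ℕ)) (hl : ∀ p ∈ l, p.2 < k)
    (h : l.Nodup) : (l.map (fun p => vv k p.1 p.2)).Nodup := by
  refine List.Nodup.map_on ?_ h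
  intro p hp q hq e
  have := (vv_inj (hl p hp) (hl q hq)).1 e
  exact Prod.ext this.1 this.2

theorem nodup_blockL {j : ℕ} (hj : 2*j+3 < k) : (blockL k j).Nodup := by
  haveI : NeZero k := ⟨by omega⟩
  have : blockL k j = List.map (fun p => vv k p.1 p.2)
      ([(1, 2*j+2), (0, 2*j+2), (2, 2*j+2), (2, 2*j+3), (0, 2*j+3), (1, 2*j+3)] :
        List (Fin 4 × ℕ)) := by
    simp [blockL]
  rw [this]
  apply nodup_map_vv (k := k)
  · intro p hp
    simp only [List.mem_cons, List.not_mem_nil, or_false] at hp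
    rcases hp with rfl | rfl | rfl | rfl | rfl | rfl <;> simp <;> omega
  · simp only [List.nodup_cons, List.mem_cons, List.not_mem_nil, or_false, not_or,
      List.nodup_nil, and_true, Prod.mk.injEq, not_and]
    refine ⟨?_, ?_, ?_, ?_, ?_⟩ <;> simp <;> omega

theorem nodup_zigL {m : ℕ} (hm : 2*m+1 < k) : (zigL k m).Nodup := by
  haveI : NeZero k := ⟨by omega⟩
  induction m with
  | zero => simp [zigL]
  | succ m ih =>
    rw [zigL, List.nodup_append]
    refine ⟨ih (by omega), nodup_blockL hk (by omega), ?_⟩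
    rintro a ha _ hb rfl
    obtain ⟨t, i, ht, h2, h3, rfl⟩ := mem_zigL ha
    simp only [blockL, List.mem_cons, List.not_mem_nil, or_false] at hb
    rcases hb with h | h | h | h | h | h <;>
      exact absurd h (vv_ne (by omega) (by omega) (fun ⟨_, h'⟩ => by omega))

theorem chain'_blockL {j : ℕ} (hj : 2*j+3 < k) :
    List.Chain' (flowerSnark k).Adj (blockL k j) := by
  refine List.isChain_cons_cons.2 ⟨(adj_wt hk 1 (by decide) _).symm, ?_⟩
  refine List.isChain_cons_cons.2 ⟨adj_wt hk 2 (by decide) _, ?_⟩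
  refine List.isChain_cons_cons.2 ⟨adj_yy hk (by omega) (by omega), ?_⟩
  refine List.isChain_cons_cons.2 ⟨(adj_wt hk 2 (by decide) _).symm, ?_⟩
  refine List.isChain_cons_cons.2 ⟨adj_wt hk 1 (by decide) _, ?_⟩
  simp

theorem zigL_getLast {m : ℕ} (hm : 1 ≤ m) :
    (zigL k m).getLast? = some (vv k 1 (2*m+1)) := by
  obtain ⟨m', rfl⟩ : ∃ m', m = m' + 1 := ⟨m - 1, by omega⟩
  rw [show 2 * (m' + 1) + 1 = 2 * m' + 3 from by omega]
  rw [zigL, blockL]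
  rw [List.getLast?_append_of_ne_nil _ (by simp)]
  simp

theorem zigL_head {m : ℕ} (hm : 1 ≤ m) :
    (zigL k m).head? = some (vv k 1 2) := by
  induction m with
  | zero => omega
  | succ m ih =>
    rcases Nat.eq_zero_or_pos m with rfl | hm'
    · simp [zigL, blockL]
    · rw [zigL, List.head?_append_of_ne_nil]
      · exact ih hm'
      · have := zigL_length (k := k) m; intro h; rw [h] at this; simp at this; omega

theorem chain'_zigL {m : ℕ} (hm : 2*m+1 < k) :
    List.Chain' (flowerSnark k).Adj (zigL k m) := by
  induction m with
  | zero => exact List.isChain_nil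
  | succ m ih =>
    rw [zigL]
    refine List.IsChain.append (ih (by omega)) (chain'_blockL hk (by omega)) ?_
    intro a ha b hb
    rcases Nat.eq_zero_or_pos m with rfl | hm'
    · simp [zigL] at ha
    · rw [zigL_getLast hk hm'] at ha
      rw [blockL] at hb
      simp only [List.head?_cons, Option.mem_some_iff] at ha hb
      subst ha; subst hb
      have : 2*m+2 = (2*m+1) + 1 := by omega
      rw [this]
      exact adj_xx hk (by omega) (by omega)

theorem zsL_getLast : (zsL k).getLast? = some (vv k 3 (k-1)) := by
  rw [zsL]
  obtain ⟨n, hn⟩ : ∃ n, k - 1 = n + 1 := ⟨k - 2, by omega⟩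
  rw [hn, List.range_succ]
  rw [List.map_append, List.getLast?_append_of_ne_nil _ (by simp)]
  simp only [List.map_cons, List.map_nil, List.getLast?_singleton]

theorem zsL_head : (zsL k).head? = some (vv k 3 1) := by
  rw [zsL]
  obtain ⟨n, hn⟩ : ∃ n, k - 1 = n + 1 := ⟨k - 2, by omega⟩
  rw [hn, List.range_succ_eq_map]
  simp

theorem chain'_zsL : List.Chain' (flowerSnark k).Adj (zsL k) := by
  rw [zsL]
  refine (List.isChain_map _).2 ?_
  obtain ⟨n, hn⟩ : ∃ n, k - 1 = n + 1 := ⟨k - 2, by omega⟩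
  rw [hn, List.isChain_range_succ]
  intro i hi
  exact adj_zz hk (by omega)

end lists

section main
variable {k : ℕ} (hk : 5 ≤ k)

/-- the middle list: from `z 1` through everything to `x (k-1)`. -/
def ML (k m : ℕ) : List (Fin 4 × ZMod k) :=
  zsL k ++ ([vv k 0 (k-1), vv k 2 (k-1), vv k 2 0, vv k 1 1] ++ (zigL k m ++ [vv k 1 (k-1)]))

include hk

theorem zsL_ne_nil : zsL k ≠ [] := by
  have : (zsL k).length = k - 1 := by simp [zsL]
  intro h; rw [h] at this; simp at this; omega

theorem zigL_ne_nil {m : ℕ} (hm : 1 ≤ m) : zigL k m ≠ [] := by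
  have : (zigL k m).length = 6 * m := zigL_length m
  intro h; rw [h] at this; simp at this; omega

theorem chain_ML {m : ℕ} (hm : 1 ≤ m) (hkm : k = 2 * m + 3) :
    List.Chain (flowerSnark k).Adj (vv k 0 1) (ML k m ++ [vv k 1 0]) := by
  haveI : NeZero k := ⟨by omega⟩
  have hMx : ML k m ++ [vv k 1 0] =
      zsL k ++ ([vv k 0 (k-1), vv k 2 (k-1), vv k 2 0, vv k 1 1] ++
        (zigL k m ++ [vv k 1 (k-1), vv k 1 0])) := by
    simp [ML]
  rw [hMx]
  -- chain' of tail pieces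
  have hD : List.Chain' (flowerSnark k).Adj [vv k 1 (k-1), vv k 1 0] :=
    List.isChain_cons_cons.2 ⟨adj_x_wrap hk, List.isChain_singleton _⟩
  have hCD : List.Chain' (flowerSnark k).Adj (zigL k m ++ [vv k 1 (k-1), vv k 1 0]) := by
    refine List.IsChain.append (chain'_zigL hk (by omega)) hD ?_
    intro a ha b hb
    rw [zigL_getLast hk hm] at ha
    simp only [List.head?_cons, Option.mem_some_iff] at ha hb
    subst ha; subst hb
    rw [show k - 1 = (2*m+1) + 1 from by omega]
    exact adj_xx hk (by omega) (by omega)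
  have hBCD : List.Chain' (flowerSnark k).Adj
      ([vv k 0 (k-1), vv k 2 (k-1), vv k 2 0, vv k 1 1] ++
        (zigL k m ++ [vv k 1 (k-1), vv k 1 0])) := by
    refine List.isChain_cons_cons.2 ⟨adj_wt hk 2 (by decide) _, ?_⟩
    refine List.isChain_cons_cons.2 ⟨adj_y_wrap hk, ?_⟩
    refine List.isChain_cons_cons.2 ⟨adj_y0x1, ?_⟩
    refine List.isChain_cons.2 ⟨?_, hCD⟩
    intro y hy
    simp only [List.append_eq, List.nil_append] at hy
    rw [List.head?_append_of_ne_nil _ (zigL_ne_nil hk hm), zigL_head hk hm] at hy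
    simp only [Option.mem_some_iff] at hy
    subst hy
    exact adj_xx hk (by omega) (by omega)
  show List.Chain' (flowerSnark k).Adj (vv k 0 1 :: (zsL k ++ _))
  refine List.isChain_cons.2 ⟨?_, ?_⟩
  · intro y hy
    rw [List.head?_append_of_ne_nil _ (zsL_ne_nil hk), zsL_head hk] at hy
    simp only [Option.mem_some_iff] at hy
    subst hy
    exact adj_wt hk 3 (by decide) 1
  · refine List.IsChain.append (chain'_zsL hk) hBCD ?_
    intro a ha b hb
    rw [zsL_getLast hk] at ha
    simp only [List.append_eq, List.cons_append, List.nil_append, List.head?_cons, Option.mem_some_iff] at ha hb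
    subst ha; subst hb
    exact (adj_wt hk 3 (by decide) (k-1)).symm

/-- the full support list of the cycle. -/
def TL (k m : ℕ) : List (Fin 4 × ZMod k) :=
  vv k 2 1 :: vv k 0 1 :: (ML k m ++ [vv k 1 0])

theorem TL_eq (m : ℕ) : TL k m =
    vv k 2 1 :: vv k 0 1 :: (zsL k ++ ([vv k 0 (k-1), vv k 2 (k-1), vv k 2 0, vv k 1 1] ++
      (zigL k m ++ [vv k 1 (k-1), vv k 1 0]))) := by
  simp [TL, ML]

theorem TL_length {m : ℕ} (hkm : k = 2 * m + 3) : (TL k m).length = 4 * k - 2 := by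
  have h1 : (zsL k).length = k - 1 := by simp [zsL]
  have h2 : (zigL k m).length = 6 * m := zigL_length m
  rw [TL_eq hk]
  simp only [List.length_cons, List.length_append, h1, h2]
  simp
  omega

theorem notin_zsL {t : Fin 4} {i : ℕ} (hi : i < k) (h : t ≠ 3 ∨ i = 0) :
    vv k t i ∉ zsL k := by
  haveI : NeZero k := ⟨by omega⟩
  intro hmem
  obtain ⟨j, hj1, hj2, he⟩ := mem_zsL hmem
  obtain ⟨h1, h2⟩ := (vv_inj hi (by omega)).1 he
  rcases h with h | h
  · exact h h1
  · omega

theorem notin_zigL {t : Fin 4} {i m : ℕ} (hkm : k = 2 * m + 3) (hi : i < k)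
    (h : t = 3 ∨ i ≤ 1 ∨ 2*m+2 ≤ i) : vv k t i ∉ zigL k m := by
  haveI : NeZero k := ⟨by omega⟩
  intro hmem
  obtain ⟨s, j, hs, hj1, hj2, he⟩ := mem_zigL hmem
  obtain ⟨h1, h2⟩ := (vv_inj hi (by omega)).1 he
  subst h1
  rcases h with h | h | h
  · rcases hs with rfl | rfl | rfl <;> simp at h
  · omega
  · omega

theorem nodup_TL {m : ℕ} (hm : 1 ≤ m) (hkm : k = 2 * m + 3) : (TL k m).Nodup := by
  haveI : NeZero k := ⟨by omega⟩
  have h0 : (0:ℕ) < k := by omega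
  have h1 : (1:ℕ) < k := by omega
  have hk1 : k - 1 < k := by omega
  rw [TL_eq hk]
  have memcase : ∀ a : Fin 4 × ZMod k,
      a ∈ zsL k ++ ([vv k 0 (k-1), vv k 2 (k-1), vv k 2 0, vv k 1 1] ++
        (zigL k m ++ [vv k 1 (k-1), vv k 1 0])) →
      a ∈ zsL k ∨ a = vv k 0 (k-1) ∨ a = vv k 2 (k-1) ∨ a = vv k 2 0 ∨ a = vv k 1 1 ∨
        a ∈ zigL k m ∨ a = vv k 1 (k-1) ∨ a = vv k 1 0 := by
    intro a ha
    simpa only [List.mem_append, List.mem_cons, List.not_mem_nil, or_false, or_assoc] using ha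
  refine List.nodup_cons.2 ⟨?_, List.nodup_cons.2 ⟨?_, ?_⟩⟩
  · -- vv 2 1 not in the rest
    intro h
    rcases List.mem_cons.1 h with h | h
    · exact absurd h (vv_ne h1 h1 (by simp))
    · rcases memcase _ h with h | h | h | h | h | h | h | h
      · exact notin_zsL hk h1 (Or.inl (by decide)) h
      · exact absurd h (vv_ne h1 hk1 (by simp))
      · exact absurd h (vv_ne h1 hk1 (by rintro ⟨-, h2⟩; omega))
      · exact absurd h (vv_ne h1 h0 (by rintro ⟨-, h2⟩; omega))
      · exact absurd h (vv_ne h1 h1 (by simp))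
      · exact notin_zigL hk hkm h1 (Or.inr (Or.inl (by omega))) h
      · exact absurd h (vv_ne h1 hk1 (by simp))
      · exact absurd h (vv_ne h1 h0 (by simp))
  · -- vv 0 1 not in the rest
    intro h
    rcases memcase _ h with h | h | h | h | h | h | h | h
    · exact notin_zsL hk h1 (Or.inl (by decide)) h
    · exact absurd h (vv_ne h1 hk1 (by rintro ⟨-, h2⟩; omega))
    · exact absurd h (vv_ne h1 hk1 (by simp))
    · exact absurd h (vv_ne h1 h0 (by simp))
    · exact absurd h (vv_ne h1 h1 (by simp))
    · exact notin_zigL hk hkm h1 (Or.inr (Or.inl (by omega))) h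
    · exact absurd h (vv_ne h1 hk1 (by simp))
    · exact absurd h (vv_ne h1 h0 (by simp))
  · -- nodup of the big append
    refine List.nodup_append.2 ⟨nodup_zsL hk, ?_, ?_⟩
    · -- nodup of middle ++ (zig ++ tail)
      refine List.nodup_cons.2 ⟨?_, List.nodup_cons.2 ⟨?_, List.nodup_cons.2 ⟨?_,
        List.nodup_cons.2 ⟨?_, ?_⟩⟩⟩⟩
      · intro h
        simp only [List.append_eq, List.cons_append, List.nil_append, List.mem_cons, List.mem_append, List.not_mem_nil, or_false, or_assoc] at h
        rcases h with h | h | h | h | h | h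
        · exact absurd h (vv_ne hk1 hk1 (by simp))
        · exact absurd h (vv_ne hk1 h0 (by rintro ⟨-, h2⟩; omega))
        · exact absurd h (vv_ne hk1 h1 (by simp))
        · exact notin_zigL hk hkm hk1 (Or.inr (Or.inr (by omega))) h
        · exact absurd h (vv_ne hk1 hk1 (by simp))
        · exact absurd h (vv_ne hk1 h0 (by simp))
      · intro h
        simp only [List.append_eq, List.cons_append, List.nil_append, List.mem_cons, List.mem_append, List.not_mem_nil, or_false, or_assoc] at h
        rcases h with h | h | h | h | h
        · exact absurd h (vv_ne hk1 h0 (by rintro ⟨-, h2⟩; omega))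
        · exact absurd h (vv_ne hk1 h1 (by rintro ⟨-, h2⟩; omega))
        · exact notin_zigL hk hkm hk1 (Or.inr (Or.inr (by omega))) h
        · exact absurd h (vv_ne hk1 hk1 (by simp))
        · exact absurd h (vv_ne hk1 h0 (by rintro ⟨-, h2⟩; omega))
      · intro h
        simp only [List.append_eq, List.cons_append, List.nil_append, List.mem_cons, List.mem_append, List.not_mem_nil, or_false, or_assoc] at h
        rcases h with h | h | h | h
        · exact absurd h (vv_ne h0 h1 (by simp))
        · exact notin_zigL hk hkm h0 (Or.inr (Or.inl (by omega))) h
        · exact absurd h (vv_ne h0 hk1 (by simp))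
        · exact absurd h (vv_ne h0 h0 (by simp))
      · intro h
        simp only [List.append_eq, List.cons_append, List.nil_append, List.mem_cons, List.mem_append, List.not_mem_nil, or_false, or_assoc] at h
        rcases h with h | h | h
        · exact notin_zigL hk hkm h1 (Or.inr (Or.inl (by omega))) h
        · exact absurd h (vv_ne h1 hk1 (by rintro ⟨-, h2⟩; omega))
        · exact absurd h (vv_ne h1 h0 (by rintro ⟨-, h2⟩; omega))
      · -- nodup (zig ++ [x(k-1), x 0])
        show List.Nodup (zigL k m ++ [vv k 1 (k-1), vv k 1 0])
        refine List.nodup_append.2 ⟨nodup_zigL hk (by omega), ?_, ?_⟩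
        · refine List.nodup_cons.2 ⟨?_, List.nodup_singleton _⟩
          simp only [List.mem_cons, List.not_mem_nil, or_false]
          exact vv_ne hk1 h0 (by rintro ⟨-, h2⟩; omega)
        · rintro a ha _ hb rfl
          obtain ⟨t, i, ht, hi1, hi2, rfl⟩ := mem_zigL ha
          simp only [List.mem_cons, List.not_mem_nil, or_false] at hb
          rcases hb with h | h
          · exact absurd h (vv_ne (by omega) hk1 (by rintro ⟨-, h2⟩; omega))
          · exact absurd h (vv_ne (by omega) h0 (by rintro ⟨-, h2⟩; omega))
    · -- disjoint zsL vs rest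
      rintro a ha _ hb rfl
      obtain ⟨i, hi1, hi2, rfl⟩ := mem_zsL ha
      simp only [List.append_eq, List.cons_append, List.nil_append, List.mem_cons, List.mem_append, List.not_mem_nil, or_false, or_assoc] at hb
      rcases hb with h | h | h | h | h | h | h
      · exact absurd h (vv_ne (by omega) hk1 (by simp))
      · exact absurd h (vv_ne (by omega) hk1 (by simp))
      · exact absurd h (vv_ne (by omega) h0 (by simp))
      · exact absurd h (vv_ne (by omega) h1 (by simp))
      · exact notin_zigL hk hkm (by omega) (Or.inl rfl) h
      · exact absurd h (vv_ne (by omega) hk1 (by simp))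
      · exact absurd h (vv_ne (by omega) h0 (by simp))

theorem w0_notin_TL {m : ℕ} (hm : 1 ≤ m) (hkm : k = 2 * m + 3) : vv k 0 0 ∉ TL k m := by
  haveI : NeZero k := ⟨by omega⟩
  have h0 : (0:ℕ) < k := by omega
  have h1 : (1:ℕ) < k := by omega
  have hk1 : k - 1 < k := by omega
  rw [TL_eq hk]
  intro h
  simp only [List.append_eq, List.cons_append, List.nil_append, List.mem_cons, List.mem_append, List.not_mem_nil, or_false, or_assoc] at h
  rcases h with h | h | h | h | h | h | h | h | h | h
  · exact absurd h (vv_ne h0 h1 (by simp))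
  · exact absurd h (vv_ne h0 h1 (by rintro ⟨-, h2⟩; omega))
  · exact notin_zsL hk h0 (Or.inl (by decide)) h
  · exact absurd h (vv_ne h0 hk1 (by rintro ⟨-, h2⟩; omega))
  · exact absurd h (vv_ne h0 hk1 (by simp))
  · exact absurd h (vv_ne h0 h0 (by simp))
  · exact absurd h (vv_ne h0 h1 (by simp))
  · exact notin_zigL hk hkm h0 (Or.inr (Or.inl (by omega))) h
  · exact absurd h (vv_ne h0 hk1 (by simp))
  · exact absurd h (vv_ne h0 h0 (by simp))

theorem z0_notin_TL {m : ℕ} (hm : 1 ≤ m) (hkm : k = 2 * m + 3) : vv k 3 0 ∉ TL k m := by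
  haveI : NeZero k := ⟨by omega⟩
  have h0 : (0:ℕ) < k := by omega
  have h1 : (1:ℕ) < k := by omega
  have hk1 : k - 1 < k := by omega
  rw [TL_eq hk]
  intro h
  simp only [List.append_eq, List.cons_append, List.nil_append, List.mem_cons, List.mem_append, List.not_mem_nil, or_false, or_assoc] at h
  rcases h with h | h | h | h | h | h | h | h | h | h
  · exact absurd h (vv_ne h0 h1 (by simp))
  · exact absurd h (vv_ne h0 h1 (by simp))
  · exact notin_zsL hk h0 (Or.inr rfl) h
  · exact absurd h (vv_ne h0 hk1 (by simp))
  · exact absurd h (vv_ne h0 hk1 (by simp))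
  · exact absurd h (vv_ne h0 h0 (by simp))
  · exact absurd h (vv_ne h0 h1 (by simp))
  · exact notin_zigL hk hkm h0 (Or.inl rfl) h
  · exact absurd h (vv_ne h0 hk1 (by simp))
  · exact absurd h (vv_ne h0 h0 (by simp))

theorem TL_card_arg {m : ℕ} (hm : 1 ≤ m) (hkm : k = 2 * m + 3) :
    ∀ x : Fin 4 × ZMod k, x ∈ TL k m ↔ (x ≠ vv k 0 0 ∧ x ≠ vv k 3 0) := by
  haveI : NeZero k := ⟨by omega⟩
  have hcard : Fintype.card (Fin 4 × ZMod k) = 4 * k := by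
    simp [Fintype.card_prod, ZMod.card]
  have hne : vv k 0 0 ≠ vv k 3 0 := by simp [vv, Prod.ext_iff]
  have hU : (Finset.univ \ {vv k 0 0, vv k 3 0} : Finset (Fin 4 × ZMod k)).card = 4 * k - 2 := by
    rw [Finset.card_sdiff_of_subset (Finset.subset_univ _), Finset.card_univ, hcard]
    rw [Finset.card_insert_of_notMem (by simpa using hne), Finset.card_singleton]
  have hF : (TL k m).toFinset.card = 4 * k - 2 := by
    rw [List.toFinset_card_of_nodup (nodup_TL hk hm hkm), TL_length hk hkm]
  have hsub : (TL k m).toFinset ⊆ Finset.univ \ {vv k 0 0, vv k 3 0} := by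
    intro x hx
    rw [List.mem_toFinset] at hx
    rw [Finset.mem_sdiff, Finset.mem_insert, Finset.mem_singleton]
    refine ⟨Finset.mem_univ _, ?_⟩
    rintro (rfl | rfl)
    · exact w0_notin_TL hk hm hkm hx
    · exact z0_notin_TL hk hm hkm hx
  have heq : (TL k m).toFinset = Finset.univ \ {vv k 0 0, vv k 3 0} :=
    Finset.eq_of_subset_of_card_le hsub (by rw [hU, hF])
  intro x
  constructor
  · intro hx
    constructor
    · rintro rfl; exact w0_notin_TL hk hm hkm hx
    · rintro rfl; exact z0_notin_TL hk hm hkm hx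
  · intro ⟨hx1, hx2⟩
    rw [← List.mem_toFinset, heq, Finset.mem_sdiff, Finset.mem_insert, Finset.mem_singleton]
    exact ⟨Finset.mem_univ _, by tauto⟩

end main


/-- For each odd `k ≥ 5`, the flower snark `F_k` contains a cycle of length `4k - 2` omitting
exactly two vertices, and the two omitted vertices are adjacent. -/
theorem stmt11 (k : ℕ) (hk : 5 ≤ k) (hodd : Odd k) :
    ∃ u v : Fin 4 × ZMod k, (flowerSnark k).Adj u v ∧
      ∃ (w : Fin 4 × ZMod k) (p : (flowerSnark k).Walk w w),
        p.IsCycle ∧ p.length = 4 * k - 2 ∧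
        ∀ x, x ∈ p.support ↔ (x ≠ u ∧ x ≠ v) := by
  obtain ⟨m, hm, hkm⟩ : ∃ m, 1 ≤ m ∧ k = 2 * m + 3 := by
    obtain ⟨t, ht⟩ := hodd
    exact ⟨t - 1, by omega, by omega⟩
  haveI : NeZero k := ⟨by omega⟩
  let Q : (flowerSnark k).Walk (vv k 0 1) (vv k 1 0) :=
    mkW _ (ML k m) _ _ (chain_ML hk hm hkm)
  let P : (flowerSnark k).Walk (vv k 0 1) (vv k 2 1) := Q.concat adj_x0y1
  have hQsup : Q.support = vv k 0 1 :: (ML k m ++ [vv k 1 0]) := mkW_support _ _ _ _ _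
  have hPsup : P.support = (vv k 0 1 :: (ML k m ++ [vv k 1 0])) ++ [vv k 2 1] := by
    rw [SimpleGraph.Walk.support_concat, hQsup]
  have hTL : TL k m = vv k 2 1 :: (vv k 0 1 :: (ML k m ++ [vv k 1 0])) := rfl
  have hnd := nodup_TL hk hm hkm
  refine ⟨vv k 0 0, vv k 3 0, adj_wt hk 3 (by decide) 0, vv k 2 1,
    SimpleGraph.Walk.cons ((adj_wt hk 2 (by decide) 1).symm) P, ?_, ?_, ?_⟩
  · rw [SimpleGraph.Walk.cons_isCycle_iff]
    constructor
    · rw [SimpleGraph.Walk.isPath_def, hPsup]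
      refine (List.perm_append_singleton _ _).nodup_iff.2 ?_
      rw [← hTL]
      exact hnd
    · intro h
      rw [SimpleGraph.Walk.edges_concat, List.concat_eq_append] at h
      rcases List.mem_append.1 h with h | h
      · have hy := SimpleGraph.Walk.fst_mem_support_of_mem_edges Q h
        rw [hQsup] at hy
        rw [hTL] at hnd
        exact (List.nodup_cons.1 hnd).1 hy
      · rw [List.mem_singleton] at h
        rw [Sym2.eq_iff] at h
        rcases h with ⟨h1, h2⟩ | ⟨h1, h2⟩ <;> simp [vv, Prod.ext_iff] at h1 h2
  · simp only [P, Q, SimpleGraph.Walk.length_cons, SimpleGraph.Walk.length_concat, mkW_length,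
      ML, List.length_append, List.length_cons, zigL_length, zsL, List.length_map,
      List.length_range, List.length_nil]
    omega
  · intro x
    rw [SimpleGraph.Walk.support_cons, hPsup]
    rw [← TL_card_arg hk hm hkm x, hTL]
    simp only [List.mem_cons, List.mem_append, List.mem_singleton]
    tauto
end

section
/- Let $H$ be the graph obtained from $K_4$ by subdividing one edge, and let $G^*$ be formed from three disjoint copies of $H$ by adding a new vertex $v$ adjacent to the degree-2 vertex of each copy. Then $G^*$ is 3-regular and has no MED decomposition. -/
set_option maxHeartbeats 1000000


/-- A set of edges forming a matching: pairwise non-incident edges. -/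
def IsMatchingSet {V : Type*} (E₁ : Set (Sym2 V)) : Prop :=
  ∀ e ∈ E₁, ∀ f ∈ E₁, e ≠ f → ¬ EdgeIncident e f

/-- The edge set `E₂` forms a disjoint union of even cycles: every vertex touched by `E₂`
has exactly two incident edges of `E₂`, and each component has evenly many vertices. -/
def IsEvenCyclesSet {V : Type*} (E₂ : Set (Sym2 V)) : Prop :=
  (∀ v ∈ (SimpleGraph.fromEdgeSet E₂).support, edeg (SimpleGraph.fromEdgeSet E₂) v = 2) ∧
  (∀ v ∈ (SimpleGraph.fromEdgeSet E₂).support,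
    Even ((((SimpleGraph.fromEdgeSet E₂).connectedComponentMk v).supp).ncard))

/-- The edge set `E₃` forms vertex-disjoint double-stars (6-vertex trees with two adjacent
degree-3 centers, each with two leaves) whose leaves are independent in `G`. -/
def IsDoubleStarsSet {V : Type*} (G : SimpleGraph V) (E₃ : Set (Sym2 V)) : Prop :=
  let H := SimpleGraph.fromEdgeSet E₃
  (∀ v ∈ H.support, edeg H v = 1 ∨ edeg H v = 3) ∧
  (∀ v ∈ H.support, edeg H v = 3 → ({u | u ∈ H.neighborSet v ∧ edeg H u = 3}).ncard = 1) ∧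
  (∀ v ∈ H.support, edeg H v = 1 → ∀ u, H.Adj v u → edeg H u = 3) ∧
  (∀ u v, u ∈ H.support → v ∈ H.support → edeg H u = 1 → edeg H v = 1 → ¬ G.Adj u v)

/-- A MED decomposition of `G`: a partition of its edge set into a matching `E₁`,
a disjoint union of even cycles `E₂`, and independent double-stars `E₃`. -/
def IsMEDDecomposition {V : Type*} (G : SimpleGraph V) (E₁ E₂ E₃ : Set (Sym2 V)) : Prop :=
  E₁ ∪ E₂ ∪ E₃ = G.edgeSet ∧
  Disjoint E₁ E₂ ∧ Disjoint E₁ E₃ ∧ Disjoint E₂ E₃ ∧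
  IsMatchingSet E₁ ∧ IsEvenCyclesSet E₂ ∧ IsDoubleStarsSet G E₃

/-- `G*`: three disjoint copies of `K₄`-with-one-edge-subdivided (copy `j` on vertices
`5j,…,5j+4` with subdivision vertex `5j+4`), plus a new vertex `15` adjacent to the three
subdivision vertices. -/
def Gstar : SimpleGraph (Fin 16) := SimpleGraph.fromEdgeSet
  {s(0, 2), s(0, 3), s(1, 2), s(1, 3), s(2, 3), s(0, 4), s(1, 4),
   s(5, 7), s(5, 8), s(6, 7), s(6, 8), s(7, 8), s(5, 9), s(6, 9),
   s(10, 12), s(10, 13), s(11, 12), s(11, 13), s(12, 13), s(10, 14), s(11, 14),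
   s(4, 15), s(9, 15), s(14, 15)}


/-! ### Auxiliary machinery -/

section Aux
open Classical

def GE : Set (Sym2 (Fin 16)) :=
  {s(0, 2), s(0, 3), s(1, 2), s(1, 3), s(2, 3), s(0, 4), s(1, 4),
   s(5, 7), s(5, 8), s(6, 7), s(6, 8), s(7, 8), s(5, 9), s(6, 9),
   s(10, 12), s(10, 13), s(11, 12), s(11, 13), s(12, 13), s(10, 14), s(11, 14),
   s(4, 15), s(9, 15), s(14, 15)}

lemma Gstar_eq : Gstar = SimpleGraph.fromEdgeSet GE := rfl

def dcnt (a b c k : ℕ) : ℕ := (if a = k then 1 else 0) + (if b = k then 1 else 0) + (if c = k then 1 else 0)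

def ExactlyOne (P Q R : Prop) : Prop := (P ∧ ¬Q ∧ ¬R) ∨ (¬P ∧ Q ∧ ¬R) ∨ (¬P ∧ ¬Q ∧ R)

noncomputable instance ExactlyOne.dec (P Q R : Prop) [Decidable P] [Decidable Q] [Decidable R] :
    Decidable (ExactlyOne P Q R) := by
  unfold ExactlyOne; infer_instance

def copyPred (l1 l2 l3 l4 l5 l6 l7 p : ℕ) (xb : Bool) : Prop :=
    (dcnt l1 l2 l6 0 ≤ 1) →
    (dcnt l1 l2 l6 1 = 0 ∨ dcnt l1 l2 l6 1 = 2) →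
    (dcnt l1 l2 l6 2 = 0 ∨ dcnt l1 l2 l6 2 = 1 ∨ dcnt l1 l2 l6 2 = 3) →
    (dcnt l1 l2 l6 2 = 3 → ExactlyOne (l1 = 2 ∧ dcnt l1 l3 l5 2 = 3) (l2 = 2 ∧ dcnt l2 l4 l5 2 = 3) (l6 = 2 ∧ dcnt l6 l7 p 2 = 3)) →
    (dcnt l3 l4 l7 0 ≤ 1) →
    (dcnt l3 l4 l7 1 = 0 ∨ dcnt l3 l4 l7 1 = 2) →
    (dcnt l3 l4 l7 2 = 0 ∨ dcnt l3 l4 l7 2 = 1 ∨ dcnt l3 l4 l7 2 = 3) →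
    (dcnt l3 l4 l7 2 = 3 → ExactlyOne (l3 = 2 ∧ dcnt l1 l3 l5 2 = 3) (l4 = 2 ∧ dcnt l2 l4 l5 2 = 3) (l7 = 2 ∧ dcnt l6 l7 p 2 = 3)) →
    (dcnt l1 l3 l5 0 ≤ 1) →
    (dcnt l1 l3 l5 1 = 0 ∨ dcnt l1 l3 l5 1 = 2) →
    (dcnt l1 l3 l5 2 = 0 ∨ dcnt l1 l3 l5 2 = 1 ∨ dcnt l1 l3 l5 2 = 3) →
    (dcnt l1 l3 l5 2 = 3 → ExactlyOne (l1 = 2 ∧ dcnt l1 l2 l6 2 = 3) (l3 = 2 ∧ dcnt l3 l4 l7 2 = 3) (l5 = 2 ∧ dcnt l2 l4 l5 2 = 3)) →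
    (dcnt l2 l4 l5 0 ≤ 1) →
    (dcnt l2 l4 l5 1 = 0 ∨ dcnt l2 l4 l5 1 = 2) →
    (dcnt l2 l4 l5 2 = 0 ∨ dcnt l2 l4 l5 2 = 1 ∨ dcnt l2 l4 l5 2 = 3) →
    (dcnt l2 l4 l5 2 = 3 → ExactlyOne (l2 = 2 ∧ dcnt l1 l2 l6 2 = 3) (l4 = 2 ∧ dcnt l3 l4 l7 2 = 3) (l5 = 2 ∧ dcnt l1 l3 l5 2 = 3)) →
    (dcnt l6 l7 p 0 ≤ 1) →
    (dcnt l6 l7 p 1 = 0 ∨ dcnt l6 l7 p 1 = 2) →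
    (dcnt l6 l7 p 2 = 0 ∨ dcnt l6 l7 p 2 = 1 ∨ dcnt l6 l7 p 2 = 3) →
    (dcnt l6 l7 p 2 = 3 → ExactlyOne (l6 = 2 ∧ dcnt l1 l2 l6 2 = 3) (l7 = 2 ∧ dcnt l3 l4 l7 2 = 3) (p = 2 ∧ xb = true)) →
    ((l2 = 1 ∧ l5 = 1 ∧ l3 = 1 ∧ l7 = 1 ∧ l6 = 1) ∨
     (l1 = 1 ∧ l5 = 1 ∧ l4 = 1 ∧ l7 = 1 ∧ l6 = 1) ∨
     (p = 2 ∧ dcnt l6 l7 p 2 = 3))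

set_option synthInstance.maxSize 1000000 in
set_option synthInstance.maxHeartbeats 4000000 in
noncomputable instance copyPred.dec (l1 l2 l3 l4 l5 l6 l7 p : ℕ) (xb : Bool) :
    Decidable (copyPred l1 l2 l3 l4 l5 l6 l7 p xb) := by
  unfold copyPred; infer_instance

set_option maxRecDepth 10000 in
set_option maxHeartbeats 4000000 in
lemma copyArith' : ∀ a < 162, ∀ b < 81, copyPred ((a + 162*b) % 3) ((a + 162*b) / 3 % 3)
    ((a + 162*b) / 9 % 3) ((a + 162*b) / 27 % 3) ((a + 162*b) / 81 % 3)
    ((a + 162*b) / 243 % 3) ((a + 162*b) / 729 % 3) ((a + 162*b) / 2187 % 3)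
    ((a + 162*b) / 6561 == 1) := by decide

lemma copyArith (l1 l2 l3 l4 l5 l6 l7 p : ℕ) (xb : Bool) (h1 : l1 < 3) (h2 : l2 < 3) (h3 : l3 < 3)
    (h4 : l4 < 3) (h5 : l5 < 3) (h6 : l6 < 3) (h7 : l7 < 3) (hp : p < 3) :
    copyPred l1 l2 l3 l4 l5 l6 l7 p xb := by
  set n := l1 + 3*l2 + 9*l3 + 27*l4 + 81*l5 + 243*l6 + 729*l7 + 2187*p + 6561*(cond xb 1 0) with hn
  have hxb : (cond xb 1 0 : ℕ) ≤ 1 := by cases xb <;> simp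
  have h := copyArith' (n % 162) (by omega) (n / 162) (by omega)
  rw [show n % 162 + 162*(n / 162) = n from by omega] at h
  have e1 : n % 3 = l1 := by omega
  have e2 : n / 3 % 3 = l2 := by omega
  have e3 : n / 9 % 3 = l3 := by omega
  have e4 : n / 27 % 3 = l4 := by omega
  have e5 : n / 81 % 3 = l5 := by omega
  have e6 : n / 243 % 3 = l6 := by omega
  have e7 : n / 729 % 3 = l7 := by omega
  have e8 : n / 2187 % 3 = p := by omega
  have e9 : (n / 6561 == 1) = xb := by
    have : n / 6561 = cond xb 1 0 := by omega
    rw [this]; cases xb <;> simp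
  rw [e1, e2, e3, e4, e5, e6, e7, e8, e9] at h
  exact h

lemma ncard_eq3 {α : Type*} (P : α → Prop) (u1 u2 u3 : α)
    (h12 : u1 ≠ u2) (h13 : u1 ≠ u3) (h23 : u2 ≠ u3)
    (hsub : ∀ x, P x → x = u1 ∨ x = u2 ∨ x = u3) :
    {x | P x}.ncard = (if P u1 then 1 else 0) + (if P u2 then 1 else 0) + (if P u3 then 1 else 0) := by
  classical
  have hset : {x | P x} = ↑(({u1, u2, u3} : Finset α).filter P) := by
    ext x
    simp only [Set.mem_setOf_eq, Finset.coe_filter, Finset.mem_insert, Finset.mem_singleton]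
    constructor
    · intro h; exact ⟨hsub x h, h⟩
    · intro h; exact h.2
  rw [hset, Set.ncard_coe_finset]
  by_cases c1 : P u1 <;> by_cases c2 : P u2 <;> by_cases c3 : P u3 <;>
    simp [Finset.filter_insert, Finset.filter_singleton, c1, c2, c3,
      Finset.card_insert_of_notMem, h12, h13, h23]

lemma edeg_eq3 (E : Set (Sym2 (Fin 16))) (v u1 u2 u3 : Fin 16)
    (hv1 : v ≠ u1) (hv2 : v ≠ u2) (hv3 : v ≠ u3)
    (h12 : u1 ≠ u2) (h13 : u1 ≠ u3) (h23 : u2 ≠ u3)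
    (hnb : ∀ x, s(v,x) ∈ E → x = u1 ∨ x = u2 ∨ x = u3) :
    edeg (SimpleGraph.fromEdgeSet E) v =
      (if s(v,u1) ∈ E then 1 else 0) + (if s(v,u2) ∈ E then 1 else 0) + (if s(v,u3) ∈ E then 1 else 0) := by
  have hset : (SimpleGraph.fromEdgeSet E).neighborSet v = {x | s(v,x) ∈ E ∧ v ≠ x} := by
    ext x; simp [SimpleGraph.fromEdgeSet_adj]
  rw [edeg, hset, ncard_eq3 _ u1 u2 u3 h12 h13 h23 (fun x hx => hnb x hx.1)]
  by_cases c1 : s(v,u1) ∈ E <;> by_cases c2 : s(v,u2) ∈ E <;> by_cases c3 : s(v,u3) ∈ E <;>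
    simp [c1, c2, c3, hv1, hv2, hv3]

lemma star_eq3 (E : Set (Sym2 (Fin 16))) (v u1 u2 u3 : Fin 16)
    (hv1 : v ≠ u1) (hv2 : v ≠ u2) (hv3 : v ≠ u3)
    (h12 : u1 ≠ u2) (h13 : u1 ≠ u3) (h23 : u2 ≠ u3)
    (hnb : ∀ x, s(v,x) ∈ E → x = u1 ∨ x = u2 ∨ x = u3) :
    ({u | u ∈ (SimpleGraph.fromEdgeSet E).neighborSet v ∧ edeg (SimpleGraph.fromEdgeSet E) u = 3}).ncard =
      (if s(v,u1) ∈ E ∧ edeg (SimpleGraph.fromEdgeSet E) u1 = 3 then 1 else 0) +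
      (if s(v,u2) ∈ E ∧ edeg (SimpleGraph.fromEdgeSet E) u2 = 3 then 1 else 0) +
      (if s(v,u3) ∈ E ∧ edeg (SimpleGraph.fromEdgeSet E) u3 = 3 then 1 else 0) := by
  have hP : ∀ x, (x ∈ (SimpleGraph.fromEdgeSet E).neighborSet v ∧ edeg (SimpleGraph.fromEdgeSet E) x = 3)
      → x = u1 ∨ x = u2 ∨ x = u3 := by
    intro x hx
    exact hnb x (((SimpleGraph.fromEdgeSet_adj (s := E)).mp hx.1).1)
  rw [ncard_eq3 (fun x => x ∈ (SimpleGraph.fromEdgeSet E).neighborSet v ∧ edeg (SimpleGraph.fromEdgeSet E) x = 3)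
      u1 u2 u3 h12 h13 h23 hP]
  by_cases c1 : s(v,u1) ∈ E <;> by_cases c2 : s(v,u2) ∈ E <;> by_cases c3 : s(v,u3) ∈ E <;>
    by_cases d1 : edeg (SimpleGraph.fromEdgeSet E) u1 = 3 <;>
    by_cases d2 : edeg (SimpleGraph.fromEdgeSet E) u2 = 3 <;>
    by_cases d3 : edeg (SimpleGraph.fromEdgeSet E) u3 = 3 <;>
    simp [SimpleGraph.mem_neighborSet, SimpleGraph.fromEdgeSet_adj, hv1, hv2, hv3, c1, c2, c3, d1, d2, d3]

lemma odd5 (H : SimpleGraph (Fin 16)) (v0 v1 v2 v3 v4 : Fin 16)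
    (n01 : v0 ≠ v1) (n02 : v0 ≠ v2) (n03 : v0 ≠ v3) (n04 : v0 ≠ v4)
    (n12 : v1 ≠ v2) (n13 : v1 ≠ v3) (n14 : v1 ≠ v4)
    (n23 : v2 ≠ v3) (n24 : v2 ≠ v4) (n34 : v3 ≠ v4)
    (a01 : H.Adj v0 v1) (a12 : H.Adj v1 v2) (a23 : H.Adj v2 v3) (a34 : H.Adj v3 v4) (a40 : H.Adj v4 v0)
    (hdeg : ∀ v ∈ H.support, edeg H v = 2)
    (hev : ∀ v ∈ H.support, Even (((H.connectedComponentMk v).supp).ncard)) : False := by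
  set S : Set (Fin 16) := {v0, v1, v2, v3, v4} with hS
  have key : ∀ u n1 n2 : Fin 16, n1 ≠ n2 → H.Adj u n1 → H.Adj u n2 →
      ∀ w, H.Adj u w → w = n1 ∨ w = n2 := by
    intro u n1 n2 hnn h1 h2 w hw
    have hu : u ∈ H.support := ⟨n1, h1⟩
    have hsub : ({n1, n2} : Set (Fin 16)) ⊆ H.neighborSet u := by
      rintro x (rfl | rfl)
      · exact h1
      · exact h2
    have heq : ({n1, n2} : Set (Fin 16)) = H.neighborSet u := by
      apply Set.eq_of_subset_of_ncard_le hsub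
      rw [show (H.neighborSet u).ncard = 2 from hdeg u hu, Set.ncard_pair hnn]
    have : w ∈ H.neighborSet u := hw
    rw [← heq] at this
    exact this
  have hcl : ∀ a ∈ S, ∀ w, H.Adj a w → w ∈ S := by
    rintro a (rfl | rfl | rfl | rfl | rfl) w hw
    · rcases key a v1 v4 n14 a01 a40.symm w hw with rfl | rfl
      · exact Or.inr (Or.inl rfl)
      · exact Or.inr (Or.inr (Or.inr (Or.inr rfl)))
    · rcases key a v0 v2 n02 a01.symm a12 w hw with rfl | rfl
      · exact Or.inl rfl
      · exact Or.inr (Or.inr (Or.inl rfl))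
    · rcases key a v1 v3 n13 a12.symm a23 w hw with rfl | rfl
      · exact Or.inr (Or.inl rfl)
      · exact Or.inr (Or.inr (Or.inr (Or.inl rfl)))
    · rcases key a v2 v4 n24 a23.symm a34 w hw with rfl | rfl
      · exact Or.inr (Or.inr (Or.inl rfl))
      · exact Or.inr (Or.inr (Or.inr (Or.inr rfl)))
    · rcases key a v3 v0 (Ne.symm n03) a34.symm a40 w hw with rfl | rfl
      · exact Or.inr (Or.inr (Or.inr (Or.inl rfl)))
      · exact Or.inl rfl
  have hwalk : ∀ (a u : Fin 16), H.Walk a u → a ∈ S → u ∈ S := by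
    intro a u w
    induction w with
    | nil => exact id
    | cons h _ ih => exact fun ha => ih (hcl _ ha _ h)
  have hsupp : (H.connectedComponentMk v0).supp = S := by
    ext u
    rw [SimpleGraph.ConnectedComponent.mem_supp_iff, SimpleGraph.ConnectedComponent.eq]
    constructor
    · intro h
      obtain ⟨w⟩ := h.symm
      exact hwalk v0 u w (Or.inl rfl)
    · rintro (rfl | rfl | rfl | rfl | rfl)
      · exact SimpleGraph.Reachable.refl _
      · exact (a01.reachable).symm
      · exact ((a01.reachable).trans a12.reachable).symm
      · exact (((a01.reachable).trans a12.reachable).trans a23.reachable).symm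
      · exact (a40.reachable)
  have hv0 : v0 ∈ H.support := ⟨v1, a01⟩
  have hEv := hev v0 hv0
  rw [hsupp] at hEv
  have hcard : S.ncard = 5 := by
    rw [hS]
    rw [Set.ncard_insert_of_notMem (by simp [n01, n02, n03, n04]) (Set.toFinite _),
        Set.ncard_insert_of_notMem (by simp [n12, n13, n14]) (Set.toFinite _),
        Set.ncard_insert_of_notMem (by simp [n23, n24]) (Set.toFinite _),
        Set.ncard_insert_of_notMem (by simp [n34]) (Set.toFinite _),
        Set.ncard_singleton]
  rw [hcard] at hEv
  exact (by decide : ¬ Even 5) hEv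

lemma mem_GE (e : Sym2 (Fin 16)) : e ∈ Gstar.edgeSet ↔ (e = s(0, 2) ∨ e = s(0, 3) ∨ e = s(1, 2) ∨ e = s(1, 3) ∨ e = s(2, 3) ∨ e = s(0, 4) ∨ e = s(1, 4) ∨ e = s(5, 7) ∨ e = s(5, 8) ∨ e = s(6, 7) ∨ e = s(6, 8) ∨ e = s(7, 8) ∨ e = s(5, 9) ∨ e = s(6, 9) ∨ e = s(10, 12) ∨ e = s(10, 13) ∨ e = s(11, 12) ∨ e = s(11, 13) ∨ e = s(12, 13) ∨ e = s(10, 14) ∨ e = s(11, 14) ∨ e = s(4, 15) ∨ e = s(9, 15) ∨ e = s(14, 15)) := by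
  rw [Gstar_eq, SimpleGraph.edgeSet_fromEdgeSet]
  simp only [GE, Set.mem_diff, Set.mem_insert_iff, Set.mem_singleton_iff, Set.mem_setOf_eq]
  constructor
  · rintro ⟨h, -⟩; exact h
  · intro h
    refine ⟨h, ?_⟩
    rcases h with rfl|rfl|rfl|rfl|rfl|rfl|rfl|rfl|rfl|rfl|rfl|rfl|rfl|rfl|rfl|rfl|rfl|rfl|rfl|rfl|rfl|rfl|rfl|rfl <;> decide

lemma hnbA0 : ∀ x : Fin 16, (s((0:Fin 16), x) = s(0, 2) ∨ s((0:Fin 16), x) = s(0, 3) ∨ s((0:Fin 16), x) = s(1, 2) ∨ s((0:Fin 16), x) = s(1, 3) ∨ s((0:Fin 16), x) = s(2, 3) ∨ s((0:Fin 16), x) = s(0, 4) ∨ s((0:Fin 16), x) = s(1, 4) ∨ s((0:Fin 16), x) = s(5, 7) ∨ s((0:Fin 16), x) = s(5, 8) ∨ s((0:Fin 16), x) = s(6, 7) ∨ s((0:Fin 16), x) = s(6, 8) ∨ s((0:Fin 16), x) = s(7, 8) ∨ s((0:Fin 16), x) = s(5, 9) ∨ s((0:Fin 16), x) = s(6, 9)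 ∨ s((0:Fin 16), x) = s(10, 12) ∨ s((0:Fin 16), x) = s(10, 13) ∨ s((0:Fin 16), x) = s(11, 12) ∨ s((0:Fin 16), x) = s(11, 13) ∨ s((0:Fin 16), x) = s(12, 13) ∨ s((0:Fin 16), x) = s(10, 14) ∨ s((0:Fin 16), x) = s(11, 14) ∨ s((0:Fin 16), x) = s(4, 15) ∨ s((0:Fin 16), x) = s(9, 15) ∨ s((0:Fin 16), x) = s(14, 15)) → x = 2 ∨ x = 3 ∨ x = 4 := by decide

lemma hnb0 : ∀ x : Fin 16, s((0:Fin 16), x) ∈ Gstar.edgeSet → x = 2 ∨ x = 3 ∨ x = 4 := by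
  intro x hx
  rw [mem_GE] at hx
  exact hnbA0 x hx

lemma hnbA1 : ∀ x : Fin 16, (s((1:Fin 16), x) = s(0, 2) ∨ s((1:Fin 16), x) = s(0, 3) ∨ s((1:Fin 16), x) = s(1, 2) ∨ s((1:Fin 16), x) = s(1, 3) ∨ s((1:Fin 16), x) = s(2, 3) ∨ s((1:Fin 16), x) = s(0, 4) ∨ s((1:Fin 16), x) = s(1, 4) ∨ s((1:Fin 16), x) = s(5, 7) ∨ s((1:Fin 16), x) = s(5, 8) ∨ s((1:Fin 16), x) = s(6, 7) ∨ s((1:Fin 16), x) = s(6, 8) ∨ s((1:Fin 16), x) = s(7, 8) ∨ s((1:Fin 16), x) = s(5, 9) ∨ s((1:Fin 16), x) = s(6, 9) ∨ s((1:Fin 16), x) = s(10, 12) ∨ s((1:Fin 16), x) = s(10, 13) ∨ s((1:Fin 16), x) = s(11, 12) ∨ s((1:Fin 16), x) = s(11, 13) ∨ s((1:Fin 16), x) = s(12, 13) ∨ s((1:Fin 16), x) = s(10, 14) ∨ s((1:Fin 16), x) = s(11, 14) ∨ s((1:Fin 16), x) = s(4, 15) ∨ s((1:Fin 16), x) = s(9,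 15) ∨ s((1:Fin 16), x) = s(14, 15)) → x = 2 ∨ x = 3 ∨ x = 4 := by decide

lemma hnb1 : ∀ x : Fin 16, s((1:Fin 16), x) ∈ Gstar.edgeSet → x = 2 ∨ x = 3 ∨ x = 4 := by
  intro x hx
  rw [mem_GE] at hx
  exact hnbA1 x hx

lemma hnbA2 : ∀ x : Fin 16, (s((2:Fin 16), x) = s(0, 2) ∨ s((2:Fin 16), x) = s(0, 3) ∨ s((2:Fin 16), x) = s(1, 2) ∨ s((2:Fin 16), x) = s(1, 3) ∨ s((2:Fin 16), x) = s(2, 3) ∨ s((2:Fin 16), x) = s(0, 4) ∨ s((2:Fin 16), x) = s(1, 4) ∨ s((2:Fin 16), x) = s(5, 7) ∨ s((2:Fin 16), x) = s(5, 8) ∨ s((2:Fin 16), x) = s(6, 7) ∨ s((2:Fin 16), x) = s(6, 8) ∨ s((2:Fin 16), x) = s(7, 8) ∨ s((2:Fin 16), x) = s(5, 9) ∨ s((2:Fin 16), x) = s(6, 9) ∨ s((2:Fin 16), x) = s(10, 12) ∨ s((2:Fin 16), x) = s(10, 13) ∨ s((2:Fin 16), x) = s(11, 12) ∨ s((2:Fin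 16), x) = s(11, 13) ∨ s((2:Fin 16), x) = s(12, 13) ∨ s((2:Fin 16), x) = s(10, 14) ∨ s((2:Fin 16), x) = s(11, 14) ∨ s((2:Fin 16), x) = s(4, 15) ∨ s((2:Fin 16), x) = s(9, 15) ∨ s((2:Fin 16), x) = s(14, 15)) → x = 0 ∨ x = 1 ∨ x = 3 := by decide

lemma hnb2 : ∀ x : Fin 16, s((2:Fin 16), x) ∈ Gstar.edgeSet → x = 0 ∨ x = 1 ∨ x = 3 := by
  intro x hx
  rw [mem_GE] at hx
  exact hnbA2 x hx

lemma hnbA3 : ∀ x : Fin 16, (s((3:Fin 16), x) = s(0, 2) ∨ s((3:Fin 16), x) = s(0, 3) ∨ s((3:Fin 16), x) = s(1, 2) ∨ s((3:Fin 16), x) = s(1, 3) ∨ s((3:Fin 16), x) = s(2, 3) ∨ s((3:Fin 16), x) = s(0, 4) ∨ s((3:Fin 16), x) = s(1, 4) ∨ s((3:Fin 16), x) = s(5, 7) ∨ s((3:Fin 16), x) = s(5, 8) ∨ s((3:Fin 16), x) = s(6, 7) ∨ s((3:Fin 16), x) = s(6, 8) ∨ s((3:Fin 16), x) = s(7, 8)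 ∨ s((3:Fin 16), x) = s(5, 9) ∨ s((3:Fin 16), x) = s(6, 9) ∨ s((3:Fin 16), x) = s(10, 12) ∨ s((3:Fin 16), x) = s(10, 13) ∨ s((3:Fin 16), x) = s(11, 12) ∨ s((3:Fin 16), x) = s(11, 13) ∨ s((3:Fin 16), x) = s(12, 13) ∨ s((3:Fin 16), x) = s(10, 14) ∨ s((3:Fin 16), x) = s(11, 14) ∨ s((3:Fin 16), x) = s(4, 15) ∨ s((3:Fin 16), x) = s(9, 15) ∨ s((3:Fin 16), x) = s(14, 15)) → x = 0 ∨ x = 1 ∨ x = 2 := by decide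

lemma hnb3 : ∀ x : Fin 16, s((3:Fin 16), x) ∈ Gstar.edgeSet → x = 0 ∨ x = 1 ∨ x = 2 := by
  intro x hx
  rw [mem_GE] at hx
  exact hnbA3 x hx

lemma hnbA4 : ∀ x : Fin 16, (s((4:Fin 16), x) = s(0, 2) ∨ s((4:Fin 16), x) = s(0, 3) ∨ s((4:Fin 16), x) = s(1, 2) ∨ s((4:Fin 16), x) = s(1, 3) ∨ s((4:Fin 16), x) = s(2, 3) ∨ s((4:Fin 16), x) = s(0, 4) ∨ s((4:Fin 16), x) = s(1, 4) ∨ s((4:Fin 16), x) = s(5, 7) ∨ s((4:Fin 16), x) = s(5, 8) ∨ s((4:Fin 16), x) = s(6, 7) ∨ s((4:Fin 16), x) = s(6, 8) ∨ s((4:Fin 16), x) = s(7, 8) ∨ s((4:Fin 16), x) = s(5, 9) ∨ s((4:Fin 16), x) = s(6, 9) ∨ s((4:Fin 16), x) = s(10, 12) ∨ s((4:Fin 16), x) = s(10, 13) ∨ s((4:Fin 16), x) = s(11, 12) ∨ s((4:Fin 16), x) = s(11, 13) ∨ s((4:Fin 16), x) = s(12, 13) ∨ s((4:Fin 16), x)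 = s(10, 14) ∨ s((4:Fin 16), x) = s(11, 14) ∨ s((4:Fin 16), x) = s(4, 15) ∨ s((4:Fin 16), x) = s(9, 15) ∨ s((4:Fin 16), x) = s(14, 15)) → x = 0 ∨ x = 1 ∨ x = 15 := by decide

lemma hnb4 : ∀ x : Fin 16, s((4:Fin 16), x) ∈ Gstar.edgeSet → x = 0 ∨ x = 1 ∨ x = 15 := by
  intro x hx
  rw [mem_GE] at hx
  exact hnbA4 x hx

lemma hnbA5 : ∀ x : Fin 16, (s((5:Fin 16), x) = s(0, 2) ∨ s((5:Fin 16), x) = s(0, 3) ∨ s((5:Fin 16), x) = s(1, 2) ∨ s((5:Fin 16), x) = s(1, 3) ∨ s((5:Fin 16), x) = s(2, 3) ∨ s((5:Fin 16), x) = s(0, 4) ∨ s((5:Fin 16), x) = s(1, 4) ∨ s((5:Fin 16), x) = s(5, 7) ∨ s((5:Fin 16), x) = s(5, 8) ∨ s((5:Fin 16), x) = s(6, 7) ∨ s((5:Fin 16), x) = s(6, 8) ∨ s((5:Fin 16), x) = s(7, 8) ∨ s((5:Fin 16), x) = s(5, 9) ∨ s((5:Fin 16), x) = s(6, 9) ∨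 s((5:Fin 16), x) = s(10, 12) ∨ s((5:Fin 16), x) = s(10, 13) ∨ s((5:Fin 16), x) = s(11, 12) ∨ s((5:Fin 16), x) = s(11, 13) ∨ s((5:Fin 16), x) = s(12, 13) ∨ s((5:Fin 16), x) = s(10, 14) ∨ s((5:Fin 16), x) = s(11, 14) ∨ s((5:Fin 16), x) = s(4, 15) ∨ s((5:Fin 16), x) = s(9, 15) ∨ s((5:Fin 16), x) = s(14, 15)) → x = 7 ∨ x = 8 ∨ x = 9 := by decide

lemma hnb5 : ∀ x : Fin 16, s((5:Fin 16), x) ∈ Gstar.edgeSet → x = 7 ∨ x = 8 ∨ x = 9 := by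
  intro x hx
  rw [mem_GE] at hx
  exact hnbA5 x hx

lemma hnbA6 : ∀ x : Fin 16, (s((6:Fin 16), x) = s(0, 2) ∨ s((6:Fin 16), x) = s(0, 3) ∨ s((6:Fin 16), x) = s(1, 2) ∨ s((6:Fin 16), x) = s(1, 3) ∨ s((6:Fin 16), x) = s(2, 3) ∨ s((6:Fin 16), x) = s(0, 4) ∨ s((6:Fin 16), x) = s(1, 4) ∨ s((6:Fin 16), x) = s(5, 7) ∨ s((6:Fin 16), x) = s(5, 8) ∨ s((6:Fin 16), x) = s(6, 7) ∨ s((6:Fin 16), x) = s(6, 8) ∨ s((6:Fin 16), x) = s(7, 8) ∨ s((6:Fin 16), x) = s(5, 9) ∨ s((6:Fin 16), x) = s(6, 9) ∨ s((6:Fin 16), x) = s(10, 12) ∨ s((6:Fin 16), x) = s(10, 13) ∨ s((6:Fin 16), x) = s(11, 12) ∨ s((6:Fin 16), x) = s(11, 13) ∨ s((6:Fin 16), x) = s(12, 13) ∨ s((6:Fin 16), x) = s(10, 14) ∨ s((6:Fin 16), x) = s(11, 14) ∨ s((6:Fin 16), x) = s(4, 15) ∨ s((6:Fin 16), x) = s(9,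 15) ∨ s((6:Fin 16), x) = s(14, 15)) → x = 7 ∨ x = 8 ∨ x = 9 := by decide

lemma hnb6 : ∀ x : Fin 16, s((6:Fin 16), x) ∈ Gstar.edgeSet → x = 7 ∨ x = 8 ∨ x = 9 := by
  intro x hx
  rw [mem_GE] at hx
  exact hnbA6 x hx

lemma hnbA7 : ∀ x : Fin 16, (s((7:Fin 16), x) = s(0, 2) ∨ s((7:Fin 16), x) = s(0, 3) ∨ s((7:Fin 16), x) = s(1, 2) ∨ s((7:Fin 16), x) = s(1, 3) ∨ s((7:Fin 16), x) = s(2, 3) ∨ s((7:Fin 16), x) = s(0, 4) ∨ s((7:Fin 16), x) = s(1, 4) ∨ s((7:Fin 16), x) = s(5, 7) ∨ s((7:Fin 16), x) = s(5, 8) ∨ s((7:Fin 16), x) = s(6, 7) ∨ s((7:Fin 16), x) = s(6, 8) ∨ s((7:Fin 16), x) = s(7, 8) ∨ s((7:Fin 16), x) = s(5, 9) ∨ s((7:Fin 16), x) = s(6, 9) ∨ s((7:Fin 16), x) = s(10, 12) ∨ s((7:Fin 16), x) = s(10, 13) ∨ s((7:Fin 16), x) = s(11, 12) ∨ s((7:Fin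 16), x) = s(11, 13) ∨ s((7:Fin 16), x) = s(12, 13) ∨ s((7:Fin 16), x) = s(10, 14) ∨ s((7:Fin 16), x) = s(11, 14) ∨ s((7:Fin 16), x) = s(4, 15) ∨ s((7:Fin 16), x) = s(9, 15) ∨ s((7:Fin 16), x) = s(14, 15)) → x = 5 ∨ x = 6 ∨ x = 8 := by decide

lemma hnb7 : ∀ x : Fin 16, s((7:Fin 16), x) ∈ Gstar.edgeSet → x = 5 ∨ x = 6 ∨ x = 8 := by
  intro x hx
  rw [mem_GE] at hx
  exact hnbA7 x hx

lemma hnbA8 : ∀ x : Fin 16, (s((8:Fin 16), x) = s(0, 2) ∨ s((8:Fin 16), x) = s(0, 3) ∨ s((8:Fin 16), x) = s(1, 2) ∨ s((8:Fin 16), x) = s(1, 3) ∨ s((8:Fin 16), x) = s(2, 3) ∨ s((8:Fin 16), x) = s(0, 4) ∨ s((8:Fin 16), x) = s(1, 4) ∨ s((8:Fin 16), x) = s(5, 7) ∨ s((8:Fin 16), x) = s(5, 8) ∨ s((8:Fin 16), x) = s(6, 7) ∨ s((8:Fin 16), x) = s(6, 8) ∨ s((8:Fin 16), x) = s(7, 8)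 ∨ s((8:Fin 16), x) = s(5, 9) ∨ s((8:Fin 16), x) = s(6, 9) ∨ s((8:Fin 16), x) = s(10, 12) ∨ s((8:Fin 16), x) = s(10, 13) ∨ s((8:Fin 16), x) = s(11, 12) ∨ s((8:Fin 16), x) = s(11, 13) ∨ s((8:Fin 16), x) = s(12, 13) ∨ s((8:Fin 16), x) = s(10, 14) ∨ s((8:Fin 16), x) = s(11, 14) ∨ s((8:Fin 16), x) = s(4, 15) ∨ s((8:Fin 16), x) = s(9, 15) ∨ s((8:Fin 16), x) = s(14, 15)) → x = 5 ∨ x = 6 ∨ x = 7 := by decide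

lemma hnb8 : ∀ x : Fin 16, s((8:Fin 16), x) ∈ Gstar.edgeSet → x = 5 ∨ x = 6 ∨ x = 7 := by
  intro x hx
  rw [mem_GE] at hx
  exact hnbA8 x hx

lemma hnbA9 : ∀ x : Fin 16, (s((9:Fin 16), x) = s(0, 2) ∨ s((9:Fin 16), x) = s(0, 3) ∨ s((9:Fin 16), x) = s(1, 2) ∨ s((9:Fin 16), x) = s(1, 3) ∨ s((9:Fin 16), x) = s(2, 3) ∨ s((9:Fin 16), x) = s(0, 4) ∨ s((9:Fin 16), x) = s(1, 4) ∨ s((9:Fin 16), x) = s(5, 7) ∨ s((9:Fin 16), x) = s(5, 8) ∨ s((9:Fin 16), x) = s(6, 7) ∨ s((9:Fin 16), x) = s(6, 8) ∨ s((9:Fin 16), x) = s(7, 8) ∨ s((9:Fin 16), x) = s(5, 9) ∨ s((9:Fin 16), x) = s(6, 9) ∨ s((9:Fin 16), x) = s(10, 12) ∨ s((9:Fin 16), x) = s(10, 13) ∨ s((9:Fin 16), x) = s(11, 12) ∨ s((9:Fin 16), x) = s(11, 13) ∨ s((9:Fin 16), x) = s(12, 13) ∨ s((9:Fin 16), x)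 = s(10, 14) ∨ s((9:Fin 16), x) = s(11, 14) ∨ s((9:Fin 16), x) = s(4, 15) ∨ s((9:Fin 16), x) = s(9, 15) ∨ s((9:Fin 16), x) = s(14, 15)) → x = 5 ∨ x = 6 ∨ x = 15 := by decide

lemma hnb9 : ∀ x : Fin 16, s((9:Fin 16), x) ∈ Gstar.edgeSet → x = 5 ∨ x = 6 ∨ x = 15 := by
  intro x hx
  rw [mem_GE] at hx
  exact hnbA9 x hx

lemma hnbA10 : ∀ x : Fin 16, (s((10:Fin 16), x) = s(0, 2) ∨ s((10:Fin 16), x) = s(0, 3) ∨ s((10:Fin 16), x) = s(1, 2) ∨ s((10:Fin 16), x) = s(1, 3) ∨ s((10:Fin 16), x) = s(2, 3) ∨ s((10:Fin 16), x) = s(0, 4) ∨ s((10:Fin 16), x) = s(1, 4) ∨ s((10:Fin 16), x) = s(5, 7) ∨ s((10:Fin 16), x) = s(5, 8) ∨ s((10:Fin 16), x) = s(6, 7) ∨ s((10:Fin 16), x) = s(6, 8) ∨ s((10:Fin 16), x) = s(7, 8) ∨ s((10:Fin 16), x) = s(5, 9) ∨ s((10:Fin 16), x) = s(6, 9) ∨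 s((10:Fin 16), x) = s(10, 12) ∨ s((10:Fin 16), x) = s(10, 13) ∨ s((10:Fin 16), x) = s(11, 12) ∨ s((10:Fin 16), x) = s(11, 13) ∨ s((10:Fin 16), x) = s(12, 13) ∨ s((10:Fin 16), x) = s(10, 14) ∨ s((10:Fin 16), x) = s(11, 14) ∨ s((10:Fin 16), x) = s(4, 15) ∨ s((10:Fin 16), x) = s(9, 15) ∨ s((10:Fin 16), x) = s(14, 15)) → x = 12 ∨ x = 13 ∨ x = 14 := by decide

lemma hnb10 : ∀ x : Fin 16, s((10:Fin 16), x) ∈ Gstar.edgeSet → x = 12 ∨ x = 13 ∨ x = 14 := by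
  intro x hx
  rw [mem_GE] at hx
  exact hnbA10 x hx

lemma hnbA11 : ∀ x : Fin 16, (s((11:Fin 16), x) = s(0, 2) ∨ s((11:Fin 16), x) = s(0, 3) ∨ s((11:Fin 16), x) = s(1, 2) ∨ s((11:Fin 16), x) = s(1, 3) ∨ s((11:Fin 16), x) = s(2, 3) ∨ s((11:Fin 16), x) = s(0, 4) ∨ s((11:Fin 16), x) = s(1, 4) ∨ s((11:Fin 16), x) = s(5, 7) ∨ s((11:Fin 16), x) = s(5, 8) ∨ s((11:Fin 16), x) = s(6, 7) ∨ s((11:Fin 16), x) = s(6, 8) ∨ s((11:Fin 16), x) = s(7, 8) ∨ s((11:Fin 16), x) = s(5, 9) ∨ s((11:Fin 16), x) = s(6, 9) ∨ s((11:Fin 16), x) = s(10, 12) ∨ s((11:Fin 16), x) = s(10, 13) ∨ s((11:Fin 16), x) = s(11, 12) ∨ s((11:Fin 16), x) = s(11, 13) ∨ s((11:Fin 16), x) = s(12, 13) ∨ s((11:Fin 16), x) = s(10, 14) ∨ s((11:Fin 16), x) = s(11, 14) ∨ s((11:Fin 16), x) = s(4, 15) ∨ s((11:Fin 16), x) = s(9,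 15) ∨ s((11:Fin 16), x) = s(14, 15)) → x = 12 ∨ x = 13 ∨ x = 14 := by decide

lemma hnb11 : ∀ x : Fin 16, s((11:Fin 16), x) ∈ Gstar.edgeSet → x = 12 ∨ x = 13 ∨ x = 14 := by
  intro x hx
  rw [mem_GE] at hx
  exact hnbA11 x hx

lemma hnbA12 : ∀ x : Fin 16, (s((12:Fin 16), x) = s(0, 2) ∨ s((12:Fin 16), x) = s(0, 3) ∨ s((12:Fin 16), x) = s(1, 2) ∨ s((12:Fin 16), x) = s(1, 3) ∨ s((12:Fin 16), x) = s(2, 3) ∨ s((12:Fin 16), x) = s(0, 4) ∨ s((12:Fin 16), x) = s(1, 4) ∨ s((12:Fin 16), x) = s(5, 7) ∨ s((12:Fin 16), x) = s(5, 8) ∨ s((12:Fin 16), x) = s(6, 7) ∨ s((12:Fin 16), x) = s(6, 8) ∨ s((12:Fin 16), x) = s(7, 8) ∨ s((12:Fin 16), x) = s(5, 9) ∨ s((12:Fin 16), x) = s(6, 9) ∨ s((12:Fin 16), x) = s(10, 12) ∨ s((12:Fin 16), x) = s(10, 13) ∨ s((12:Fin 16), x) = s(11, 12) ∨ s((12:Fin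 16), x) = s(11, 13) ∨ s((12:Fin 16), x) = s(12, 13) ∨ s((12:Fin 16), x) = s(10, 14) ∨ s((12:Fin 16), x) = s(11, 14) ∨ s((12:Fin 16), x) = s(4, 15) ∨ s((12:Fin 16), x) = s(9, 15) ∨ s((12:Fin 16), x) = s(14, 15)) → x = 10 ∨ x = 11 ∨ x = 13 := by decide

lemma hnb12 : ∀ x : Fin 16, s((12:Fin 16), x) ∈ Gstar.edgeSet → x = 10 ∨ x = 11 ∨ x = 13 := by
  intro x hx
  rw [mem_GE] at hx
  exact hnbA12 x hx

lemma hnbA13 : ∀ x : Fin 16, (s((13:Fin 16), x) = s(0, 2) ∨ s((13:Fin 16), x) = s(0, 3) ∨ s((13:Fin 16), x) = s(1, 2) ∨ s((13:Fin 16), x) = s(1, 3) ∨ s((13:Fin 16), x) = s(2, 3) ∨ s((13:Fin 16), x) = s(0, 4) ∨ s((13:Fin 16), x) = s(1, 4) ∨ s((13:Fin 16), x) = s(5, 7) ∨ s((13:Fin 16), x) = s(5, 8) ∨ s((13:Fin 16), x) = s(6, 7) ∨ s((13:Fin 16), x) = s(6, 8) ∨ s((13:Fin 16), x) = s(7, 8)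 ∨ s((13:Fin 16), x) = s(5, 9) ∨ s((13:Fin 16), x) = s(6, 9) ∨ s((13:Fin 16), x) = s(10, 12) ∨ s((13:Fin 16), x) = s(10, 13) ∨ s((13:Fin 16), x) = s(11, 12) ∨ s((13:Fin 16), x) = s(11, 13) ∨ s((13:Fin 16), x) = s(12, 13) ∨ s((13:Fin 16), x) = s(10, 14) ∨ s((13:Fin 16), x) = s(11, 14) ∨ s((13:Fin 16), x) = s(4, 15) ∨ s((13:Fin 16), x) = s(9, 15) ∨ s((13:Fin 16), x) = s(14, 15)) → x = 10 ∨ x = 11 ∨ x = 12 := by decide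

lemma hnb13 : ∀ x : Fin 16, s((13:Fin 16), x) ∈ Gstar.edgeSet → x = 10 ∨ x = 11 ∨ x = 12 := by
  intro x hx
  rw [mem_GE] at hx
  exact hnbA13 x hx

lemma hnbA14 : ∀ x : Fin 16, (s((14:Fin 16), x) = s(0, 2) ∨ s((14:Fin 16), x) = s(0, 3) ∨ s((14:Fin 16), x) = s(1, 2) ∨ s((14:Fin 16), x) = s(1, 3) ∨ s((14:Fin 16), x) = s(2, 3) ∨ s((14:Fin 16), x) = s(0, 4) ∨ s((14:Fin 16), x) = s(1, 4) ∨ s((14:Fin 16), x) = s(5, 7) ∨ s((14:Fin 16), x) = s(5, 8) ∨ s((14:Fin 16), x) = s(6, 7) ∨ s((14:Fin 16), x) = s(6, 8) ∨ s((14:Fin 16), x) = s(7, 8) ∨ s((14:Fin 16), x) = s(5, 9) ∨ s((14:Fin 16), x) = s(6, 9) ∨ s((14:Fin 16), x) = s(10, 12) ∨ s((14:Fin 16), x) = s(10, 13) ∨ s((14:Fin 16), x) = s(11, 12) ∨ s((14:Fin 16), x) = s(11, 13) ∨ s((14:Fin 16), x) = s(12, 13) ∨ s((14:Fin 16), x)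 = s(10, 14) ∨ s((14:Fin 16), x) = s(11, 14) ∨ s((14:Fin 16), x) = s(4, 15) ∨ s((14:Fin 16), x) = s(9, 15) ∨ s((14:Fin 16), x) = s(14, 15)) → x = 10 ∨ x = 11 ∨ x = 15 := by decide

lemma hnb14 : ∀ x : Fin 16, s((14:Fin 16), x) ∈ Gstar.edgeSet → x = 10 ∨ x = 11 ∨ x = 15 := by
  intro x hx
  rw [mem_GE] at hx
  exact hnbA14 x hx

lemma hnbA15 : ∀ x : Fin 16, (s((15:Fin 16), x) = s(0, 2) ∨ s((15:Fin 16), x) = s(0, 3) ∨ s((15:Fin 16), x) = s(1, 2) ∨ s((15:Fin 16), x) = s(1, 3) ∨ s((15:Fin 16), x) = s(2, 3) ∨ s((15:Fin 16), x) = s(0, 4) ∨ s((15:Fin 16), x) = s(1, 4) ∨ s((15:Fin 16), x) = s(5, 7) ∨ s((15:Fin 16), x) = s(5, 8) ∨ s((15:Fin 16), x) = s(6, 7) ∨ s((15:Fin 16), x) = s(6, 8) ∨ s((15:Fin 16), x) = s(7, 8) ∨ s((15:Fin 16), x) = s(5, 9) ∨ s((15:Fin 16), x) = s(6, 9) ∨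 s((15:Fin 16), x) = s(10, 12) ∨ s((15:Fin 16), x) = s(10, 13) ∨ s((15:Fin 16), x) = s(11, 12) ∨ s((15:Fin 16), x) = s(11, 13) ∨ s((15:Fin 16), x) = s(12, 13) ∨ s((15:Fin 16), x) = s(10, 14) ∨ s((15:Fin 16), x) = s(11, 14) ∨ s((15:Fin 16), x) = s(4, 15) ∨ s((15:Fin 16), x) = s(9, 15) ∨ s((15:Fin 16), x) = s(14, 15)) → x = 4 ∨ x = 9 ∨ x = 14 := by decide

lemma hnb15 : ∀ x : Fin 16, s((15:Fin 16), x) ∈ Gstar.edgeSet → x = 4 ∨ x = 9 ∨ x = 14 := by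
  intro x hx
  rw [mem_GE] at hx
  exact hnbA15 x hx

lemma mge_0_2 : s((0:Fin 16), 2) ∈ GE := (Or.inl (rfl))
lemma me_0_2 : s((0:Fin 16), 2) ∈ Gstar.edgeSet := by
  rw [Gstar_eq, SimpleGraph.edgeSet_fromEdgeSet]
  exact ⟨mge_0_2, by decide⟩
lemma mge_0_3 : s((0:Fin 16), 3) ∈ GE := Or.inr (Or.inl (rfl))
lemma me_0_3 : s((0:Fin 16), 3) ∈ Gstar.edgeSet := by
  rw [Gstar_eq, SimpleGraph.edgeSet_fromEdgeSet]
  exact ⟨mge_0_3, by decide⟩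
lemma mge_0_4 : s((0:Fin 16), 4) ∈ GE := Or.inr (Or.inr (Or.inr (Or.inr (Or.inr (Or.inl (rfl))))))
lemma me_0_4 : s((0:Fin 16), 4) ∈ Gstar.edgeSet := by
  rw [Gstar_eq, SimpleGraph.edgeSet_fromEdgeSet]
  exact ⟨mge_0_4, by decide⟩
lemma mge_1_2 : s((1:Fin 16), 2) ∈ GE := Or.inr (Or.inr (Or.inl (rfl)))
lemma me_1_2 : s((1:Fin 16), 2) ∈ Gstar.edgeSet := by
  rw [Gstar_eq, SimpleGraph.edgeSet_fromEdgeSet]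
  exact ⟨mge_1_2, by decide⟩
lemma mge_1_3 : s((1:Fin 16), 3) ∈ GE := Or.inr (Or.inr (Or.inr (Or.inl (rfl))))
lemma me_1_3 : s((1:Fin 16), 3) ∈ Gstar.edgeSet := by
  rw [Gstar_eq, SimpleGraph.edgeSet_fromEdgeSet]
  exact ⟨mge_1_3, by decide⟩
lemma mge_1_4 : s((1:Fin 16), 4) ∈ GE := Or.inr (Or.inr (Or.inr (Or.inr (Or.inr (Or.inr (Or.inl (rfl)))))))
lemma me_1_4 : s((1:Fin 16), 4) ∈ Gstar.edgeSet := by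
  rw [Gstar_eq, SimpleGraph.edgeSet_fromEdgeSet]
  exact ⟨mge_1_4, by decide⟩
lemma mge_2_0 : s((2:Fin 16), 0) ∈ GE := (Or.inl (Sym2.eq_swap))
lemma me_2_0 : s((2:Fin 16), 0) ∈ Gstar.edgeSet := by
  rw [Gstar_eq, SimpleGraph.edgeSet_fromEdgeSet]
  exact ⟨mge_2_0, by decide⟩
lemma mge_2_1 : s((2:Fin 16), 1) ∈ GE := Or.inr (Or.inr (Or.inl (Sym2.eq_swap)))
lemma me_2_1 : s((2:Fin 16), 1) ∈ Gstar.edgeSet := by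
  rw [Gstar_eq, SimpleGraph.edgeSet_fromEdgeSet]
  exact ⟨mge_2_1, by decide⟩
lemma mge_2_3 : s((2:Fin 16), 3) ∈ GE := Or.inr (Or.inr (Or.inr (Or.inr (Or.inl (rfl)))))
lemma me_2_3 : s((2:Fin 16), 3) ∈ Gstar.edgeSet := by
  rw [Gstar_eq, SimpleGraph.edgeSet_fromEdgeSet]
  exact ⟨mge_2_3, by decide⟩
lemma mge_3_0 : s((3:Fin 16), 0) ∈ GE := Or.inr (Or.inl (Sym2.eq_swap))
lemma me_3_0 : s((3:Fin 16), 0) ∈ Gstar.edgeSet := by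
  rw [Gstar_eq, SimpleGraph.edgeSet_fromEdgeSet]
  exact ⟨mge_3_0, by decide⟩
lemma mge_3_1 : s((3:Fin 16), 1) ∈ GE := Or.inr (Or.inr (Or.inr (Or.inl (Sym2.eq_swap))))
lemma me_3_1 : s((3:Fin 16), 1) ∈ Gstar.edgeSet := by
  rw [Gstar_eq, SimpleGraph.edgeSet_fromEdgeSet]
  exact ⟨mge_3_1, by decide⟩
lemma mge_3_2 : s((3:Fin 16), 2) ∈ GE := Or.inr (Or.inr (Or.inr (Or.inr (Or.inl (Sym2.eq_swap)))))
lemma me_3_2 : s((3:Fin 16), 2) ∈ Gstar.edgeSet := by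
  rw [Gstar_eq, SimpleGraph.edgeSet_fromEdgeSet]
  exact ⟨mge_3_2, by decide⟩
lemma mge_4_0 : s((4:Fin 16), 0) ∈ GE := Or.inr (Or.inr (Or.inr (Or.inr (Or.inr (Or.inl (Sym2.eq_swap))))))
lemma me_4_0 : s((4:Fin 16), 0) ∈ Gstar.edgeSet := by
  rw [Gstar_eq, SimpleGraph.edgeSet_fromEdgeSet]
  exact ⟨mge_4_0, by decide⟩
lemma mge_4_1 : s((4:Fin 16), 1) ∈ GE := Or.inr (Or.inr (Or.inr (Or.inr (Or.inr (Or.inr (Or.inl (Sym2.eq_swap)))))))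
lemma me_4_1 : s((4:Fin 16), 1) ∈ Gstar.edgeSet := by
  rw [Gstar_eq, SimpleGraph.edgeSet_fromEdgeSet]
  exact ⟨mge_4_1, by decide⟩
lemma mge_4_15 : s((4:Fin 16), 15) ∈ GE := Or.inr (Or.inr (Or.inr (Or.inr (Or.inr (Or.inr (Or.inr (Or.inr (Or.inr (Or.inr (Or.inr (Or.inr (Or.inr (Or.inr (Or.inr (Or.inr (Or.inr (Or.inr (Or.inr (Or.inr (Or.inr (Or.inl (rfl))))))))))))))))))))))
lemma me_4_15 : s((4:Fin 16), 15) ∈ Gstar.edgeSet := by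
  rw [Gstar_eq, SimpleGraph.edgeSet_fromEdgeSet]
  exact ⟨mge_4_15, by decide⟩
lemma mge_5_7 : s((5:Fin 16), 7) ∈ GE := Or.inr (Or.inr (Or.inr (Or.inr (Or.inr (Or.inr (Or.inr (Or.inl (rfl))))))))
lemma me_5_7 : s((5:Fin 16), 7) ∈ Gstar.edgeSet := by
  rw [Gstar_eq, SimpleGraph.edgeSet_fromEdgeSet]
  exact ⟨mge_5_7, by decide⟩
lemma mge_5_8 : s((5:Fin 16), 8) ∈ GE := Or.inr (Or.inr (Or.inr (Or.inr (Or.inr (Or.inr (Or.inr (Or.inr (Or.inl (rfl)))))))))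
lemma me_5_8 : s((5:Fin 16), 8) ∈ Gstar.edgeSet := by
  rw [Gstar_eq, SimpleGraph.edgeSet_fromEdgeSet]
  exact ⟨mge_5_8, by decide⟩
lemma mge_5_9 : s((5:Fin 16), 9) ∈ GE := Or.inr (Or.inr (Or.inr (Or.inr (Or.inr (Or.inr (Or.inr (Or.inr (Or.inr (Or.inr (Or.inr (Or.inr (Or.inl (rfl)))))))))))))
lemma me_5_9 : s((5:Fin 16), 9) ∈ Gstar.edgeSet := by
  rw [Gstar_eq, SimpleGraph.edgeSet_fromEdgeSet]
  exact ⟨mge_5_9, by decide⟩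
lemma mge_6_7 : s((6:Fin 16), 7) ∈ GE := Or.inr (Or.inr (Or.inr (Or.inr (Or.inr (Or.inr (Or.inr (Or.inr (Or.inr (Or.inl (rfl))))))))))
lemma me_6_7 : s((6:Fin 16), 7) ∈ Gstar.edgeSet := by
  rw [Gstar_eq, SimpleGraph.edgeSet_fromEdgeSet]
  exact ⟨mge_6_7, by decide⟩
lemma mge_6_8 : s((6:Fin 16), 8) ∈ GE := Or.inr (Or.inr (Or.inr (Or.inr (Or.inr (Or.inr (Or.inr (Or.inr (Or.inr (Or.inr (Or.inl (rfl)))))))))))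
lemma me_6_8 : s((6:Fin 16), 8) ∈ Gstar.edgeSet := by
  rw [Gstar_eq, SimpleGraph.edgeSet_fromEdgeSet]
  exact ⟨mge_6_8, by decide⟩
lemma mge_6_9 : s((6:Fin 16), 9) ∈ GE := Or.inr (Or.inr (Or.inr (Or.inr (Or.inr (Or.inr (Or.inr (Or.inr (Or.inr (Or.inr (Or.inr (Or.inr (Or.inr (Or.inl (rfl))))))))))))))
lemma me_6_9 : s((6:Fin 16), 9) ∈ Gstar.edgeSet := by
  rw [Gstar_eq, SimpleGraph.edgeSet_fromEdgeSet]
  exact ⟨mge_6_9, by decide⟩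
lemma mge_7_5 : s((7:Fin 16), 5) ∈ GE := Or.inr (Or.inr (Or.inr (Or.inr (Or.inr (Or.inr (Or.inr (Or.inl (Sym2.eq_swap))))))))
lemma me_7_5 : s((7:Fin 16), 5) ∈ Gstar.edgeSet := by
  rw [Gstar_eq, SimpleGraph.edgeSet_fromEdgeSet]
  exact ⟨mge_7_5, by decide⟩
lemma mge_7_6 : s((7:Fin 16), 6) ∈ GE := Or.inr (Or.inr (Or.inr (Or.inr (Or.inr (Or.inr (Or.inr (Or.inr (Or.inr (Or.inl (Sym2.eq_swap))))))))))
lemma me_7_6 : s((7:Fin 16), 6) ∈ Gstar.edgeSet := by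
  rw [Gstar_eq, SimpleGraph.edgeSet_fromEdgeSet]
  exact ⟨mge_7_6, by decide⟩
lemma mge_7_8 : s((7:Fin 16), 8) ∈ GE := Or.inr (Or.inr (Or.inr (Or.inr (Or.inr (Or.inr (Or.inr (Or.inr (Or.inr (Or.inr (Or.inr (Or.inl (rfl))))))))))))
lemma me_7_8 : s((7:Fin 16), 8) ∈ Gstar.edgeSet := by
  rw [Gstar_eq, SimpleGraph.edgeSet_fromEdgeSet]
  exact ⟨mge_7_8, by decide⟩
lemma mge_8_5 : s((8:Fin 16), 5) ∈ GE := Or.inr (Or.inr (Or.inr (Or.inr (Or.inr (Or.inr (Or.inr (Or.inr (Or.inl (Sym2.eq_swap)))))))))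
lemma me_8_5 : s((8:Fin 16), 5) ∈ Gstar.edgeSet := by
  rw [Gstar_eq, SimpleGraph.edgeSet_fromEdgeSet]
  exact ⟨mge_8_5, by decide⟩
lemma mge_8_6 : s((8:Fin 16), 6) ∈ GE := Or.inr (Or.inr (Or.inr (Or.inr (Or.inr (Or.inr (Or.inr (Or.inr (Or.inr (Or.inr (Or.inl (Sym2.eq_swap)))))))))))
lemma me_8_6 : s((8:Fin 16), 6) ∈ Gstar.edgeSet := by
  rw [Gstar_eq, SimpleGraph.edgeSet_fromEdgeSet]
  exact ⟨mge_8_6, by decide⟩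
lemma mge_8_7 : s((8:Fin 16), 7) ∈ GE := Or.inr (Or.inr (Or.inr (Or.inr (Or.inr (Or.inr (Or.inr (Or.inr (Or.inr (Or.inr (Or.inr (Or.inl (Sym2.eq_swap))))))))))))
lemma me_8_7 : s((8:Fin 16), 7) ∈ Gstar.edgeSet := by
  rw [Gstar_eq, SimpleGraph.edgeSet_fromEdgeSet]
  exact ⟨mge_8_7, by decide⟩
lemma mge_9_5 : s((9:Fin 16), 5) ∈ GE := Or.inr (Or.inr (Or.inr (Or.inr (Or.inr (Or.inr (Or.inr (Or.inr (Or.inr (Or.inr (Or.inr (Or.inr (Or.inl (Sym2.eq_swap)))))))))))))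
lemma me_9_5 : s((9:Fin 16), 5) ∈ Gstar.edgeSet := by
  rw [Gstar_eq, SimpleGraph.edgeSet_fromEdgeSet]
  exact ⟨mge_9_5, by decide⟩
lemma mge_9_6 : s((9:Fin 16), 6) ∈ GE := Or.inr (Or.inr (Or.inr (Or.inr (Or.inr (Or.inr (Or.inr (Or.inr (Or.inr (Or.inr (Or.inr (Or.inr (Or.inr (Or.inl (Sym2.eq_swap))))))))))))))
lemma me_9_6 : s((9:Fin 16), 6) ∈ Gstar.edgeSet := by
  rw [Gstar_eq, SimpleGraph.edgeSet_fromEdgeSet]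
  exact ⟨mge_9_6, by decide⟩
lemma mge_9_15 : s((9:Fin 16), 15) ∈ GE := Or.inr (Or.inr (Or.inr (Or.inr (Or.inr (Or.inr (Or.inr (Or.inr (Or.inr (Or.inr (Or.inr (Or.inr (Or.inr (Or.inr (Or.inr (Or.inr (Or.inr (Or.inr (Or.inr (Or.inr (Or.inr (Or.inr (Or.inl (rfl)))))))))))))))))))))))
lemma me_9_15 : s((9:Fin 16), 15) ∈ Gstar.edgeSet := by
  rw [Gstar_eq, SimpleGraph.edgeSet_fromEdgeSet]
  exact ⟨mge_9_15, by decide⟩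
lemma mge_10_12 : s((10:Fin 16), 12) ∈ GE := Or.inr (Or.inr (Or.inr (Or.inr (Or.inr (Or.inr (Or.inr (Or.inr (Or.inr (Or.inr (Or.inr (Or.inr (Or.inr (Or.inr (Or.inl (rfl)))))))))))))))
lemma me_10_12 : s((10:Fin 16), 12) ∈ Gstar.edgeSet := by
  rw [Gstar_eq, SimpleGraph.edgeSet_fromEdgeSet]
  exact ⟨mge_10_12, by decide⟩
lemma mge_10_13 : s((10:Fin 16), 13) ∈ GE := Or.inr (Or.inr (Or.inr (Or.inr (Or.inr (Or.inr (Or.inr (Or.inr (Or.inr (Or.inr (Or.inr (Or.inr (Or.inr (Or.inr (Or.inr (Or.inl (rfl))))))))))))))))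
lemma me_10_13 : s((10:Fin 16), 13) ∈ Gstar.edgeSet := by
  rw [Gstar_eq, SimpleGraph.edgeSet_fromEdgeSet]
  exact ⟨mge_10_13, by decide⟩
lemma mge_10_14 : s((10:Fin 16), 14) ∈ GE := Or.inr (Or.inr (Or.inr (Or.inr (Or.inr (Or.inr (Or.inr (Or.inr (Or.inr (Or.inr (Or.inr (Or.inr (Or.inr (Or.inr (Or.inr (Or.inr (Or.inr (Or.inr (Or.inr (Or.inl (rfl))))))))))))))))))))
lemma me_10_14 : s((10:Fin 16), 14) ∈ Gstar.edgeSet := by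
  rw [Gstar_eq, SimpleGraph.edgeSet_fromEdgeSet]
  exact ⟨mge_10_14, by decide⟩
lemma mge_11_12 : s((11:Fin 16), 12) ∈ GE := Or.inr (Or.inr (Or.inr (Or.inr (Or.inr (Or.inr (Or.inr (Or.inr (Or.inr (Or.inr (Or.inr (Or.inr (Or.inr (Or.inr (Or.inr (Or.inr (Or.inl (rfl)))))))))))))))))
lemma me_11_12 : s((11:Fin 16), 12) ∈ Gstar.edgeSet := by
  rw [Gstar_eq, SimpleGraph.edgeSet_fromEdgeSet]
  exact ⟨mge_11_12, by decide⟩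
lemma mge_11_13 : s((11:Fin 16), 13) ∈ GE := Or.inr (Or.inr (Or.inr (Or.inr (Or.inr (Or.inr (Or.inr (Or.inr (Or.inr (Or.inr (Or.inr (Or.inr (Or.inr (Or.inr (Or.inr (Or.inr (Or.inr (Or.inl (rfl))))))))))))))))))
lemma me_11_13 : s((11:Fin 16), 13) ∈ Gstar.edgeSet := by
  rw [Gstar_eq, SimpleGraph.edgeSet_fromEdgeSet]
  exact ⟨mge_11_13, by decide⟩
lemma mge_11_14 : s((11:Fin 16), 14) ∈ GE := Or.inr (Or.inr (Or.inr (Or.inr (Or.inr (Or.inr (Or.inr (Or.inr (Or.inr (Or.inr (Or.inr (Or.inr (Or.inr (Or.inr (Or.inr (Or.inr (Or.inr (Or.inr (Or.inr (Or.inr (Or.inl (rfl)))))))))))))))))))))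
lemma me_11_14 : s((11:Fin 16), 14) ∈ Gstar.edgeSet := by
  rw [Gstar_eq, SimpleGraph.edgeSet_fromEdgeSet]
  exact ⟨mge_11_14, by decide⟩
lemma mge_12_10 : s((12:Fin 16), 10) ∈ GE := Or.inr (Or.inr (Or.inr (Or.inr (Or.inr (Or.inr (Or.inr (Or.inr (Or.inr (Or.inr (Or.inr (Or.inr (Or.inr (Or.inr (Or.inl (Sym2.eq_swap)))))))))))))))
lemma me_12_10 : s((12:Fin 16), 10) ∈ Gstar.edgeSet := by
  rw [Gstar_eq, SimpleGraph.edgeSet_fromEdgeSet]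
  exact ⟨mge_12_10, by decide⟩
lemma mge_12_11 : s((12:Fin 16), 11) ∈ GE := Or.inr (Or.inr (Or.inr (Or.inr (Or.inr (Or.inr (Or.inr (Or.inr (Or.inr (Or.inr (Or.inr (Or.inr (Or.inr (Or.inr (Or.inr (Or.inr (Or.inl (Sym2.eq_swap)))))))))))))))))
lemma me_12_11 : s((12:Fin 16), 11) ∈ Gstar.edgeSet := by
  rw [Gstar_eq, SimpleGraph.edgeSet_fromEdgeSet]
  exact ⟨mge_12_11, by decide⟩
lemma mge_12_13 : s((12:Fin 16), 13) ∈ GE := Or.inr (Or.inr (Or.inr (Or.inr (Or.inr (Or.inr (Or.inr (Or.inr (Or.inr (Or.inr (Or.inr (Or.inr (Or.inr (Or.inr (Or.inr (Or.inr (Or.inr (Or.inr (Or.inl (rfl)))))))))))))))))))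
lemma me_12_13 : s((12:Fin 16), 13) ∈ Gstar.edgeSet := by
  rw [Gstar_eq, SimpleGraph.edgeSet_fromEdgeSet]
  exact ⟨mge_12_13, by decide⟩
lemma mge_13_10 : s((13:Fin 16), 10) ∈ GE := Or.inr (Or.inr (Or.inr (Or.inr (Or.inr (Or.inr (Or.inr (Or.inr (Or.inr (Or.inr (Or.inr (Or.inr (Or.inr (Or.inr (Or.inr (Or.inl (Sym2.eq_swap))))))))))))))))
lemma me_13_10 : s((13:Fin 16), 10) ∈ Gstar.edgeSet := by
  rw [Gstar_eq, SimpleGraph.edgeSet_fromEdgeSet]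
  exact ⟨mge_13_10, by decide⟩
lemma mge_13_11 : s((13:Fin 16), 11) ∈ GE := Or.inr (Or.inr (Or.inr (Or.inr (Or.inr (Or.inr (Or.inr (Or.inr (Or.inr (Or.inr (Or.inr (Or.inr (Or.inr (Or.inr (Or.inr (Or.inr (Or.inr (Or.inl (Sym2.eq_swap))))))))))))))))))
lemma me_13_11 : s((13:Fin 16), 11) ∈ Gstar.edgeSet := by
  rw [Gstar_eq, SimpleGraph.edgeSet_fromEdgeSet]
  exact ⟨mge_13_11, by decide⟩
lemma mge_13_12 : s((13:Fin 16), 12) ∈ GE := Or.inr (Or.inr (Or.inr (Or.inr (Or.inr (Or.inr (Or.inr (Or.inr (Or.inr (Or.inr (Or.inr (Or.inr (Or.inr (Or.inr (Or.inr (Or.inr (Or.inr (Or.inr (Or.inl (Sym2.eq_swap)))))))))))))))))))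
lemma me_13_12 : s((13:Fin 16), 12) ∈ Gstar.edgeSet := by
  rw [Gstar_eq, SimpleGraph.edgeSet_fromEdgeSet]
  exact ⟨mge_13_12, by decide⟩
lemma mge_14_10 : s((14:Fin 16), 10) ∈ GE := Or.inr (Or.inr (Or.inr (Or.inr (Or.inr (Or.inr (Or.inr (Or.inr (Or.inr (Or.inr (Or.inr (Or.inr (Or.inr (Or.inr (Or.inr (Or.inr (Or.inr (Or.inr (Or.inr (Or.inl (Sym2.eq_swap))))))))))))))))))))
lemma me_14_10 : s((14:Fin 16), 10) ∈ Gstar.edgeSet := by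
  rw [Gstar_eq, SimpleGraph.edgeSet_fromEdgeSet]
  exact ⟨mge_14_10, by decide⟩
lemma mge_14_11 : s((14:Fin 16), 11) ∈ GE := Or.inr (Or.inr (Or.inr (Or.inr (Or.inr (Or.inr (Or.inr (Or.inr (Or.inr (Or.inr (Or.inr (Or.inr (Or.inr (Or.inr (Or.inr (Or.inr (Or.inr (Or.inr (Or.inr (Or.inr (Or.inl (Sym2.eq_swap)))))))))))))))))))))
lemma me_14_11 : s((14:Fin 16), 11) ∈ Gstar.edgeSet := by
  rw [Gstar_eq, SimpleGraph.edgeSet_fromEdgeSet]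
  exact ⟨mge_14_11, by decide⟩
lemma mge_14_15 : s((14:Fin 16), 15) ∈ GE := Or.inr (Or.inr (Or.inr (Or.inr (Or.inr (Or.inr (Or.inr (Or.inr (Or.inr (Or.inr (Or.inr (Or.inr (Or.inr (Or.inr (Or.inr (Or.inr (Or.inr (Or.inr (Or.inr (Or.inr (Or.inr (Or.inr (Or.inr (rfl)))))))))))))))))))))))
lemma me_14_15 : s((14:Fin 16), 15) ∈ Gstar.edgeSet := by
  rw [Gstar_eq, SimpleGraph.edgeSet_fromEdgeSet]
  exact ⟨mge_14_15, by decide⟩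
lemma mge_15_4 : s((15:Fin 16), 4) ∈ GE := Or.inr (Or.inr (Or.inr (Or.inr (Or.inr (Or.inr (Or.inr (Or.inr (Or.inr (Or.inr (Or.inr (Or.inr (Or.inr (Or.inr (Or.inr (Or.inr (Or.inr (Or.inr (Or.inr (Or.inr (Or.inr (Or.inl (Sym2.eq_swap))))))))))))))))))))))
lemma me_15_4 : s((15:Fin 16), 4) ∈ Gstar.edgeSet := by
  rw [Gstar_eq, SimpleGraph.edgeSet_fromEdgeSet]
  exact ⟨mge_15_4, by decide⟩
lemma mge_15_9 : s((15:Fin 16), 9) ∈ GE := Or.inr (Or.inr (Or.inr (Or.inr (Or.inr (Or.inr (Or.inr (Or.inr (Or.inr (Or.inr (Or.inr (Or.inr (Or.inr (Or.inr (Or.inr (Or.inr (Or.inr (Or.inr (Or.inr (Or.inr (Or.inr (Or.inr (Or.inl (Sym2.eq_swap)))))))))))))))))))))))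
lemma me_15_9 : s((15:Fin 16), 9) ∈ Gstar.edgeSet := by
  rw [Gstar_eq, SimpleGraph.edgeSet_fromEdgeSet]
  exact ⟨mge_15_9, by decide⟩
lemma mge_15_14 : s((15:Fin 16), 14) ∈ GE := Or.inr (Or.inr (Or.inr (Or.inr (Or.inr (Or.inr (Or.inr (Or.inr (Or.inr (Or.inr (Or.inr (Or.inr (Or.inr (Or.inr (Or.inr (Or.inr (Or.inr (Or.inr (Or.inr (Or.inr (Or.inr (Or.inr (Or.inr (Sym2.eq_swap)))))))))))))))))))))))
lemma me_15_14 : s((15:Fin 16), 14) ∈ Gstar.edgeSet := by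
  rw [Gstar_eq, SimpleGraph.edgeSet_fromEdgeSet]
  exact ⟨mge_15_14, by decide⟩
lemma Gstar_regular : ∀ v, edeg Gstar v = 3 := by
  have h0 : edeg Gstar (0 : Fin 16) = 3 := by
    rw [Gstar_eq, edeg_eq3 GE 0 2 3 4 (by decide) (by decide) (by decide) (by decide) (by decide) (by decide)
      (fun x hx => hnbA0 x hx), if_pos mge_0_2, if_pos mge_0_3, if_pos mge_0_4]
  have h1 : edeg Gstar (1 : Fin 16) = 3 := by
    rw [Gstar_eq, edeg_eq3 GE 1 2 3 4 (by decide) (by decide) (by decide) (by decide) (by decide) (by decide)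
      (fun x hx => hnbA1 x hx), if_pos mge_1_2, if_pos mge_1_3, if_pos mge_1_4]
  have h2 : edeg Gstar (2 : Fin 16) = 3 := by
    rw [Gstar_eq, edeg_eq3 GE 2 0 1 3 (by decide) (by decide) (by decide) (by decide) (by decide) (by decide)
      (fun x hx => hnbA2 x hx), if_pos mge_2_0, if_pos mge_2_1, if_pos mge_2_3]
  have h3 : edeg Gstar (3 : Fin 16) = 3 := by
    rw [Gstar_eq, edeg_eq3 GE 3 0 1 2 (by decide) (by decide) (by decide) (by decide) (by decide) (by decide)
      (fun x hx => hnbA3 x hx), if_pos mge_3_0, if_pos mge_3_1, if_pos mge_3_2]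
  have h4 : edeg Gstar (4 : Fin 16) = 3 := by
    rw [Gstar_eq, edeg_eq3 GE 4 0 1 15 (by decide) (by decide) (by decide) (by decide) (by decide) (by decide)
      (fun x hx => hnbA4 x hx), if_pos mge_4_0, if_pos mge_4_1, if_pos mge_4_15]
  have h5 : edeg Gstar (5 : Fin 16) = 3 := by
    rw [Gstar_eq, edeg_eq3 GE 5 7 8 9 (by decide) (by decide) (by decide) (by decide) (by decide) (by decide)
      (fun x hx => hnbA5 x hx), if_pos mge_5_7, if_pos mge_5_8, if_pos mge_5_9]
  have h6 : edeg Gstar (6 : Fin 16) = 3 := by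
    rw [Gstar_eq, edeg_eq3 GE 6 7 8 9 (by decide) (by decide) (by decide) (by decide) (by decide) (by decide)
      (fun x hx => hnbA6 x hx), if_pos mge_6_7, if_pos mge_6_8, if_pos mge_6_9]
  have h7 : edeg Gstar (7 : Fin 16) = 3 := by
    rw [Gstar_eq, edeg_eq3 GE 7 5 6 8 (by decide) (by decide) (by decide) (by decide) (by decide) (by decide)
      (fun x hx => hnbA7 x hx), if_pos mge_7_5, if_pos mge_7_6, if_pos mge_7_8]
  have h8 : edeg Gstar (8 : Fin 16) = 3 := by
    rw [Gstar_eq, edeg_eq3 GE 8 5 6 7 (by decide) (by decide) (by decide) (by decide) (by decide) (by decide)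
      (fun x hx => hnbA8 x hx), if_pos mge_8_5, if_pos mge_8_6, if_pos mge_8_7]
  have h9 : edeg Gstar (9 : Fin 16) = 3 := by
    rw [Gstar_eq, edeg_eq3 GE 9 5 6 15 (by decide) (by decide) (by decide) (by decide) (by decide) (by decide)
      (fun x hx => hnbA9 x hx), if_pos mge_9_5, if_pos mge_9_6, if_pos mge_9_15]
  have h10 : edeg Gstar (10 : Fin 16) = 3 := by
    rw [Gstar_eq, edeg_eq3 GE 10 12 13 14 (by decide) (by decide) (by decide) (by decide) (by decide) (by decide)
      (fun x hx => hnbA10 x hx), if_pos mge_10_12, if_pos mge_10_13, if_pos mge_10_14]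
  have h11 : edeg Gstar (11 : Fin 16) = 3 := by
    rw [Gstar_eq, edeg_eq3 GE 11 12 13 14 (by decide) (by decide) (by decide) (by decide) (by decide) (by decide)
      (fun x hx => hnbA11 x hx), if_pos mge_11_12, if_pos mge_11_13, if_pos mge_11_14]
  have h12 : edeg Gstar (12 : Fin 16) = 3 := by
    rw [Gstar_eq, edeg_eq3 GE 12 10 11 13 (by decide) (by decide) (by decide) (by decide) (by decide) (by decide)
      (fun x hx => hnbA12 x hx), if_pos mge_12_10, if_pos mge_12_11, if_pos mge_12_13]
  have h13 : edeg Gstar (13 : Fin 16) = 3 := by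
    rw [Gstar_eq, edeg_eq3 GE 13 10 11 12 (by decide) (by decide) (by decide) (by decide) (by decide) (by decide)
      (fun x hx => hnbA13 x hx), if_pos mge_13_10, if_pos mge_13_11, if_pos mge_13_12]
  have h14 : edeg Gstar (14 : Fin 16) = 3 := by
    rw [Gstar_eq, edeg_eq3 GE 14 10 11 15 (by decide) (by decide) (by decide) (by decide) (by decide) (by decide)
      (fun x hx => hnbA14 x hx), if_pos mge_14_10, if_pos mge_14_11, if_pos mge_14_15]
  have h15 : edeg Gstar (15 : Fin 16) = 3 := by
    rw [Gstar_eq, edeg_eq3 GE 15 4 9 14 (by decide) (by decide) (by decide) (by decide) (by decide) (by decide)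
      (fun x hx => hnbA15 x hx), if_pos mge_15_4, if_pos mge_15_9, if_pos mge_15_14]
  intro v
  fin_cases v
  · exact h0
  · exact h1
  · exact h2
  · exact h3
  · exact h4
  · exact h5
  · exact h6
  · exact h7
  · exact h8
  · exact h9
  · exact h10
  · exact h11
  · exact h12
  · exact h13
  · exact h14
  · exact h15

lemma vertex_facts (E₁ E₂ E₃ : Set (Sym2 (Fin 16)))
    (hU : E₁ ∪ E₂ ∪ E₃ = Gstar.edgeSet)
    (hM : IsMatchingSet E₁)
    (hC2 : ∀ v ∈ (SimpleGraph.fromEdgeSet E₂).support, edeg (SimpleGraph.fromEdgeSet E₂) v = 2)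
    (hS13 : ∀ v ∈ (SimpleGraph.fromEdgeSet E₃).support,
      edeg (SimpleGraph.fromEdgeSet E₃) v = 1 ∨ edeg (SimpleGraph.fromEdgeSet E₃) v = 3)
    (hSc : ∀ v ∈ (SimpleGraph.fromEdgeSet E₃).support, edeg (SimpleGraph.fromEdgeSet E₃) v = 3 →
      ({u | u ∈ (SimpleGraph.fromEdgeSet E₃).neighborSet v ∧ edeg (SimpleGraph.fromEdgeSet E₃) u = 3}).ncard = 1)
    (ℓ : Sym2 (Fin 16) → ℕ)
    (hl0 : ∀ e ∈ Gstar.edgeSet, (ℓ e = 0 ↔ e ∈ E₁))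
    (hl1 : ∀ e ∈ Gstar.edgeSet, (ℓ e = 1 ↔ e ∈ E₂))
    (hl2 : ∀ e ∈ Gstar.edgeSet, (ℓ e = 2 ↔ e ∈ E₃))
    (v u1 u2 u3 : Fin 16)
    (hv1 : v ≠ u1) (hv2 : v ≠ u2) (hv3 : v ≠ u3)
    (h12 : u1 ≠ u2) (h13 : u1 ≠ u3) (h23 : u2 ≠ u3)
    (hnb : ∀ x, s(v,x) ∈ Gstar.edgeSet → x = u1 ∨ x = u2 ∨ x = u3)
    (hm1 : s(v,u1) ∈ Gstar.edgeSet) (hm2 : s(v,u2) ∈ Gstar.edgeSet) (hm3 : s(v,u3) ∈ Gstar.edgeSet) :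
    dcnt (ℓ s(v,u1)) (ℓ s(v,u2)) (ℓ s(v,u3)) 0 ≤ 1 ∧
    (dcnt (ℓ s(v,u1)) (ℓ s(v,u2)) (ℓ s(v,u3)) 1 = 0 ∨ dcnt (ℓ s(v,u1)) (ℓ s(v,u2)) (ℓ s(v,u3)) 1 = 2) ∧
    edeg (SimpleGraph.fromEdgeSet E₃) v = dcnt (ℓ s(v,u1)) (ℓ s(v,u2)) (ℓ s(v,u3)) 2 ∧
    (dcnt (ℓ s(v,u1)) (ℓ s(v,u2)) (ℓ s(v,u3)) 2 = 0 ∨ dcnt (ℓ s(v,u1)) (ℓ s(v,u2)) (ℓ s(v,u3)) 2 = 1 ∨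
      dcnt (ℓ s(v,u1)) (ℓ s(v,u2)) (ℓ s(v,u3)) 2 = 3) ∧
    (dcnt (ℓ s(v,u1)) (ℓ s(v,u2)) (ℓ s(v,u3)) 2 = 3 →
      ExactlyOne (ℓ s(v,u1) = 2 ∧ edeg (SimpleGraph.fromEdgeSet E₃) u1 = 3)
        (ℓ s(v,u2) = 2 ∧ edeg (SimpleGraph.fromEdgeSet E₃) u2 = 3)
        (ℓ s(v,u3) = 2 ∧ edeg (SimpleGraph.fromEdgeSet E₃) u3 = 3)) := by
  have hsub3 : E₃ ⊆ Gstar.edgeSet := by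
    intro x hx; rw [← hU]; exact Or.inr hx
  have hsub2 : E₂ ⊆ Gstar.edgeSet := by
    intro x hx; rw [← hU]; exact Or.inl (Or.inr hx)
  have a1 := hl2 _ hm1
  have a2 := hl2 _ hm2
  have a3 := hl2 _ hm3
  have b1 := hl1 _ hm1
  have b2 := hl1 _ hm2
  have b3 := hl1 _ hm3
  have c1 := hl0 _ hm1
  have c2 := hl0 _ hm2
  have c3 := hl0 _ hm3
  have hd3 : edeg (SimpleGraph.fromEdgeSet E₃) v = dcnt (ℓ s(v,u1)) (ℓ s(v,u2)) (ℓ s(v,u3)) 2 := by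
    rw [edeg_eq3 E₃ v u1 u2 u3 hv1 hv2 hv3 h12 h13 h23 (fun x hx => hnb x (hsub3 hx))]
    by_cases m1 : s(v,u1) ∈ E₃ <;> by_cases m2 : s(v,u2) ∈ E₃ <;> by_cases m3 : s(v,u3) ∈ E₃ <;>
      simp [dcnt, a1, a2, a3, m1, m2, m3]
  have hd2 : edeg (SimpleGraph.fromEdgeSet E₂) v = dcnt (ℓ s(v,u1)) (ℓ s(v,u2)) (ℓ s(v,u3)) 1 := by
    rw [edeg_eq3 E₂ v u1 u2 u3 hv1 hv2 hv3 h12 h13 h23 (fun x hx => hnb x (hsub2 hx))]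
    by_cases m1 : s(v,u1) ∈ E₂ <;> by_cases m2 : s(v,u2) ∈ E₂ <;> by_cases m3 : s(v,u3) ∈ E₂ <;>
      simp [dcnt, b1, b2, b3, m1, m2, m3]
  have ne12 : s(v,u1) ≠ s(v,u2) := by
    intro h
    rw [Sym2.eq_iff] at h
    rcases h with ⟨-, h⟩ | ⟨h, -⟩
    · exact h12 h
    · exact hv2 h
  have ne13 : s(v,u1) ≠ s(v,u3) := by
    intro h
    rw [Sym2.eq_iff] at h
    rcases h with ⟨-, h⟩ | ⟨h, -⟩
    · exact h13 h
    · exact hv3 h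
  have ne23 : s(v,u2) ≠ s(v,u3) := by
    intro h
    rw [Sym2.eq_iff] at h
    rcases h with ⟨-, h⟩ | ⟨h, -⟩
    · exact h23 h
    · exact hv3 h
  have hinc12 : EdgeIncident s(v,u1) s(v,u2) := ⟨v, Sym2.mem_mk_left v u1, Sym2.mem_mk_left v u2⟩
  have hinc13 : EdgeIncident s(v,u1) s(v,u3) := ⟨v, Sym2.mem_mk_left v u1, Sym2.mem_mk_left v u3⟩
  have hinc23 : EdgeIncident s(v,u2) s(v,u3) := ⟨v, Sym2.mem_mk_left v u2, Sym2.mem_mk_left v u3⟩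
  refine ⟨?_, ?_, hd3, ?_, ?_⟩
  · -- matching bound
    by_cases z1 : ℓ s(v,u1) = 0 <;> by_cases z2 : ℓ s(v,u2) = 0 <;> by_cases z3 : ℓ s(v,u3) = 0
    · exact absurd hinc12 (hM _ (c1.mp z1) _ (c2.mp z2) ne12)
    · exact absurd hinc12 (hM _ (c1.mp z1) _ (c2.mp z2) ne12)
    · exact absurd hinc13 (hM _ (c1.mp z1) _ (c3.mp z3) ne13)
    · simp [dcnt, z1, z2, z3]
    · exact absurd hinc23 (hM _ (c2.mp z2) _ (c3.mp z3) ne23)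
    · simp [dcnt, z1, z2, z3]
    · simp [dcnt, z1, z2, z3]
    · simp [dcnt, z1, z2, z3]
  · -- cycle degrees
    have hsup : (ℓ s(v,u1) = 1 ∨ ℓ s(v,u2) = 1 ∨ ℓ s(v,u3) = 1) →
        dcnt (ℓ s(v,u1)) (ℓ s(v,u2)) (ℓ s(v,u3)) 1 = 2 := by
      intro h
      rw [← hd2]
      apply hC2
      rcases h with h | h | h
      · exact ⟨u1, (SimpleGraph.fromEdgeSet_adj _).mpr ⟨b1.mp h, hv1⟩⟩
      · exact ⟨u2, (SimpleGraph.fromEdgeSet_adj _).mpr ⟨b2.mp h, hv2⟩⟩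
      · exact ⟨u3, (SimpleGraph.fromEdgeSet_adj _).mpr ⟨b3.mp h, hv3⟩⟩
    by_cases o1 : ℓ s(v,u1) = 1
    · exact Or.inr (hsup (Or.inl o1))
    by_cases o2 : ℓ s(v,u2) = 1
    · exact Or.inr (hsup (Or.inr (Or.inl o2)))
    by_cases o3 : ℓ s(v,u3) = 1
    · exact Or.inr (hsup (Or.inr (Or.inr o3)))
    · left; simp [dcnt, o1, o2, o3]
  · -- star degrees
    have hsup : (ℓ s(v,u1) = 2 ∨ ℓ s(v,u2) = 2 ∨ ℓ s(v,u3) = 2) →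
        (dcnt (ℓ s(v,u1)) (ℓ s(v,u2)) (ℓ s(v,u3)) 2 = 1 ∨ dcnt (ℓ s(v,u1)) (ℓ s(v,u2)) (ℓ s(v,u3)) 2 = 3) := by
      intro h
      rw [← hd3]
      apply hS13
      rcases h with h | h | h
      · exact ⟨u1, (SimpleGraph.fromEdgeSet_adj _).mpr ⟨a1.mp h, hv1⟩⟩
      · exact ⟨u2, (SimpleGraph.fromEdgeSet_adj _).mpr ⟨a2.mp h, hv2⟩⟩
      · exact ⟨u3, (SimpleGraph.fromEdgeSet_adj _).mpr ⟨a3.mp h, hv3⟩⟩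
    by_cases o1 : ℓ s(v,u1) = 2
    · rcases hsup (Or.inl o1) with h | h
      · exact Or.inr (Or.inl h)
      · exact Or.inr (Or.inr h)
    by_cases o2 : ℓ s(v,u2) = 2
    · rcases hsup (Or.inr (Or.inl o2)) with h | h
      · exact Or.inr (Or.inl h)
      · exact Or.inr (Or.inr h)
    by_cases o3 : ℓ s(v,u3) = 2
    · rcases hsup (Or.inr (Or.inr o3)) with h | h
      · exact Or.inr (Or.inl h)
      · exact Or.inr (Or.inr h)
    · left; simp [dcnt, o1, o2, o3]
  · -- S1
    intro h3
    have t123 : ℓ s(v,u1) = 2 ∧ ℓ s(v,u2) = 2 ∧ ℓ s(v,u3) = 2 := by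
      by_cases t1 : ℓ s(v,u1) = 2 <;> by_cases t2 : ℓ s(v,u2) = 2 <;> by_cases t3 : ℓ s(v,u3) = 2 <;>
        simp [dcnt, t1, t2, t3] at h3 <;> exact ⟨t1, t2, t3⟩
    obtain ⟨t1, t2, t3⟩ := t123
    have w1 : s(v,u1) ∈ E₃ := a1.mp t1
    have w2 : s(v,u2) ∈ E₃ := a2.mp t2
    have w3 : s(v,u3) ∈ E₃ := a3.mp t3
    have hsupv : v ∈ (SimpleGraph.fromEdgeSet E₃).support :=
      ⟨u1, (SimpleGraph.fromEdgeSet_adj _).mpr ⟨w1, hv1⟩⟩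
    have hstar := hSc v hsupv (hd3.trans h3)
    rw [star_eq3 E₃ v u1 u2 u3 hv1 hv2 hv3 h12 h13 h23 (fun x hx => hnb x (hsub3 hx))] at hstar
    by_cases q1 : edeg (SimpleGraph.fromEdgeSet E₃) u1 = 3 <;>
      by_cases q2 : edeg (SimpleGraph.fromEdgeSet E₃) u2 = 3 <;>
      by_cases q3 : edeg (SimpleGraph.fromEdgeSet E₃) u3 = 3 <;>
      simp [w1, w2, w3, q1, q2, q3] at hstar <;>
      simp [ExactlyOne, t1, t2, t3, q1, q2, q3]

lemma copySet (E₁ E₂ E₃ : Set (Sym2 (Fin 16)))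
    (hU : E₁ ∪ E₂ ∪ E₃ = Gstar.edgeSet)
    (hM : IsMatchingSet E₁)
    (hC2 : ∀ v ∈ (SimpleGraph.fromEdgeSet E₂).support, edeg (SimpleGraph.fromEdgeSet E₂) v = 2)
    (hS13 : ∀ v ∈ (SimpleGraph.fromEdgeSet E₃).support,
      edeg (SimpleGraph.fromEdgeSet E₃) v = 1 ∨ edeg (SimpleGraph.fromEdgeSet E₃) v = 3)
    (hSc : ∀ v ∈ (SimpleGraph.fromEdgeSet E₃).support, edeg (SimpleGraph.fromEdgeSet E₃) v = 3 →
      ({u | u ∈ (SimpleGraph.fromEdgeSet E₃).neighborSet v ∧ edeg (SimpleGraph.fromEdgeSet E₃) u = 3}).ncard = 1)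
    (ℓ : Sym2 (Fin 16) → ℕ)
    (hl0 : ∀ e ∈ Gstar.edgeSet, (ℓ e = 0 ↔ e ∈ E₁))
    (hl1 : ∀ e ∈ Gstar.edgeSet, (ℓ e = 1 ↔ e ∈ E₂))
    (hl2 : ∀ e ∈ Gstar.edgeSet, (ℓ e = 2 ↔ e ∈ E₃))
    (hl3 : ∀ e, ℓ e < 3)
    (a b c d s w : Fin 16)
    (nab : a ≠ b) (nac : a ≠ c) (nad : a ≠ d) (nas : a ≠ s) (naw : a ≠ w)
    (nbc : b ≠ c) (nbd : b ≠ d) (nbs : b ≠ s) (nbw : b ≠ w)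
    (ncd : c ≠ d) (ncs : c ≠ s) (nds : d ≠ s) (nsw : s ≠ w)
    (hnba : ∀ x, s(a,x) ∈ Gstar.edgeSet → x = c ∨ x = d ∨ x = s)
    (hnbb : ∀ x, s(b,x) ∈ Gstar.edgeSet → x = c ∨ x = d ∨ x = s)
    (hnbc : ∀ x, s(c,x) ∈ Gstar.edgeSet → x = a ∨ x = b ∨ x = d)
    (hnbd : ∀ x, s(d,x) ∈ Gstar.edgeSet → x = a ∨ x = b ∨ x = c)
    (hnbs : ∀ x, s(s,x) ∈ Gstar.edgeSet → x = a ∨ x = b ∨ x = w)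
    (hmac : s(a,c) ∈ Gstar.edgeSet) (hmad : s(a,d) ∈ Gstar.edgeSet) (hmas : s(a,s) ∈ Gstar.edgeSet)
    (hmbc : s(b,c) ∈ Gstar.edgeSet) (hmbd : s(b,d) ∈ Gstar.edgeSet) (hmbs : s(b,s) ∈ Gstar.edgeSet)
    (hmcd : s(c,d) ∈ Gstar.edgeSet) (hmsw : s(s,w) ∈ Gstar.edgeSet)
    (xb : Bool) (hxw : edeg (SimpleGraph.fromEdgeSet E₃) w = 3 ↔ xb = true) :
    (s(a,d) ∈ E₂ ∧ s(c,d) ∈ E₂ ∧ s(b,c) ∈ E₂ ∧ s(b,s) ∈ E₂ ∧ s(a,s) ∈ E₂) ∨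
    (s(a,c) ∈ E₂ ∧ s(c,d) ∈ E₂ ∧ s(b,d) ∈ E₂ ∧ s(b,s) ∈ E₂ ∧ s(a,s) ∈ E₂) ∨
    (s(s,w) ∈ E₃ ∧ edeg (SimpleGraph.fromEdgeSet E₃) s = 3) := by
  have mca : s(c,a) ∈ Gstar.edgeSet := by rw [show s(c,a) = s(a,c) from Sym2.eq_swap]; exact hmac
  have mcb : s(c,b) ∈ Gstar.edgeSet := by rw [show s(c,b) = s(b,c) from Sym2.eq_swap]; exact hmbc
  have mda : s(d,a) ∈ Gstar.edgeSet := by rw [show s(d,a) = s(a,d) from Sym2.eq_swap]; exact hmad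
  have mdb : s(d,b) ∈ Gstar.edgeSet := by rw [show s(d,b) = s(b,d) from Sym2.eq_swap]; exact hmbd
  have mdc : s(d,c) ∈ Gstar.edgeSet := by rw [show s(d,c) = s(c,d) from Sym2.eq_swap]; exact hmcd
  have msa : s(s,a) ∈ Gstar.edgeSet := by rw [show s(s,a) = s(a,s) from Sym2.eq_swap]; exact hmas
  have msb : s(s,b) ∈ Gstar.edgeSet := by rw [show s(s,b) = s(b,s) from Sym2.eq_swap]; exact hmbs
  have Fa := vertex_facts E₁ E₂ E₃ hU hM hC2 hS13 hSc ℓ hl0 hl1 hl2 a c d s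
    nac nad nas ncd ncs nds hnba hmac hmad hmas
  have Fb := vertex_facts E₁ E₂ E₃ hU hM hC2 hS13 hSc ℓ hl0 hl1 hl2 b c d s
    nbc nbd nbs ncd ncs nds hnbb hmbc hmbd hmbs
  have Fc := vertex_facts E₁ E₂ E₃ hU hM hC2 hS13 hSc ℓ hl0 hl1 hl2 c a b d
    (Ne.symm nac) (Ne.symm nbc) ncd nab nad nbd hnbc mca mcb hmcd
  have Fd := vertex_facts E₁ E₂ E₃ hU hM hC2 hS13 hSc ℓ hl0 hl1 hl2 d a b c
    (Ne.symm nad) (Ne.symm nbd) (Ne.symm ncd) nab nac nbc hnbd mda mdb mdc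
  have Fs := vertex_facts E₁ E₂ E₃ hU hM hC2 hS13 hSc ℓ hl0 hl1 hl2 s a b w
    (Ne.symm nas) (Ne.symm nbs) nsw nab naw nbw hnbs msa msb hmsw
  rw [show s(c,a) = s(a,c) from Sym2.eq_swap, show s(c,b) = s(b,c) from Sym2.eq_swap] at Fc
  rw [show s(d,a) = s(a,d) from Sym2.eq_swap, show s(d,b) = s(b,d) from Sym2.eq_swap,
      show s(d,c) = s(c,d) from Sym2.eq_swap] at Fd
  rw [show s(s,a) = s(a,s) from Sym2.eq_swap, show s(s,b) = s(b,s) from Sym2.eq_swap] at Fs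
  obtain ⟨Fa1, Fa2, Fa3, Fa4, Fa5⟩ := Fa
  obtain ⟨Fb1, Fb2, Fb3, Fb4, Fb5⟩ := Fb
  obtain ⟨Fc1, Fc2, Fc3, Fc4, Fc5⟩ := Fc
  obtain ⟨Fd1, Fd2, Fd3, Fd4, Fd5⟩ := Fd
  obtain ⟨Fs1, Fs2, Fs3, Fs4, Fs5⟩ := Fs
  rw [Fc3, Fd3, Fs3] at Fa5
  rw [Fc3, Fd3, Fs3] at Fb5
  rw [Fa3, Fb3, Fd3] at Fc5
  rw [Fa3, Fb3, Fc3] at Fd5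
  rw [Fa3, Fb3, hxw] at Fs5
  have R := copyArith (ℓ s(a,c)) (ℓ s(a,d)) (ℓ s(b,c)) (ℓ s(b,d)) (ℓ s(c,d)) (ℓ s(a,s)) (ℓ s(b,s))
    (ℓ s(s,w)) xb (hl3 _) (hl3 _) (hl3 _) (hl3 _) (hl3 _) (hl3 _) (hl3 _) (hl3 _)
  unfold copyPred at R
  rcases R Fa1 Fa2 Fa4 Fa5 Fb1 Fb2 Fb4 Fb5 Fc1 Fc2 Fc4 Fc5 Fd1 Fd2 Fd4 Fd5 Fs1 Fs2 Fs4 Fs5 with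
    ⟨r1, r2, r3, r4, r5⟩ | ⟨r1, r2, r3, r4, r5⟩ | ⟨r1, r2⟩
  · exact Or.inl ⟨(hl1 _ hmad).mp r1, (hl1 _ hmcd).mp r2, (hl1 _ hmbc).mp r3,
      (hl1 _ hmbs).mp r4, (hl1 _ hmas).mp r5⟩
  · exact Or.inr (Or.inl ⟨(hl1 _ hmac).mp r1, (hl1 _ hmcd).mp r2, (hl1 _ hmbd).mp r3,
      (hl1 _ hmbs).mp r4, (hl1 _ hmas).mp r5⟩)
  · exact Or.inr (Or.inr ⟨(hl2 _ hmsw).mp r1, Fs3.trans r2⟩)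

end Aux

open Classical in
/-- `G*` is 3-regular and has no MED decomposition. -/
theorem stmt13 :
    (∀ v, edeg Gstar v = 3) ∧
    ¬ ∃ E₁ E₂ E₃, IsMEDDecomposition Gstar E₁ E₂ E₃ := by
  refine ⟨Gstar_regular, ?_⟩
  rintro ⟨E₁, E₂, E₃, hU, d12, d13, d23, hM, hC, hS⟩
  obtain ⟨hC2, hCev⟩ := hC
  obtain ⟨hS13, hSc, -, -⟩ := hS
  classical
  set ℓ : Sym2 (Fin 16) → ℕ := fun e => if e ∈ E₁ then 0 else if e ∈ E₂ then 1 else 2 with hldef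
  have hl3 : ∀ e, ℓ e < 3 := by
    intro e; by_cases h1 : e ∈ E₁ <;> by_cases h2 : e ∈ E₂ <;> simp [hldef, h1, h2]
  have hl0 : ∀ e ∈ Gstar.edgeSet, (ℓ e = 0 ↔ e ∈ E₁) := by
    intro e _; constructor
    · intro h; by_contra h1; by_cases h2 : e ∈ E₂ <;> simp [hldef, h1, h2] at h
    · intro h1; simp [hldef, h1]
  have hl1 : ∀ e ∈ Gstar.edgeSet, (ℓ e = 1 ↔ e ∈ E₂) := by
    intro e _; constructor
    · intro h
      by_cases h1 : e ∈ E₁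
      · simp [hldef, h1] at h
      · by_contra h2; simp [hldef, h1, h2] at h
    · intro h2
      have h1 : e ∉ E₁ := fun h1 => (Set.disjoint_left.mp d12) h1 h2
      simp [hldef, h1, h2]
  have hl2 : ∀ e ∈ Gstar.edgeSet, (ℓ e = 2 ↔ e ∈ E₃) := by
    intro e he; constructor
    · intro h
      by_cases h1 : e ∈ E₁
      · simp [hldef, h1] at h
      by_cases h2 : e ∈ E₂
      · simp [hldef, h1, h2] at h
      · rw [← hU] at he
        rcases he with (h1' | h2') | h3
        · exact absurd h1' h1
        · exact absurd h2' h2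
        · exact h3
    · intro h3
      have h1 : e ∉ E₁ := fun h1 => (Set.disjoint_left.mp d13) h1 h3
      have h2 : e ∉ E₂ := fun h2 => (Set.disjoint_left.mp d23) h2 h3
      simp [hldef, h1, h2]
  have hsub3 : E₃ ⊆ Gstar.edgeSet := by
    intro x hx; rw [← hU]; exact Or.inr hx
  set xb : Bool := decide (edeg (SimpleGraph.fromEdgeSet E₃) (15 : Fin 16) = 3) with hxbdef
  have hxw : edeg (SimpleGraph.fromEdgeSet E₃) (15 : Fin 16) = 3 ↔ xb = true := by
    rw [hxbdef]; exact (Bool.decide_iff _).symm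
  have hadj : ∀ x y : Fin 16, x ≠ y → s(x,y) ∈ E₂ → (SimpleGraph.fromEdgeSet E₂).Adj x y :=
    fun x y hne hm => (SimpleGraph.fromEdgeSet_adj _).mpr ⟨hm, hne⟩
  have K1 := copySet E₁ E₂ E₃ hU hM hC2 hS13 hSc ℓ hl0 hl1 hl2 hl3 0 1 2 3 4 15
    (by decide) (by decide) (by decide) (by decide) (by decide) (by decide) (by decide)
    (by decide) (by decide) (by decide) (by decide) (by decide) (by decide)
    hnb0 hnb1 hnb2 hnb3 hnb4 me_0_2 me_0_3 me_0_4 me_1_2 me_1_3 me_1_4 me_2_3 me_4_15 xb hxw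
  have K2 := copySet E₁ E₂ E₃ hU hM hC2 hS13 hSc ℓ hl0 hl1 hl2 hl3 5 6 7 8 9 15
    (by decide) (by decide) (by decide) (by decide) (by decide) (by decide) (by decide)
    (by decide) (by decide) (by decide) (by decide) (by decide) (by decide)
    hnb5 hnb6 hnb7 hnb8 hnb9 me_5_7 me_5_8 me_5_9 me_6_7 me_6_8 me_6_9 me_7_8 me_9_15 xb hxw
  have K3 := copySet E₁ E₂ E₃ hU hM hC2 hS13 hSc ℓ hl0 hl1 hl2 hl3 10 11 12 13 14 15
    (by decide) (by decide) (by decide) (by decide) (by decide) (by decide) (by decide)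
    (by decide) (by decide) (by decide) (by decide) (by decide) (by decide)
    hnb10 hnb11 hnb12 hnb13 hnb14 me_10_12 me_10_13 me_10_14 me_11_12 me_11_13 me_11_14
    me_12_13 me_14_15 xb hxw
  rcases K1 with ⟨r1, r2, r3, r4, r5⟩ | ⟨r1, r2, r3, r4, r5⟩ | Ka
  ·   exact odd5 (SimpleGraph.fromEdgeSet E₂) 0 3 2 1 4 (by decide) (by decide) (by decide) (by decide) (by decide) (by decide) (by decide) (by decide) (by decide) (by decide) (hadj 0 3 (by decide) r1) (hadj 3 2 (by decide) (by rw [show s((3:Fin 16),2) = s((2:Fin 16),3) from Sym2.eq_swap]; exact r2)) (hadj 2 1 (by decide) (by rw [show s((2:Fin 16),1) = s((1:Fin 16),2) from Sym2.eq_swap]; exact r3)) (hadj 1 4 (by decide) r4) (hadj 4 0 (by decide) (by rw [show s((4:Fin 16),0) = s((0:Fin 16),4) from Sym2.eq_swap]; exact r5)) hC2 hCev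
  ·   exact odd5 (SimpleGraph.fromEdgeSet E₂) 0 2 3 1 4 (by decide) (by decide) (by decide) (by decide) (by decide) (by decide) (by decide) (by decide) (by decide) (by decide) (hadj 0 2 (by decide) r1) (hadj 2 3 (by decide) r2) (hadj 3 1 (by decide) (by rw [show s((3:Fin 16),1) = s((1:Fin 16),3) from Sym2.eq_swap]; exact r3)) (hadj 1 4 (by decide) r4) (hadj 4 0 (by decide) (by rw [show s((4:Fin 16),0) = s((0:Fin 16),4) from Sym2.eq_swap]; exact r5)) hC2 hCev
  rcases K2 with ⟨r1, r2, r3, r4, r5⟩ | ⟨r1, r2, r3, r4, r5⟩ | Kb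
  ·   exact odd5 (SimpleGraph.fromEdgeSet E₂) 5 8 7 6 9 (by decide) (by decide) (by decide) (by decide) (by decide) (by decide) (by decide) (by decide) (by decide) (by decide) (hadj 5 8 (by decide) r1) (hadj 8 7 (by decide) (by rw [show s((8:Fin 16),7) = s((7:Fin 16),8) from Sym2.eq_swap]; exact r2)) (hadj 7 6 (by decide) (by rw [show s((7:Fin 16),6) = s((6:Fin 16),7) from Sym2.eq_swap]; exact r3)) (hadj 6 9 (by decide) r4) (hadj 9 5 (by decide) (by rw [show s((9:Fin 16),5) = s((5:Fin 16),9) from Sym2.eq_swap]; exact r5)) hC2 hCev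
  ·   exact odd5 (SimpleGraph.fromEdgeSet E₂) 5 7 8 6 9 (by decide) (by decide) (by decide) (by decide) (by decide) (by decide) (by decide) (by decide) (by decide) (by decide) (hadj 5 7 (by decide) r1) (hadj 7 8 (by decide) r2) (hadj 8 6 (by decide) (by rw [show s((8:Fin 16),6) = s((6:Fin 16),8) from Sym2.eq_swap]; exact r3)) (hadj 6 9 (by decide) r4) (hadj 9 5 (by decide) (by rw [show s((9:Fin 16),5) = s((5:Fin 16),9) from Sym2.eq_swap]; exact r5)) hC2 hCev
  rcases K3 with ⟨r1, r2, r3, r4, r5⟩ | ⟨r1, r2, r3, r4, r5⟩ | Kc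
  ·   exact odd5 (SimpleGraph.fromEdgeSet E₂) 10 13 12 11 14 (by decide) (by decide) (by decide) (by decide) (by decide) (by decide) (by decide) (by decide) (by decide) (by decide) (hadj 10 13 (by decide) r1) (hadj 13 12 (by decide) (by rw [show s((13:Fin 16),12) = s((12:Fin 16),13) from Sym2.eq_swap]; exact r2)) (hadj 12 11 (by decide) (by rw [show s((12:Fin 16),11) = s((11:Fin 16),12) from Sym2.eq_swap]; exact r3)) (hadj 11 14 (by decide) r4) (hadj 14 10 (by decide) (by rw [show s((14:Fin 16),10) = s((10:Fin 16),14) from Sym2.eq_swap]; exact r5)) hC2 hCev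
  ·   exact odd5 (SimpleGraph.fromEdgeSet E₂) 10 12 13 11 14 (by decide) (by decide) (by decide) (by decide) (by decide) (by decide) (by decide) (by decide) (by decide) (by decide) (hadj 10 12 (by decide) r1) (hadj 12 13 (by decide) r2) (hadj 13 11 (by decide) (by rw [show s((13:Fin 16),11) = s((11:Fin 16),13) from Sym2.eq_swap]; exact r3)) (hadj 11 14 (by decide) r4) (hadj 14 10 (by decide) (by rw [show s((14:Fin 16),10) = s((10:Fin 16),14) from Sym2.eq_swap]; exact r5)) hC2 hCev
  have m154 : s((15:Fin 16), 4) ∈ E₃ := by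
    rw [show s((15:Fin 16), 4) = s((4:Fin 16), 15) from Sym2.eq_swap]; exact Ka.1
  have m159 : s((15:Fin 16), 9) ∈ E₃ := by
    rw [show s((15:Fin 16), 9) = s((9:Fin 16), 15) from Sym2.eq_swap]; exact Kb.1
  have m1514 : s((15:Fin 16), 14) ∈ E₃ := by
    rw [show s((15:Fin 16), 14) = s((14:Fin 16), 15) from Sym2.eq_swap]; exact Kc.1
  have hsup15 : (15 : Fin 16) ∈ (SimpleGraph.fromEdgeSet E₃).support :=
    ⟨4, (SimpleGraph.fromEdgeSet_adj _).mpr ⟨m154, by decide⟩⟩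
  have hdeg15 : edeg (SimpleGraph.fromEdgeSet E₃) 15 = 3 := by
    rw [edeg_eq3 E₃ 15 4 9 14 (by decide) (by decide) (by decide) (by decide) (by decide) (by decide)
      (fun x hx => hnb15 x (hsub3 hx)), if_pos m154, if_pos m159, if_pos m1514]
  have hstar := hSc 15 hsup15 hdeg15
  rw [star_eq3 E₃ 15 4 9 14 (by decide) (by decide) (by decide) (by decide) (by decide) (by decide)
      (fun x hx => hnb15 x (hsub3 hx)), if_pos ⟨m154, Ka.2⟩, if_pos ⟨m159, Kb.2⟩,
      if_pos ⟨m1514, Kc.2⟩] at hstar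
  exact absurd hstar (by decide)
end

section
/- Let $G$ be a 3-regular graph on $n$ vertices with girth at least 5 that contains a cycle of length $n-2$ whose two omitted vertices are adjacent. Then $G$ is $(7,2)$-edge-choosable, assuming the theorem that every 3-regular graph with a MED decomposition is $(7,2)$-edge-choosable. -/
open SimpleGraph Walk

section Aux

variable {V : Type} {G : SimpleGraph V} {w : V}

lemma cycle_exists_edge {p : G.Walk w w} (hp : p.IsCycle) {x : V} (hx : x ∈ p.support) :
    ∃ y, s(x, y) ∈ p.edges := by
  classical
  have hq := hp.rotate hx
  have hnn : ¬ (p.rotate x hx).Nil := fun h => hq.not_nil h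
  obtain ⟨y, h, q, hq'⟩ := Walk.not_nil_iff.mp hnn
  refine ⟨y, ?_⟩
  have : s(x, y) ∈ (p.rotate x hx).edges := by rw [hq']; simp
  exact ((p.rotate_edges x hx).perm.mem_iff).mp this

lemma cycle_support_card [DecidableEq V] {p : G.Walk w w} (hp : p.IsCycle) :
    p.support.toFinset.card = p.length := by
  have hnn : ¬ p.Nil := hp.not_nil
  have htail : p.support.tail.Nodup := hp.support_nodup
  obtain ⟨y, h, q, hq'⟩ := Walk.not_nil_iff.mp hnn
  subst hq'
  rw [support_cons] at htail ⊢
  simp only [List.tail_cons] at htail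
  rw [List.toFinset_cons, Finset.insert_eq_self.mpr (by simp [q.end_mem_support]),
    List.toFinset_card_of_nodup htail]
  simp [q.length_support]

lemma cycle_filter_card [DecidableEq V] {p : G.Walk w w} (hp : p.IsCycle) {x : V}
    (hx : x ∈ p.support) :
    (p.edges.toFinset.filter (fun e => x ∈ e)).card = 2 := by
  set s := p.support.toFinset with hs
  set t := p.edges.toFinset with ht
  have htcard : t.card = p.length := by
    rw [ht, List.toFinset_card_of_nodup hp.isTrail.edges_nodup, p.length_edges]
  have hscard : s.card = p.length := cycle_support_card hp
  set c : V → ℕ := fun y => (t.filter (fun e => y ∈ e)).card with hc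
  have heven : ∀ y, Even (c y) := by
    intro y
    have := (hp.isTrail.even_countP_edges_iff y).mpr (fun h => absurd rfl h)
    rw [List.countP_eq_length_filter, ← List.toFinset_card_of_nodup
      (hp.isTrail.edges_nodup.filter _), List.toFinset_filter] at this
    simpa [hc, ht] using this
  have hpos : ∀ y ∈ s, 1 ≤ c y := by
    intro y hy
    obtain ⟨z, hz⟩ := cycle_exists_edge hp (by simpa [hs] using hy)
    refine Finset.card_pos.mpr ⟨s(y, z), ?_⟩
    simp [ht, hz]
  have h2le : ∀ y ∈ s, 2 ≤ c y := by
    intro y hy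
    obtain ⟨k, hk⟩ := heven y
    have := hpos y hy
    omega
  have hsum : ∑ y ∈ s, c y = 2 * p.length := by
    have h1 : ∀ e ∈ t, (s.filter (fun y => y ∈ e)).card = 2 := by
      intro e he
      have heE : e ∈ p.edges := by simpa [ht] using he
      induction e using Sym2.inductionOn with
      | hf a b =>
        have hab : a ≠ b := (p.adj_of_mem_edges heE).ne
        have ha : a ∈ s := by simp [hs, p.fst_mem_support_of_mem_edges heE]
        have hb : b ∈ s := by simp [hs, p.snd_mem_support_of_mem_edges heE]
        have : s.filter (fun y => y ∈ s(a, b)) = {a, b} := by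
          ext y
          simp only [Finset.mem_filter, Sym2.mem_iff, Finset.mem_insert, Finset.mem_singleton]
          constructor
          · rintro ⟨_, h | h⟩ <;> simp [h]
          · rintro (h | h) <;> subst h <;> simp [ha, hb]
        rw [this, Finset.card_insert_of_notMem (by simpa using hab), Finset.card_singleton]
    calc ∑ y ∈ s, c y = ∑ y ∈ s, ∑ e ∈ t, if y ∈ e then 1 else 0 := by
          simp only [hc, Finset.card_filter]
      _ = ∑ e ∈ t, ∑ y ∈ s, if y ∈ e then 1 else 0 := Finset.sum_comm
      _ = ∑ e ∈ t, (s.filter (fun y => y ∈ e)).card := by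
          simp only [Finset.card_filter]
      _ = ∑ e ∈ t, 2 := Finset.sum_congr rfl h1
      _ = 2 * p.length := by rw [Finset.sum_const, htcard]; ring
  by_contra hne
  have hxs : x ∈ s := by simpa [hs] using hx
  have hgt : 2 < c x := by
    have := h2le x hxs
    rcases lt_or_eq_of_le this with h | h
    · exact h
    · exact absurd h.symm hne
  have : ∑ y ∈ s, (2 : ℕ) < ∑ y ∈ s, c y :=
    Finset.sum_lt_sum h2le ⟨x, hxs, hgt⟩
  rw [Finset.sum_const, smul_eq_mul, hscard, hsum] at this
  omega

lemma fromEdges_adj (p : G.Walk w w) {x y : V} :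
    (SimpleGraph.fromEdgeSet {e | e ∈ p.edges}).Adj x y ↔ s(x, y) ∈ p.edges := by
  rw [SimpleGraph.fromEdgeSet_adj]
  exact ⟨fun h => h.1, fun h => ⟨h, (p.adj_of_mem_edges h).ne⟩⟩

lemma cycle_fromEdges_spanningCoe (p : G.Walk w w) :
    SimpleGraph.fromEdgeSet {e | e ∈ p.edges} = p.toSubgraph.spanningCoe := by
  ext x y
  rw [fromEdges_adj, Subgraph.spanningCoe_adj, ← Subgraph.mem_edgeSet, p.edgeSet_toSubgraph]
  rfl

lemma cycle_fromEdges_support (p : G.Walk w w) (hp : p.IsCycle) :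
    (SimpleGraph.fromEdgeSet {e | e ∈ p.edges}).support = {y | y ∈ p.support} := by
  ext x
  constructor
  · rintro ⟨y, hy⟩
    exact p.fst_mem_support_of_mem_edges ((fromEdges_adj p).mp hy)
  · intro hx
    obtain ⟨y, hy⟩ := cycle_exists_edge hp hx
    exact ⟨y, (fromEdges_adj p).mpr hy⟩

lemma cycle_fromEdges_supp (p : G.Walk w w) (hp : p.IsCycle) {x : V} (hx : x ∈ p.support) :
    ((SimpleGraph.fromEdgeSet {e | e ∈ p.edges}).connectedComponentMk x).supp
      = {y | y ∈ p.support} := by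
  ext y
  rw [ConnectedComponent.mem_supp_iff, ConnectedComponent.eq]
  constructor
  · intro hr
    obtain ⟨q⟩ := hr
    cases q with
    | nil => exact hx
    | cons h q => exact p.fst_mem_support_of_mem_edges ((fromEdges_adj p).mp h)
  · intro hy
    have hcoe := cycle_fromEdges_spanningCoe p
    have hconn := p.toSubgraph_connected
    have hyv : y ∈ p.toSubgraph.verts := (p.mem_verts_toSubgraph).mpr hy
    have hxv : x ∈ p.toSubgraph.verts := (p.mem_verts_toSubgraph).mpr hx
    have hreach : p.toSubgraph.coe.Reachable ⟨y, hyv⟩ ⟨x, hxv⟩ := hconn.preconnected _ _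
    rw [hcoe]
    exact Reachable.map ⟨Subtype.val, fun h => h⟩ hreach

lemma cycle_fromEdges_ncard [DecidableEq V] {p : G.Walk w w} (hp : p.IsCycle) {x : V}
    (hx : x ∈ p.support) :
    ((SimpleGraph.fromEdgeSet {e | e ∈ p.edges}).neighborSet x).ncard = 2 := by
  set N := (SimpleGraph.fromEdgeSet {e | e ∈ p.edges}).neighborSet x with hN
  have hinj : Function.Injective (fun y => s(x, y)) := fun y z h => Sym2.congr_right.mp h
  have himg : (fun y => s(x, y)) '' N = ↑(p.edges.toFinset.filter (fun e => x ∈ e)) := by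
    ext e
    simp only [Set.mem_image, Finset.coe_filter, Set.mem_setOf_eq, List.mem_toFinset]
    constructor
    · rintro ⟨y, hy, rfl⟩
      exact ⟨(fromEdges_adj p).mp hy, by simp⟩
    · rintro ⟨he, hxe⟩
      obtain ⟨y, rfl⟩ := Sym2.mem_iff_exists.mp hxe
      exact ⟨y, (fromEdges_adj p).mpr he, rfl⟩
  have := Set.ncard_image_of_injective N hinj
  rw [himg, Set.ncard_coe_finset, cycle_filter_card hp hx] at this
  exact this.symm

lemma no_triangle (hg : 5 ≤ G.egirth) {x y z : V} (h1 : G.Adj x y) (h2 : G.Adj y z)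
    (h3 : G.Adj z x) : False := by
  have hc : (cons h1 (cons h2 (cons h3 nil))).IsCycle := by
    simp [Walk.isCycle_def, Walk.isTrail_def, h1.ne, h2.ne, h3.ne, h1.ne', h2.ne', h3.ne']
  have := SimpleGraph.le_egirth.mp hg x _ hc
  rw [show (cons h1 (cons h2 (cons h3 nil))).length = 3 by simp] at this
  norm_num at this

lemma no_c4 (hg : 5 ≤ G.egirth) {x y z t : V} (h1 : G.Adj x y) (h2 : G.Adj y z)
    (h3 : G.Adj z t) (h4 : G.Adj t x) (hxz : x ≠ z) (hyt : y ≠ t) : False := by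
  have hc : (cons h1 (cons h2 (cons h3 (cons h4 nil)))).IsCycle := by
    simp [Walk.isCycle_def, Walk.isTrail_def, h1.ne, h2.ne, h3.ne, h4.ne, hxz, hxz.symm,
      hyt, hyt.symm, h1.ne', h2.ne', h3.ne', h4.ne']
  have := SimpleGraph.le_egirth.mp hg x _ hc
  rw [show (cons h1 (cons h2 (cons h3 (cons h4 nil)))).length = 4 by simp] at this
  norm_num at this

lemma card_even [Fintype V] (hreg : ∀ v, edeg G v = 3) : Even (Fintype.card V) := by
  classical
  have hdeg : ∀ x : V, G.degree x = 3 := by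
    intro x
    have := hreg x
    rw [edeg, Set.ncard_eq_toFinset_card'] at this
    rw [← this]
    show (G.neighborFinset x).card = _
    rw [neighborFinset_def]
  have := G.sum_degrees_eq_twice_card_edges
  rw [Finset.sum_congr rfl (fun x _ => hdeg x), Finset.sum_const, smul_eq_mul,
    Finset.card_univ] at this
  have h3 : Even (Fintype.card V * 3) := ⟨G.edgeFinset.card, by omega⟩
  rcases Nat.even_mul.mp h3 with h | h
  · exact h
  · exact absurd h (by decide)


lemma star_ns_center (u v a b c d : V) (huv : u ≠ v) (hau : a ≠ u) (hbu : b ≠ u) :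
    (SimpleGraph.fromEdgeSet ({s(u,v), s(u,a), s(u,b), s(v,c), s(v,d)} : Set (Sym2 V))).neighborSet u
      = {v, a, b} := by
  ext y
  simp only [mem_neighborSet, SimpleGraph.fromEdgeSet_adj, Set.mem_insert_iff,
    Set.mem_singleton_iff, Sym2.eq, Sym2.rel_iff', Prod.mk.injEq, Prod.swap_prod_mk]
  constructor
  · rintro ⟨hmem, hne⟩
    rcases hmem with (⟨-, rfl⟩ | ⟨rfl, rfl⟩) | (⟨-, rfl⟩ | ⟨rfl, rfl⟩) | (⟨-, rfl⟩ | ⟨rfl, rfl⟩) |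
      (⟨h1, rfl⟩ | ⟨h1, rfl⟩) | (⟨h1, rfl⟩ | ⟨h1, rfl⟩)
    · simp
    · simp
    · simp
    · simp
    · simp
    · simp
    · exact absurd h1 huv
    · simp
    · exact absurd h1 huv
    · simp
  · rintro (rfl | rfl | rfl)
    · exact ⟨by simp, huv⟩
    · exact ⟨by simp, hau.symm⟩
    · exact ⟨by simp, hbu.symm⟩

lemma star_ns_leaf (u v a b c d : V) (hau : a ≠ u) (hav : a ≠ v) (hab : a ≠ b)
    (hac : a ≠ c) (had : a ≠ d) :
    (SimpleGraph.fromEdgeSet ({s(u,v), s(u,a), s(u,b), s(v,c), s(v,d)} : Set (Sym2 V))).neighborSet a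
      = {u} := by
  ext y
  simp only [mem_neighborSet, SimpleGraph.fromEdgeSet_adj, Set.mem_insert_iff,
    Set.mem_singleton_iff, Sym2.eq, Sym2.rel_iff', Prod.mk.injEq, Prod.swap_prod_mk]
  constructor
  · rintro ⟨hmem, hne⟩
    rcases hmem with (⟨h1, rfl⟩ | ⟨h1, rfl⟩) | (⟨h1, rfl⟩ | ⟨-, rfl⟩) | (⟨h1, rfl⟩ | ⟨h1, rfl⟩) |
      (⟨h1, rfl⟩ | ⟨h1, rfl⟩) | (⟨h1, rfl⟩ | ⟨h1, rfl⟩)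
    · exact absurd h1 hau
    · exact absurd h1 hav
    · exact absurd h1 hau
    · simp
    · exact absurd h1 hau
    · exact absurd h1 hab
    · exact absurd h1 hav
    · exact absurd h1 hac
    · exact absurd h1 hav
    · exact absurd h1 had
  · rintro rfl
    exact ⟨by simp, hau⟩

lemma star_swapUV (u v a b c d : V) :
    ({s(u,v), s(u,a), s(u,b), s(v,c), s(v,d)} : Set (Sym2 V))
      = {s(v,u), s(v,c), s(v,d), s(u,a), s(u,b)} := by
  have e1 : s(u,v) = s(v,u) := Sym2.eq_swap
  ext e
  simp only [Set.mem_insert_iff, Set.mem_singleton_iff, e1]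
  tauto

lemma star_swapAB (u v a b c d : V) :
    ({s(u,v), s(u,a), s(u,b), s(v,c), s(v,d)} : Set (Sym2 V))
      = {s(u,v), s(u,b), s(u,a), s(v,c), s(v,d)} := by
  ext e
  simp only [Set.mem_insert_iff, Set.mem_singleton_iff]
  tauto

end Aux

/-- Let `G` be a 3-regular graph on `n` vertices with girth at least 5 containing a cycle of
length `n - 2` omitting exactly two vertices, these two being adjacent.  Assuming the main
theorem (every 3-regular graph with a MED decomposition is `(7,2)`-edge-choosable), `G` is
`(7,2)`-edge-choosable. -/
theorem stmt19 {V : Type} [Fintype V] (G : SimpleGraph V)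
    (hreg : ∀ v, edeg G v = 3)
    (hgirth : 5 ≤ G.egirth)
    (u v : V) (huv : G.Adj u v)
    (w : V) (p : G.Walk w w) (hp : p.IsCycle)
    (hlen : p.length = Fintype.card V - 2)
    (hsupp : ∀ x, x ∈ p.support ↔ (x ≠ u ∧ x ≠ v))
    (main : ∀ (W : Type) [Fintype W] (H : SimpleGraph W), (∀ x, edeg H x = 3) →
      (∃ E₁ E₂ E₃, IsMEDDecomposition H E₁ E₂ E₃) → EdgeChoosable H 7 2) :
    EdgeChoosable G 7 2 := by
  classical
  apply main V G hreg
  -- basic facts about u, v and their other neighbors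
  have huv' : u ≠ v := huv.ne
  have h2u : (G.neighborSet u \ {v}).ncard = 2 := by
    rw [Set.ncard_diff_singleton_of_mem (show v ∈ G.neighborSet u from huv),
      show (G.neighborSet u).ncard = 3 from hreg u]
  have h2v : (G.neighborSet v \ {u}).ncard = 2 := by
    rw [Set.ncard_diff_singleton_of_mem (show u ∈ G.neighborSet v from huv.symm),
      show (G.neighborSet v).ncard = 3 from hreg v]
  obtain ⟨a, b, hab, hU⟩ := Set.ncard_eq_two.mp h2u
  obtain ⟨c, d, hcd, hV⟩ := Set.ncard_eq_two.mp h2v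
  have haU : a ∈ G.neighborSet u \ ({v} : Set V) := by rw [hU]; simp
  have hbU : b ∈ G.neighborSet u \ ({v} : Set V) := by rw [hU]; simp
  have hcV : c ∈ G.neighborSet v \ ({u} : Set V) := by rw [hV]; simp
  have hdV : d ∈ G.neighborSet v \ ({u} : Set V) := by rw [hV]; simp
  have hua : G.Adj u a := haU.1
  have hub : G.Adj u b := hbU.1
  have hvc : G.Adj v c := hcV.1
  have hvd : G.Adj v d := hdV.1
  have hav : a ≠ v := by simpa using haU.2
  have hbv : b ≠ v := by simpa using hbU.2
  have hcu : c ≠ u := by simpa using hcV.2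
  have hdu : d ≠ u := by simpa using hdV.2
  have hau : a ≠ u := hua.ne'
  have hbu : b ≠ u := hub.ne'
  have hcv : c ≠ v := hvc.ne'
  have hdv : d ≠ v := hvd.ne'
  have hasupp : a ∈ p.support := (hsupp a).mpr ⟨hau, hav⟩
  have hbsupp : b ∈ p.support := (hsupp b).mpr ⟨hbu, hbv⟩
  have hcsupp : c ∈ p.support := (hsupp c).mpr ⟨hcu, hcv⟩
  have hdsupp : d ∈ p.support := (hsupp d).mpr ⟨hdu, hdv⟩
  have huns : u ∉ p.support := fun h => ((hsupp u).mp h).1 rfl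
  have hvns : v ∉ p.support := fun h => ((hsupp v).mp h).2 rfl
  have hac : a ≠ c := fun h => no_triangle hgirth huv hvc (by rw [h] at hua; exact hua.symm)
  have had : a ≠ d := fun h => no_triangle hgirth huv hvd (by rw [h] at hua; exact hua.symm)
  have hbc : b ≠ c := fun h => no_triangle hgirth huv hvc (by rw [h] at hub; exact hub.symm)
  have hbd : b ≠ d := fun h => no_triangle hgirth huv hvd (by rw [h] at hub; exact hub.symm)
  have hnab : ¬ G.Adj a b := fun h => no_triangle hgirth hua h hub.symm
  have hncd : ¬ G.Adj c d := fun h => no_triangle hgirth hvc h hvd.symm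
  have hnac : ¬ G.Adj a c := fun h => no_c4 hgirth hua h hvc.symm huv.symm hcu.symm hav
  have hnad : ¬ G.Adj a d := fun h => no_c4 hgirth hua h hvd.symm huv.symm hdu.symm hav
  have hnbc : ¬ G.Adj b c := fun h => no_c4 hgirth hub h hvc.symm huv.symm hcu.symm hbv
  have hnbd : ¬ G.Adj b d := fun h => no_c4 hgirth hub h hvd.symm huv.symm hdu.symm hbv
  have hNu : G.neighborSet u = {v, a, b} := by
    ext t
    constructor
    · intro ht
      by_cases htv : t = v
      · simp [htv]
      · have : t ∈ G.neighborSet u \ ({v} : Set V) := ⟨ht, by simpa using htv⟩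
        rw [hU] at this
        simpa using Or.inr (by simpa using this)
    · rintro (rfl | rfl | rfl)
      · exact huv
      · exact hua
      · exact hub
  have hNv : G.neighborSet v = {u, c, d} := by
    ext t
    constructor
    · intro ht
      by_cases htu : t = u
      · simp [htu]
      · have : t ∈ G.neighborSet v \ ({u} : Set V) := ⟨ht, by simpa using htu⟩
        rw [hV] at this
        simpa using Or.inr (by simpa using this)
    · rintro (rfl | rfl | rfl)
      · exact huv.symm
      · exact hvc
      · exact hvd
  -- the three edge sets
  refine ⟨G.edgeSet \ ({e | e ∈ p.edges} ∪ {s(u,v), s(u,a), s(u,b), s(v,c), s(v,d)}),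
    {e | e ∈ p.edges}, {s(u,v), s(u,a), s(u,b), s(v,c), s(v,d)}, ?_, ?_, ?_, ?_, ?_, ?_, ?_⟩
  · -- union
    have hE₂sub : {e : Sym2 V | e ∈ p.edges} ⊆ G.edgeSet := fun e he =>
      p.edges_subset_edgeSet he
    have hE₃sub : ({s(u,v), s(u,a), s(u,b), s(v,c), s(v,d)} : Set (Sym2 V)) ⊆ G.edgeSet := by
      intro e he
      rcases he with rfl | rfl | rfl | rfl | rfl
      · exact G.mem_edgeSet.mpr huv
      · exact G.mem_edgeSet.mpr hua
      · exact G.mem_edgeSet.mpr hub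
      · exact G.mem_edgeSet.mpr hvc
      · exact G.mem_edgeSet.mpr hvd
    ext e
    simp only [Set.mem_union, Set.mem_diff]
    constructor
    · rintro ((⟨h, _⟩ | h) | h)
      · exact h
      · exact hE₂sub h
      · exact hE₃sub h
    · intro h
      by_cases h2 : e ∈ {e : Sym2 V | e ∈ p.edges}
      · exact Or.inl (Or.inr h2)
      · by_cases h3 : e ∈ ({s(u,v), s(u,a), s(u,b), s(v,c), s(v,d)} : Set (Sym2 V))
        · exact Or.inr h3
        · exact Or.inl (Or.inl ⟨h, fun hc => hc.elim h2 h3⟩)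
  · exact Set.disjoint_left.mpr (fun e he₁ he₂ => he₁.2 (Or.inl he₂))
  · exact Set.disjoint_left.mpr (fun e he₁ he₃ => he₁.2 (Or.inr he₃))
  · -- Disjoint E₂ E₃
    refine Set.disjoint_left.mpr (fun e he₂ he₃ => ?_)
    have hmem : ∀ x : V, x ∈ e → x ∈ p.support := by
      intro x hx
      obtain ⟨y, rfl⟩ := Sym2.mem_iff_exists.mp hx
      exact p.fst_mem_support_of_mem_edges he₂
    rcases he₃ with rfl | rfl | rfl | rfl | rfl
    · exact huns (hmem u (by simp))
    · exact huns (hmem u (by simp))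
    · exact huns (hmem u (by simp))
    · exact hvns (hmem v (by simp))
    · exact hvns (hmem v (by simp))
  · -- matching
    rintro e he₁ f hf₁ hef ⟨x, hxe, hxf⟩
    obtain ⟨y, rfl⟩ := Sym2.mem_iff_exists.mp hxe
    obtain ⟨z, rfl⟩ := Sym2.mem_iff_exists.mp hxf
    have hxy : G.Adj x y := G.mem_edgeSet.mp he₁.1
    have hxz : G.Adj x z := G.mem_edgeSet.mp hf₁.1
    have hyz : y ≠ z := fun h => hef (by rw [h])
    by_cases hxu : x = u
    · subst hxu
      have : y ∈ ({v, a, b} : Set V) := hNu ▸ hxy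
      rcases this with rfl | rfl | rfl
      · exact he₁.2 (Or.inr (by simp))
      · exact he₁.2 (Or.inr (by simp))
      · exact he₁.2 (Or.inr (by simp))
    · by_cases hxv : x = v
      · subst hxv
        have : y ∈ ({u, c, d} : Set V) := hNv ▸ hxy
        rcases this with rfl | rfl | rfl
        · exact he₁.2 (Or.inr (by simp [Sym2.eq_swap]))
        · exact he₁.2 (Or.inr (by simp))
        · exact he₁.2 (Or.inr (by simp))
      · have hxs : x ∈ p.support := (hsupp x).mpr ⟨hxu, hxv⟩
        have hsub : (SimpleGraph.fromEdgeSet {e | e ∈ p.edges}).neighborSet x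
            ⊆ G.neighborSet x := fun t ht => p.adj_of_mem_edges ((fromEdges_adj p).mp ht)
        have hdiff : ((G.neighborSet x) \
            (SimpleGraph.fromEdgeSet {e | e ∈ p.edges}).neighborSet x).ncard = 1 := by
          rw [Set.ncard_diff hsub (Set.toFinite _),
            show (G.neighborSet x).ncard = 3 from hreg x, cycle_fromEdges_ncard hp hxs]
        have hyd : y ∈ (G.neighborSet x) \
            (SimpleGraph.fromEdgeSet {e | e ∈ p.edges}).neighborSet x := by
          refine ⟨hxy, fun hyNP => ?_⟩
          exact he₁.2 (Or.inl ((fromEdges_adj p).mp hyNP))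
        have hzd : z ∈ (G.neighborSet x) \
            (SimpleGraph.fromEdgeSet {e | e ∈ p.edges}).neighborSet x := by
          refine ⟨hxz, fun hzNP => ?_⟩
          exact hf₁.2 (Or.inl ((fromEdges_adj p).mp hzNP))
        obtain ⟨t0, ht0⟩ := Set.ncard_eq_one.mp hdiff
        rw [ht0] at hyd hzd
        exact hyz (hyd.trans hzd.symm)
  · -- even cycles
    constructor
    · intro x hx
      rw [cycle_fromEdges_support p hp] at hx
      exact cycle_fromEdges_ncard hp hx
    · intro x hx
      rw [cycle_fromEdges_support p hp] at hx
      rw [cycle_fromEdges_supp p hp hx, ← List.coe_toFinset, Set.ncard_coe_finset,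
        cycle_support_card hp, hlen]
      obtain ⟨k, hk⟩ := card_even (G := G) hreg
      have h3 : 3 ≤ p.length := hp.three_le_length
      rw [hlen] at h3
      exact ⟨k - 1, by omega⟩
  · -- double stars
    have hNSu := star_ns_center u v a b c d huv' hau hbu
    have hNSv : (SimpleGraph.fromEdgeSet ({s(u,v), s(u,a), s(u,b), s(v,c), s(v,d)} :
        Set (Sym2 V))).neighborSet v = {u, c, d} := by
      rw [star_swapUV u v a b c d]
      exact star_ns_center v u c d a b huv'.symm hcv hdv
    have hNSa := star_ns_leaf u v a b c d hau hav hab hac had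
    have hNSb : (SimpleGraph.fromEdgeSet ({s(u,v), s(u,a), s(u,b), s(v,c), s(v,d)} :
        Set (Sym2 V))).neighborSet b = {u} := by
      rw [star_swapAB u v a b c d]
      exact star_ns_leaf u v b a c d hbu hbv hab.symm hbc hbd
    have hNSc : (SimpleGraph.fromEdgeSet ({s(u,v), s(u,a), s(u,b), s(v,c), s(v,d)} :
        Set (Sym2 V))).neighborSet c = {v} := by
      rw [star_swapUV u v a b c d]
      exact star_ns_leaf v u c d a b hcv hcu hcd hac.symm hbc.symm
    have hNSd : (SimpleGraph.fromEdgeSet ({s(u,v), s(u,a), s(u,b), s(v,c), s(v,d)} :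
        Set (Sym2 V))).neighborSet d = {v} := by
      rw [star_swapUV u v a b c d, star_swapAB v u c d a b]
      exact star_ns_leaf v u d c a b hdv hdu hcd.symm had.symm hbd.symm
    set H₃ := SimpleGraph.fromEdgeSet ({s(u,v), s(u,a), s(u,b), s(v,c), s(v,d)} : Set (Sym2 V))
      with hH₃
    have hdegu : edeg H₃ u = 3 := by
      rw [edeg, hNSu, Set.ncard_insert_of_notMem (by simp [hav.symm, hbv.symm]) (Set.toFinite _),
        Set.ncard_pair hab]
    have hdegv : edeg H₃ v = 3 := by
      rw [edeg, hNSv, Set.ncard_insert_of_notMem (by simp [hcu.symm, hdu.symm]) (Set.toFinite _),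
        Set.ncard_pair hcd]
    have hdega : edeg H₃ a = 1 := by rw [edeg, hNSa, Set.ncard_singleton]
    have hdegb : edeg H₃ b = 1 := by rw [edeg, hNSb, Set.ncard_singleton]
    have hdegc : edeg H₃ c = 1 := by rw [edeg, hNSc, Set.ncard_singleton]
    have hdegd : edeg H₃ d = 1 := by rw [edeg, hNSd, Set.ncard_singleton]
    have hsupp3 : H₃.support = {u, v, a, b, c, d} := by
      ext x
      constructor
      · rintro ⟨y, hy⟩
        change H₃.Adj x y at hy
        rw [hH₃, SimpleGraph.fromEdgeSet_adj] at hy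
        obtain ⟨hmem, -⟩ := hy
        simp only [Set.mem_insert_iff, Set.mem_singleton_iff, Sym2.eq, Sym2.rel_iff',
          Prod.mk.injEq, Prod.swap_prod_mk] at hmem
        simp only [Set.mem_insert_iff, Set.mem_singleton_iff]
        tauto
      · intro hx
        rcases hx with rfl | rfl | rfl | rfl | rfl | rfl
        · exact ⟨v, (H₃.mem_neighborSet x v).mp (by rw [hNSu]; simp)⟩
        · exact ⟨u, (H₃.mem_neighborSet x u).mp (by rw [hNSv]; simp)⟩
        · exact ⟨u, (H₃.mem_neighborSet x u).mp (by rw [hNSa]; simp)⟩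
        · exact ⟨u, (H₃.mem_neighborSet x u).mp (by rw [hNSb]; simp)⟩
        · exact ⟨v, (H₃.mem_neighborSet x v).mp (by rw [hNSc]; simp)⟩
        · exact ⟨v, (H₃.mem_neighborSet x v).mp (by rw [hNSd]; simp)⟩
    refine ⟨?_, ?_, ?_, ?_⟩
    · intro x hx
      rw [hsupp3] at hx
      rcases hx with rfl | rfl | rfl | rfl | rfl | rfl
      · exact Or.inr hdegu
      · exact Or.inr hdegv
      · exact Or.inl hdega
      · exact Or.inl hdegb
      · exact Or.inl hdegc
      · exact Or.inl hdegd
    · intro x hx h3x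
      rw [hsupp3] at hx
      rcases hx with rfl | rfl | rfl | rfl | rfl | rfl
      · have hset : {t | t ∈ H₃.neighborSet x ∧ edeg H₃ t = 3} = {v} := by
          ext y
          simp only [Set.mem_setOf_eq, hNSu, Set.mem_insert_iff, Set.mem_singleton_iff]
          constructor
          · rintro ⟨rfl | rfl | rfl, h3⟩
            · rfl
            · rw [hdega] at h3; exact absurd h3 (by decide)
            · rw [hdegb] at h3; exact absurd h3 (by decide)
          · rintro rfl
            exact ⟨Or.inl rfl, hdegv⟩
        rw [hset, Set.ncard_singleton]
      · have hset : {t | t ∈ H₃.neighborSet x ∧ edeg H₃ t = 3} = {u} := by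
          ext y
          simp only [Set.mem_setOf_eq, hNSv, Set.mem_insert_iff, Set.mem_singleton_iff]
          constructor
          · rintro ⟨rfl | rfl | rfl, h3⟩
            · rfl
            · rw [hdegc] at h3; exact absurd h3 (by decide)
            · rw [hdegd] at h3; exact absurd h3 (by decide)
          · rintro rfl
            exact ⟨Or.inl rfl, hdegu⟩
        rw [hset, Set.ncard_singleton]
      · rw [hdega] at h3x; exact absurd h3x (by decide)
      · rw [hdegb] at h3x; exact absurd h3x (by decide)
      · rw [hdegc] at h3x; exact absurd h3x (by decide)
      · rw [hdegd] at h3x; exact absurd h3x (by decide)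
    · intro x hx h1x y hxy
      rw [hsupp3] at hx
      rcases hx with rfl | rfl | rfl | rfl | rfl | rfl
      · rw [hdegu] at h1x; exact absurd h1x (by decide)
      · rw [hdegv] at h1x; exact absurd h1x (by decide)
      · have hm : y ∈ H₃.neighborSet x := hxy
        rw [hNSa] at hm
        rw [hm]; exact hdegu
      · have hm : y ∈ H₃.neighborSet x := hxy
        rw [hNSb] at hm
        rw [hm]; exact hdegu
      · have hm : y ∈ H₃.neighborSet x := hxy
        rw [hNSc] at hm
        rw [hm]; exact hdegv
      · have hm : y ∈ H₃.neighborSet x := hxy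
        rw [hNSd] at hm
        rw [hm]; exact hdegv
    · intro x y hx hy h1x h1y
      rw [hsupp3] at hx hy
      rcases hx with rfl | rfl | rfl | rfl | rfl | rfl
      · rw [hdegu] at h1x; exact absurd h1x (by decide)
      · rw [hdegv] at h1x; exact absurd h1x (by decide)
      all_goals rcases hy with rfl | rfl | rfl | rfl | rfl | rfl
      · rw [hdegu] at h1y; exact absurd h1y (by decide)
      · rw [hdegv] at h1y; exact absurd h1y (by decide)
      · exact G.loopless.irrefl _
      · exact hnab
      · exact hnac
      · exact hnad
      · rw [hdegu] at h1y; exact absurd h1y (by decide)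
      · rw [hdegv] at h1y; exact absurd h1y (by decide)
      · exact fun h => hnab h.symm
      · exact G.loopless.irrefl _
      · exact hnbc
      · exact hnbd
      · rw [hdegu] at h1y; exact absurd h1y (by decide)
      · rw [hdegv] at h1y; exact absurd h1y (by decide)
      · exact fun h => hnac h.symm
      · exact fun h => hnbc h.symm
      · exact G.loopless.irrefl _
      · exact hncd
      · rw [hdegu] at h1y; exact absurd h1y (by decide)
      · rw [hdegv] at h1y; exact absurd h1y (by decide)
      · exact fun h => hnad h.symm
      · exact fun h => hnbd h.symm
      · exact fun h => hncd h.symm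
      · exact G.loopless.irrefl _
end
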